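/- arXiv:2212.04312 — 10 statements merged into one kernel-verified Lean document; each statement's English description precedes it below -/
import Mathlib

section
/- Let q be a prime power, δ ∈ F_{q^2} with δ^{q+1} = 1, s(x) = x^q + δx, and m ≥ 1 an integer. Let L be a rank 2 linearized polynomial of F_{q^2} that maps the kernel of s into the one-dimensional F_q-subspace of F_{q^2} containing the image of the map x ↦ s(x)^m. Then f(x) = s(x)^m + L(x) is a permutation polynomial of F_{q^2}, i.e., x ↦ s(x)^m + L(x) is a bijection of F_{q^2}. -/
/-!
Write `σ` for the conjugation `x ↦ x ^ q` of `F_{q^2}` over `F_q`, `s x = σ x + δ x` and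
`L x = α σ x + β x`. Since `σ δ * δ = 1`, every value of `s` is an eigenvector of `σ` with
eigenvalue `σ δ`, so for `v ∉ ker s` the ratio `s x / s v` is `σ`-fixed and `s y ^ m - s x ^ m`
is a `σ`-fixed multiple of `s v ^ m`. Hence if `f x = f y` then `L (x - y)` lies on the line
through `s v ^ m`, which is the image under `L` of the line `ker s`; as `L` is injective,
`x - y ∈ ker s`. Then `s x = s y`, so `L x = L y` and `x = y`. That `ker s ≠ 0` is Hilbert 90.
-/

section Involution

variable {F : Type*} [Field F] {σ : F →+* F}

theorem eq_zero_of_mul_map_add_mul_eq_zero (hσ : Function.Involutive σ) {α β w : F}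
    (hrank : σ β * β ≠ σ α * α) (hw : α * σ w + β * w = 0) : w = 0 := by
  by_contra hw0
  have hconj : σ α * w + σ β * σ w = 0 := by simpa [hσ w] using congrArg σ hw
  have hσw : σ w ≠ 0 := (map_ne_zero σ).mpr hw0
  refine hrank (mul_right_cancel₀ (mul_ne_zero hw0 hσw) ?_)
  linear_combination -(σ α * w) * hw + β * w * hconj

theorem injective_mul_map_add_mul (hσ : Function.Involutive σ) {α β : F}
    (hrank : σ β * β ≠ σ α * α) : Function.Injective fun w => α * σ w + β * w := by
  intro x y hxy
  refine sub_eq_zero.mp (eq_zero_of_mul_map_add_mul_eq_zero hσ hrank ?_)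
  simp only at hxy
  rw [map_sub]
  linear_combination hxy

theorem exists_map_add_mul_ne_zero (hσ₁ : σ ≠ RingHom.id F) (c : F) :
    ∃ y, σ y + c * y ≠ 0 := by
  by_contra! h
  refine hσ₁ (RingHom.ext fun y => ?_)
  have h₁ : 1 + c = 0 := by simpa using h 1
  rw [RingHom.id_apply]
  linear_combination h y - y * h₁

variable {δ : F}

theorem map_map_add_mul (hσ : Function.Involutive σ) (hδ : σ δ * δ = 1) (x : F) :
    σ (σ x + δ * x) = σ δ * (σ x + δ * x) := by
  rw [map_add, map_mul, hσ x]
  linear_combination -x * hδ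

theorem map_div_map_add_mul (hσ : Function.Involutive σ) (hδ : σ δ * δ = 1) (x v : F) :
    σ ((σ x + δ * x) / (σ v + δ * v)) = (σ x + δ * x) / (σ v + δ * v) := by
  rw [map_div₀, map_map_add_mul hσ hδ, map_map_add_mul hσ hδ,
    mul_div_mul_left _ _ (left_ne_zero_of_mul_eq_one hδ)]

/-- Hilbert 90: `σ y - σ δ * y` lies in the kernel for every `y`. -/
theorem exists_ne_zero_map_add_mul_eq_zero (hσ : Function.Involutive σ)
    (hσ₁ : σ ≠ RingHom.id F) (hδ : σ δ * δ = 1) : ∃ u ≠ 0, σ u + δ * u = 0 := by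
  obtain ⟨y, hy⟩ := exists_map_add_mul_ne_zero hσ₁ (-σ δ)
  refine ⟨σ y + -σ δ * y, hy, ?_⟩
  rw [map_add, map_mul, map_neg, hσ y, hσ δ]
  linear_combination -y * hδ

variable {α β : F} {m : ℕ}

theorem map_add_mul_eq_zero_of_mul_map_add_mul_eq (hσ : Function.Involutive σ)
    (hσ₁ : σ ≠ RingHom.id F) (hδ : σ δ * δ = 1) (hrank : σ β * β ≠ σ α * α)
    (hker : ∀ u v : F, σ u + δ * u = 0 → σ v + δ * v ≠ 0 →
      ∃ c : F, σ c = c ∧ α * σ u + β * u = c * (σ v + δ * v) ^ m)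
    {v z c : F} (hv : σ v + δ * v ≠ 0) (hc : σ c = c)
    (hz : α * σ z + β * z = c * (σ v + δ * v) ^ m) : σ z + δ * z = 0 := by
  obtain ⟨u, hu0, hu⟩ := exists_ne_zero_map_add_mul_eq_zero hσ hσ₁ hδ
  obtain ⟨c₀, hc₀, hLu⟩ := hker u v hu hv
  have hc₀0 : c₀ ≠ 0 := by
    rintro rfl
    exact hu0 (eq_zero_of_mul_map_add_mul_eq_zero hσ hrank (by rw [hLu, zero_mul]))
  have hd : σ (c / c₀) = c / c₀ := by rw [map_div₀, hc, hc₀]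
  have hdc : c / c₀ * c₀ = c := div_mul_cancel₀ c hc₀0
  have hzu : z = c / c₀ * u := by
    refine injective_mul_map_add_mul hσ hrank ?_
    simp only [map_mul, hd, hz]
    linear_combination -(c / c₀) * hLu - (σ v + δ * v) ^ m * hdc
  rw [hzu, map_mul, hd]
  linear_combination c / c₀ * hu

theorem injective_map_add_mul_pow_add (hσ : Function.Involutive σ)
    (hσ₁ : σ ≠ RingHom.id F) (hδ : σ δ * δ = 1) (hrank : σ β * β ≠ σ α * α)
    (hker : ∀ u v : F, σ u + δ * u = 0 → σ v + δ * v ≠ 0 →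
      ∃ c : F, σ c = c ∧ α * σ u + β * u = c * (σ v + δ * v) ^ m) :
    Function.Injective fun x => (σ x + δ * x) ^ m + (α * σ x + β * x) := by
  intro x y hxy
  simp only at hxy
  obtain ⟨v, hv⟩ := exists_map_add_mul_ne_zero hσ₁ δ
  set t := fun w => (σ w + δ * w) / (σ v + δ * v)
  have hst (w : F) : σ w + δ * w = t w * (σ v + δ * v) := (div_mul_cancel₀ _ hv).symm
  have hc : σ (t y ^ m - t x ^ m) = t y ^ m - t x ^ m := by
    simp only [map_sub, map_pow, t, map_div_map_add_mul hσ hδ]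
  have hsxy : σ (x - y) + δ * (x - y) = 0 := by
    refine map_add_mul_eq_zero_of_mul_map_add_mul_eq hσ hσ₁ hδ hrank hker hv hc ?_
    rw [hst x, hst y, mul_pow, mul_pow] at hxy
    rw [map_sub]
    linear_combination hxy
  rw [map_sub] at hsxy
  have hLxy : α * σ x + β * x = α * σ y + β * y := by
    rw [show σ x + δ * x = σ y + δ * y by linear_combination hsxy] at hxy
    exact add_left_cancel hxy
  exact injective_mul_map_add_mul hσ hrank hLxy

end Involution

theorem FiniteField.exists_ringHom_apply_eq_pow {F : Type*} [Field F] [Fintype F] {q : ℕ}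
    (hq : q ∣ Fintype.card F) : ∃ σ : F →+* F, ∀ x, σ x = x ^ q := by
  obtain ⟨n, hp, hn⟩ := FiniteField.card F (ringChar F)
  have : Fact (ringChar F).Prime := ⟨hp⟩
  obtain ⟨k, -, rfl⟩ := (Nat.dvd_prime_pow hp).mp (hn ▸ hq)
  exact ⟨iterateFrobenius F (ringChar F) k, iterateFrobenius_def _ _⟩

open Polynomial in
theorem FiniteField.exists_pow_ne_self {F : Type*} [Field F] [Fintype F] {q : ℕ} (hq : 2 ≤ q)
    (hcard : q < Fintype.card F) : ∃ x : F, x ^ q ≠ x := by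
  by_contra! h
  have hX := eq_of_natDegree_lt_card_of_eval_eq (X ^ q) X (Function.injective_id (α := F))
    (by simp [h]) (by rw [natDegree_X_pow, natDegree_X]; omega)
  have := congrArg natDegree hX
  rw [natDegree_X_pow, natDegree_X] at this
  omega

theorem stmt_3_general (q : ℕ)
    (F : Type) [Field F] [Fintype F] (hF : Fintype.card F = q ^ 2)
    (δ : F) (hδ : δ ^ (q + 1) = 1) (m : ℕ)
    (α β : F) (hrank2 : β ^ (q + 1) ≠ α ^ (q + 1))
    (hker : ∀ u v : F, u ^ q + δ * u = 0 → v ^ q + δ * v ≠ 0 →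
      ∃ c : F, c ^ q = c ∧ α * u ^ q + β * u = c * (v ^ q + δ * v) ^ m) :
    Function.Bijective
      (fun x : F => (x ^ q + δ * x) ^ m + (α * x ^ q + β * x)) := by
  obtain ⟨σ, hσ⟩ := FiniteField.exists_ringHom_apply_eq_pow (hF ▸ dvd_pow_self q two_ne_zero)
  have hinv : Function.Involutive σ := fun x => by
    rw [hσ, hσ, ← pow_mul, ← sq, ← hF, FiniteField.pow_card]
  have hq : 2 ≤ q := by
    have h := Fintype.one_lt_card (α := F)
    rw [hF, Nat.one_lt_pow_iff two_ne_zero] at h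
    exact h
  have hσ₁ : σ ≠ RingHom.id F := by
    intro h
    obtain ⟨x, hx⟩ := FiniteField.exists_pow_ne_self hq (by rw [hF]; nlinarith)
    exact hx (by rw [← hσ, h, RingHom.id_apply])
  have key : Function.Injective fun x => (σ x + δ * x) ^ m + (α * σ x + β * x) :=
    injective_map_add_mul_pow_add hinv hσ₁ (by rwa [hσ, ← pow_succ])
      (by rwa [hσ, hσ, ← pow_succ, ← pow_succ]) (by simpa only [hσ] using hker)
  exact Finite.injective_iff_bijective.mp (by simpa only [hσ] using key)

/-- Let `δ^{q+1} = 1`, `s(x) = x^q + δx`, `m ≥ 1`, and let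
`L(x) = αx^q + βx` be a rank 2 linearized polynomial (`β^{q+1} ≠ α^{q+1}`) mapping
`ker s` into the one-dimensional `F_q`-subspace containing the image of `x ↦ s(x)^m`
(the `F_q`-span of `s(v)^m` for any `v ∉ ker s`). Then `f(x) = s(x)^m + L(x)` is a
bijection of `F_{q^2}`. -/
theorem stmt_3 (q : ℕ) (hq : IsPrimePow q)
    (F : Type) [Field F] [Fintype F] (hF : Fintype.card F = q ^ 2)
    (δ : F) (hδ : δ ^ (q + 1) = 1) (m : ℕ) (hm : 1 ≤ m)
    (α β : F) (hrank2 : β ^ (q + 1) ≠ α ^ (q + 1))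
    (hker : ∀ u v : F, u ^ q + δ * u = 0 → v ^ q + δ * v ≠ 0 →
      ∃ c : F, c ^ q = c ∧ α * u ^ q + β * u = c * (v ^ q + δ * v) ^ m) :
    Function.Bijective
      (fun x : F => (x ^ q + δ * x) ^ m + (α * x ^ q + β * x)) :=
  stmt_3_general q F hF δ hδ m α β hrank2 hker
end

section
/- Let q be a prime power, δ ∈ F_{q^2} with δ^{q+1} = 1, s(x) = x^q + δx, and m an integer with 2 ≤ m < q. The number of rank 2 linearized polynomials L of F_{q^2} that map the kernel of s into the one-dimensional F_q-subspace containing the image of x ↦ s(x)^m is exactly q(q-1)^2. Consequently there are at least q(q-1)^2 permutation polynomials of F_{q^2} of the shape s(x)^m + L(x) with L a rank 2 linearized polynomial. -/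
open Finset Polynomial

section Aux
variable {F : Type} [Field F] [Fintype F] [DecidableEq F] {q : ℕ}

lemma card_pow_le' (n : ℕ) (hn : n ≠ 0) (a : F) :
    (univ.filter fun x : F => x ^ n = a).card ≤ n := by
  have hmonic := Polynomial.monic_X_pow_sub_C a hn
  have hne : (X ^ n - C a : F[X]) ≠ 0 := hmonic.ne_zero
  have hsub : (univ.filter fun x : F => x ^ n = a) ⊆ (X ^ n - C a : F[X]).roots.toFinset := by
    intro x hx
    simp only [mem_filter] at hx
    rw [Multiset.mem_toFinset, Polynomial.mem_roots hne]
    simp [Polynomial.IsRoot, hx.2]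
  calc (univ.filter fun x : F => x ^ n = a).card
      ≤ (X ^ n - C a : F[X]).roots.toFinset.card := Finset.card_le_card hsub
    _ ≤ Multiset.card (X ^ n - C a : F[X]).roots := Multiset.toFinset_card_le _
    _ ≤ (X ^ n - C a : F[X]).natDegree := Polynomial.card_roots' _
    _ = n := Polynomial.natDegree_X_pow_sub_C

lemma cardS (hF : Fintype.card F = q ^ 2) (hq2 : 2 ≤ q)
    (hpow : ∀ x : F, (x ^ q) ^ q = x)
    {ε : F} (hε : ε ^ (q + 1) = 1) :
    (univ.filter fun t : F => t ^ q = ε * t).card = q := by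
  have hq0 : q ≠ 0 := by omega
  have hq1 : q - 1 ≠ 0 := by omega
  have hqq : q ^ 2 = q * q := by ring
  have hfact : (q - 1) * (q + 1) = q ^ 2 - 1 := by
    obtain ⟨n, rfl⟩ := Nat.exists_eq_add_of_le hq2
    have e1 : (2 + n - 1) * (2 + n + 1) = n ^ 2 + 4 * n + 3 := by
      have : 2 + n - 1 = n + 1 := by omega
      rw [this]; ring
    have e2 : (2 + n) ^ 2 = n ^ 2 + 4 * n + 4 := by ring
    omega
  have hx2 : ∀ x : F, x ^ (q ^ 2) = x := by
    intro x; rw [hqq, pow_mul]; exact hpow x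
  have hxm1 : ∀ x : F, x ≠ 0 → x ^ (q ^ 2 - 1) = 1 := by
    intro x hx
    have h1 : x ^ (q ^ 2 - 1) * x = 1 * x := by
      rw [one_mul, ← pow_succ]
      have : q ^ 2 - 1 + 1 = q ^ 2 := by
        have : 1 ≤ q ^ 2 := Nat.one_le_pow _ _ (by omega)
        omega
      rw [this]; exact hx2 x
    exact mul_right_cancel₀ hx h1
  set E : Finset F := univ.filter fun e : F => e ^ (q + 1) = 1 with hE
  have key : ∀ e : F, (univ.filter fun x : F => x ≠ 0 ∧ x ^ q = e * x)
      = ((univ.filter fun x : F => x ≠ 0).filter fun x => x ^ (q - 1) = e) := by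
    intro e
    ext x
    simp only [mem_filter, mem_univ, true_and]
    have hsucc : q - 1 + 1 = q := by omega
    constructor
    · rintro ⟨hx0, hx⟩
      refine ⟨hx0, ?_⟩
      apply mul_right_cancel₀ hx0
      rw [← pow_succ, hsucc, hx]
    · rintro ⟨hx0, hx⟩
      refine ⟨hx0, ?_⟩
      rw [← hsucc, pow_succ, hx]
  have hmap : ∀ x ∈ univ.filter fun x : F => x ≠ 0, x ^ (q - 1) ∈ E := by
    intro x hx
    simp only [hE, mem_filter, mem_univ, true_and] at hx ⊢
    rw [← pow_mul, hfact]
    exact hxm1 x hx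
  have hsum : (univ.filter fun x : F => x ≠ 0).card
      = ∑ e ∈ E, (univ.filter fun x : F => x ≠ 0 ∧ x ^ q = e * x).card := by
    rw [Finset.card_eq_sum_card_fiberwise hmap]
    refine Finset.sum_congr rfl fun e _ => ?_
    rw [← key e]
  have hnz : (univ.filter fun x : F => x ≠ 0).card = q ^ 2 - 1 := by
    rw [Finset.filter_ne', Finset.card_erase_of_mem (mem_univ 0), card_univ, hF]
  have hdle : ∀ e ∈ E, (univ.filter fun x : F => x ≠ 0 ∧ x ^ q = e * x).card ≤ q - 1 := by
    intro e _
    rw [key e]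
    calc ((univ.filter fun x : F => x ≠ 0).filter fun x => x ^ (q - 1) = e).card
        ≤ (univ.filter fun x : F => x ^ (q - 1) = e).card := by
          apply Finset.card_le_card
          intro x hx
          simp only [mem_filter, mem_univ, true_and] at hx ⊢
          exact hx.2
      _ ≤ q - 1 := card_pow_le' _ hq1 e
  have hEle : E.card ≤ q + 1 := card_pow_le' _ (by omega) 1
  have hεE : ε ∈ E := by simp only [hE, mem_filter, mem_univ, true_and]; exact hε
  have hchain : ∑ e ∈ E, (univ.filter fun x : F => x ≠ 0 ∧ x ^ q = e * x).card = q ^ 2 - 1 := by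
    rw [← hsum, hnz]
  have hup : E.card * (q - 1) ≤ q ^ 2 - 1 := by
    calc E.card * (q - 1) ≤ (q + 1) * (q - 1) := Nat.mul_le_mul_right _ hEle
      _ = q ^ 2 - 1 := by rw [Nat.mul_comm]; exact hfact
  have hdε : (univ.filter fun x : F => x ≠ 0 ∧ x ^ q = ε * x).card = q - 1 := by
    by_contra hne
    have hlt : (univ.filter fun x : F => x ≠ 0 ∧ x ^ q = ε * x).card < q - 1 :=
      lt_of_le_of_ne (hdle ε hεE) hne
    have : ∑ e ∈ E, (univ.filter fun x : F => x ≠ 0 ∧ x ^ q = e * x).card < ∑ _e ∈ E, (q - 1) :=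
      Finset.sum_lt_sum hdle ⟨ε, hεE, hlt⟩
    rw [Finset.sum_const, smul_eq_mul, hchain] at this
    omega
  have hins : (univ.filter fun t : F => t ^ q = ε * t)
      = insert 0 (univ.filter fun x : F => x ≠ 0 ∧ x ^ q = ε * x) := by
    ext x
    simp only [mem_insert, mem_filter, mem_univ, true_and]
    constructor
    · intro hx
      by_cases h0 : x = 0
      · exact Or.inl h0
      · exact Or.inr ⟨h0, hx⟩
    · rintro (rfl | ⟨_, hx⟩)
      · rw [zero_pow hq0, mul_zero]
      · exact hx
  rw [hins, Finset.card_insert_of_notMem (by simp), hdε]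
  omega

lemma pair_count (hF : Fintype.card F = q ^ 2) (hq2 : 2 ≤ q)
    (hadd : ∀ a b : F, (a + b) ^ q = a ^ q + b ^ q)
    (hpow : ∀ x : F, (x ^ q) ^ q = x)
    (hneg1 : (-1 : F) ^ (q + 1) = 1)
    {δ : F} (hδ : δ ^ (q + 1) = 1) {ε₁ : F} (hε₁ : ε₁ ^ (q + 1) = 1) :
    (univ.filter fun p : F × F => p.2 ^ (q + 1) ≠ p.1 ^ (q + 1) ∧
      (p.2 - δ * p.1) ^ q = ε₁ * (p.2 - δ * p.1)).card = q * (q - 1) ^ 2 := by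
  have hq0 : q ≠ 0 := by omega
  have hδq : δ ^ q * δ = 1 := by rw [← pow_succ]; exact hδ
  have hεq : ε₁ ^ q * ε₁ = 1 := by rw [← pow_succ]; exact hε₁
  have hδ0 : δ ≠ 0 := by rintro rfl; rw [zero_pow (by omega)] at hδ; exact one_ne_zero hδ.symm
  have hε0 : ε₁ ≠ 0 := by rintro rfl; rw [zero_pow (by omega)] at hε₁; exact one_ne_zero hε₁.symm
  have hm1 : (-1 : F) ^ q = -1 := by
    have h := hneg1; rw [pow_succ] at h; linear_combination (-1 : F) * h
  set h : F → F := fun α => ε₁ * δ * α + δ ^ q * α ^ q with hh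
  have hkey : ∀ α t : F, t ^ q = ε₁ * t →
      (t + δ * α) ^ (q + 1) - α ^ (q + 1) = t * (ε₁ * t + h α) := by
    intro α t ht
    have e1 : (t + δ * α) ^ q = ε₁ * t + δ ^ q * α ^ q := by
      rw [hadd, mul_pow, ht]
    rw [pow_succ, pow_succ, e1, hh]
    linear_combination (α ^ q * α) * hδq
  have hhq : ∀ α : F, (h α) ^ q = ε₁ ^ q * h α := by
    intro α
    have e1 : (h α) ^ q = ε₁ ^ q * δ ^ q * α ^ q + δ * α := by
      rw [hh]; simp only []
      rw [hadd, mul_pow, mul_pow, mul_pow, hpow, hpow]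
    rw [e1, hh]
    simp only []
    linear_combination -(δ * α) * hεq
  -- change of variables
  have hTG : (univ.filter fun p : F × F => p.2 ^ (q + 1) ≠ p.1 ^ (q + 1) ∧
        (p.2 - δ * p.1) ^ q = ε₁ * (p.2 - δ * p.1)).card
      = (univ.filter fun p : F × F =>
        (p.2 + δ * p.1) ^ (q + 1) ≠ p.1 ^ (q + 1) ∧ p.2 ^ q = ε₁ * p.2).card := by
    apply Finset.card_nbij' (fun p => (p.1, p.2 - δ * p.1)) (fun p => (p.1, p.2 + δ * p.1))
    · intro p hp
      simp only [Finset.mem_coe, mem_filter, mem_univ, true_and] at hp ⊢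
      constructor
      · simpa [sub_add_cancel] using hp.1
      · exact hp.2
    · intro p hp
      simp only [Finset.mem_coe, mem_filter, mem_univ, true_and] at hp ⊢
      constructor
      · simpa [add_sub_cancel_right] using hp.1
      · simpa [add_sub_cancel_right] using hp.2
    · intro p _; simp
    · intro p _; simp
  rw [hTG]
  -- cardinality of the t-condition set
  have hScard : (univ.filter fun p : F × F => p.2 ^ q = ε₁ * p.2).card = q ^ 2 * q := by
    have e : (univ.filter fun p : F × F => p.2 ^ q = ε₁ * p.2)
        = univ ×ˢ (univ.filter fun t : F => t ^ q = ε₁ * t) := by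
      ext p
      simp [Finset.mem_product]
    rw [e, Finset.card_product, card_univ, hF, cardS hF hq2 hpow hε₁]
  -- split by t = 0
  have hsplit1 : ((univ.filter fun p : F × F => p.2 ^ q = ε₁ * p.2).filter fun p => p.2 = 0).card
      + ((univ.filter fun p : F × F => p.2 ^ q = ε₁ * p.2).filter fun p => ¬ p.2 = 0).card
      = (univ.filter fun p : F × F => p.2 ^ q = ε₁ * p.2).card :=
    Finset.card_filter_add_card_filter_not _
  have hzero : ((univ.filter fun p : F × F => p.2 ^ q = ε₁ * p.2).filter fun p => p.2 = 0).card
      = q ^ 2 := by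
    have : ((univ.filter fun p : F × F => p.2 ^ q = ε₁ * p.2).filter fun p => p.2 = 0).card
        = (univ : Finset F).card := by
      apply Finset.card_nbij' (fun p => p.1) (fun a => (a, 0))
      · intro p _; exact mem_univ _
      · intro a _
        simp only [Finset.mem_coe, mem_filter, mem_univ, true_and]
        exact ⟨by rw [zero_pow hq0, mul_zero], trivial⟩
      · intro p hp
        simp only [Finset.mem_coe, mem_filter, mem_univ, true_and] at hp
        exact Prod.ext rfl hp.2.symm
      · intro a _; rfl
    rw [this, card_univ, hF]
  -- Sne splits by the linear condition
  have hsplit2 : (((univ.filter fun p : F × F => p.2 ^ q = ε₁ * p.2).filter fun p => ¬ p.2 = 0).filter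
        fun p => ε₁ * p.2 + h p.1 = 0).card
      + (((univ.filter fun p : F × F => p.2 ^ q = ε₁ * p.2).filter fun p => ¬ p.2 = 0).filter
        fun p => ¬ (ε₁ * p.2 + h p.1 = 0)).card
      = ((univ.filter fun p : F × F => p.2 ^ q = ε₁ * p.2).filter fun p => ¬ p.2 = 0).card :=
    Finset.card_filter_add_card_filter_not _
  -- good part equals our target
  have hGeq : (univ.filter fun p : F × F =>
        (p.2 + δ * p.1) ^ (q + 1) ≠ p.1 ^ (q + 1) ∧ p.2 ^ q = ε₁ * p.2)
      = ((univ.filter fun p : F × F => p.2 ^ q = ε₁ * p.2).filter fun p => ¬ p.2 = 0).filter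
        fun p => ¬ (ε₁ * p.2 + h p.1 = 0) := by
    ext p
    simp only [mem_filter, mem_univ, true_and]
    constructor
    · rintro ⟨hne, ht⟩
      have hD := hkey p.1 p.2 ht
      have hD0 : p.2 * (ε₁ * p.2 + h p.1) ≠ 0 := by
        rw [← hD]; exact sub_ne_zero.2 hne
      rcases mul_ne_zero_iff.1 hD0 with ⟨h1, h2⟩
      exact ⟨⟨ht, h1⟩, h2⟩
    · rintro ⟨⟨ht, h1⟩, h2⟩
      refine ⟨?_, ht⟩
      have hD := hkey p.1 p.2 ht
      intro heq
      apply mul_ne_zero h1 h2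
      rw [← hD, sub_eq_zero.2 heq]
  -- bad part with t ≠ 0
  have hBad1eq : (((univ.filter fun p : F × F => p.2 ^ q = ε₁ * p.2).filter fun p => ¬ p.2 = 0).filter
        fun p => ε₁ * p.2 + h p.1 = 0)
      = univ.filter fun p : F × F => h p.1 ≠ 0 ∧ p.2 = -(ε₁ ^ q) * h p.1 := by
    ext p
    simp only [mem_filter, mem_univ, true_and]
    constructor
    · rintro ⟨⟨ht, h1⟩, h2⟩
      have hh0 : h p.1 ≠ 0 := by
        intro h0
        rw [h0, add_zero] at h2
        exact h1 (by rcases mul_eq_zero.1 h2 with h' | h'; exact absurd h' hε0; exact h')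
      refine ⟨hh0, ?_⟩
      have e3 : ε₁ * p.2 = - h p.1 := eq_neg_of_add_eq_zero_left h2
      calc p.2 = ε₁ ^ q * ε₁ * p.2 := by rw [hεq, one_mul]
        _ = ε₁ ^ q * (ε₁ * p.2) := by ring
        _ = -(ε₁ ^ q) * h p.1 := by rw [e3]; ring
    · rintro ⟨hh0, h2⟩
      have hεq0 : ε₁ ^ q ≠ 0 := pow_ne_zero _ hε0
      refine ⟨⟨?_, ?_⟩, ?_⟩
      · rw [h2]
        have e2 : (-(ε₁ ^ q) * h p.1) ^ q = (-1 : F) ^ q * (ε₁ ^ q) ^ q * (h p.1) ^ q := by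
          rw [← mul_pow, ← mul_pow]; ring_nf
        rw [e2, hm1, hpow, hhq]
        ring
      · rw [h2]
        exact mul_ne_zero (neg_ne_zero.2 hεq0) hh0
      · rw [h2]
        calc ε₁ * (-(ε₁ ^ q) * h p.1) + h p.1 = -((ε₁ ^ q * ε₁) * h p.1) + h p.1 := by ring
          _ = 0 := by rw [hεq]; ring
  have hBad1card : (((univ.filter fun p : F × F => p.2 ^ q = ε₁ * p.2).filter fun p => ¬ p.2 = 0).filter
        fun p => ε₁ * p.2 + h p.1 = 0).card
      = (univ.filter fun α : F => ¬ h α = 0).card := by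
    rw [hBad1eq]
    apply Finset.card_nbij' (fun p => p.1) (fun α => (α, -(ε₁ ^ q) * h α))
    · intro p hp
      simp only [Finset.mem_coe, mem_filter, mem_univ, true_and] at hp ⊢
      exact hp.1
    · intro α hα
      simp only [Finset.mem_coe, mem_filter, mem_univ, true_and] at hα ⊢
      exact ⟨hα, trivial⟩
    · intro p hp
      simp only [Finset.mem_coe, mem_filter, mem_univ, true_and] at hp
      exact Prod.ext rfl hp.2.symm
    · intro α _; rfl
  have hsplit3 : (univ.filter fun α : F => h α = 0).card
      + (univ.filter fun α : F => ¬ (h α = 0)).card = q ^ 2 := by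
    rw [Finset.card_filter_add_card_filter_not, card_univ, hF]
  have hzeroes : (univ.filter fun α : F => h α = 0).card = q := by
    have hε₂ : (-(ε₁ * δ ^ 2)) ^ (q + 1) = 1 := by
      have e0 : (-(ε₁ * δ ^ 2)) = (-1 : F) * ε₁ * δ ^ 2 := by ring
      rw [e0, mul_pow, mul_pow, pow_right_comm, hneg1, hε₁, hδ, one_pow]; ring
    have e : (univ.filter fun α : F => h α = 0)
        = univ.filter fun α : F => α ^ q = (-(ε₁ * δ ^ 2)) * α := by
      ext α
      simp only [mem_filter, mem_univ, true_and, hh]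
      constructor
      · intro h0
        have hz : δ * (ε₁ * δ * α + δ ^ q * α ^ q) = 0 := by rw [h0, mul_zero]
        have e2 : α ^ q + ε₁ * δ ^ 2 * α = 0 := by
          calc α ^ q + ε₁ * δ ^ 2 * α = δ * (ε₁ * δ * α + δ ^ q * α ^ q)
                + (1 - δ ^ q * δ) * α ^ q := by ring
            _ = 0 := by rw [hz, hδq]; ring
        linear_combination e2
      · intro h0
        have hz : δ * (ε₁ * δ * α + δ ^ q * α ^ q) = 0 := by
          calc δ * (ε₁ * δ * α + δ ^ q * α ^ q)
              = ε₁ * δ ^ 2 * α + (δ ^ q * δ) * α ^ q := by ring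
            _ = ε₁ * δ ^ 2 * α + α ^ q := by rw [hδq, one_mul]
            _ = 0 := by rw [h0]; ring
        rcases mul_eq_zero.1 hz with h' | h'
        · exact absurd h' hδ0
        · exact h'
    rw [e]
    exact cardS hF hq2 hpow hε₂
  -- arithmetic wrap-up
  have harith : q * (q - 1) ^ 2 + ((q ^ 2 - q) + q ^ 2) = q ^ 2 * q := by
    obtain ⟨n, rfl⟩ := Nat.exists_eq_add_of_le hq2
    have e1 : 2 + n - 1 = n + 1 := by omega
    have e2 : (2 + n) ^ 2 - (2 + n) = (2 + n) * (n + 1) := by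
      have : (2 + n) ^ 2 = (2 + n) * (n + 1) + (2 + n) := by ring
      omega
    rw [e1, e2]; ring
  rw [hGeq]
  omega

end Aux

/-- For `δ^{q+1} = 1`, `s(x) = x^q + δx` and `2 ≤ m < q`, the number of
rank 2 linearized polynomials `L` of `F_{q^2}` mapping `ker s` into the one-dimensional
`F_q`-subspace containing the image of `x ↦ s(x)^m` is exactly `q(q-1)^2`; consequently
there are at least `q(q-1)^2` permutation polynomials of `F_{q^2}` of the shape
`s(x)^m + L(x)` with `L` a rank 2 linearized polynomial. -/
theorem stmt_4 (q : ℕ) (hq : IsPrimePow q)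
    (F : Type) [Field F] [Fintype F] (hF : Fintype.card F = q ^ 2)
    (δ : F) (hδ : δ ^ (q + 1) = 1) (m : ℕ) (hm1 : 2 ≤ m) (hm2 : m < q) :
    Set.ncard {L : F → F | ∃ α β : F, β ^ (q + 1) ≠ α ^ (q + 1) ∧
        (L = fun x : F => α * x ^ q + β * x) ∧
        (∀ u v : F, u ^ q + δ * u = 0 → v ^ q + δ * v ≠ 0 →
          ∃ c : F, c ^ q = c ∧ L u = c * (v ^ q + δ * v) ^ m)}
      = q * (q - 1) ^ 2
    ∧ q * (q - 1) ^ 2 ≤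
        Set.ncard {f : F → F | Function.Bijective f ∧
          ∃ α β : F, β ^ (q + 1) ≠ α ^ (q + 1) ∧
            f = fun x : F => (x ^ q + δ * x) ^ m + (α * x ^ q + β * x)} := by
  classical
  -- basic characteristic facts
  obtain ⟨r, n, hrp, hn, hqe⟩ := hq
  have hrnat : r.Prime := Nat.prime_iff.2 hrp
  set p := ringChar F with hpdef
  haveI : CharP F p := ringChar.charP F
  have hppr : p.Prime := CharP.char_is_prime F p
  haveI : Fact p.Prime := ⟨hppr⟩
  obtain ⟨k, -, hcard⟩ := FiniteField.card F p
  have hpr : p = r := by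
    have h1 : p ^ (k : ℕ) = r ^ (2 * n) := by
      rw [← hcard, hF, ← hqe, ← pow_mul, mul_comm n 2]
    have h2 : p ∣ r ^ (2 * n) := h1 ▸ dvd_pow_self p k.ne_zero
    exact (Nat.prime_dvd_prime_iff_eq hppr hrnat).1 (hppr.dvd_of_dvd_pow h2)
  have hqp : q = p ^ n := by rw [hpr, hqe]
  have hq2 : 2 ≤ q := by
    calc 2 ≤ r := hrnat.two_le
      _ = r ^ 1 := (pow_one r).symm
      _ ≤ r ^ n := Nat.pow_le_pow_right hrnat.pos hn
      _ = q := hqe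
  have hq0 : q ≠ 0 := by omega
  have hadd : ∀ a b : F, (a + b) ^ q = a ^ q + b ^ q := by
    intro a b; rw [hqp]; exact add_pow_char_pow a b p n
  have hsub : ∀ a b : F, (a - b) ^ q = a ^ q - b ^ q := by
    intro a b; rw [hqp]; exact sub_pow_char_pow a b (p := p) (n := n)
  have hpowq : ∀ x : F, (x ^ q) ^ q = x := by
    intro x
    rw [← pow_mul]
    have h1 := FiniteField.pow_card x
    rw [hF] at h1
    rw [← h1]
    congr 1
    ring
  have hm1F : (-1 : F) ^ q = -1 := by
    have h1 := hsub 0 1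
    simpa [zero_pow hq0] using h1
  have hneg1 : (-1 : F) ^ (q + 1) = 1 := by rw [pow_succ, hm1F]; ring
  have hδ0 : δ ≠ 0 := by rintro rfl; rw [zero_pow (by omega)] at hδ; exact one_ne_zero hδ.symm
  have hδq : δ ^ q * δ = 1 := by rw [← pow_succ]; exact hδ
  -- the special constants
  set ε₁ : F := -(δ ^ q) ^ (m + 1) with hε₁def
  set η : F := (δ ^ q) ^ m with hηdef
  have hδpow : ∀ j : ℕ, ((δ ^ q) ^ j) ^ (q + 1) = 1 := by
    intro j
    calc ((δ ^ q) ^ j) ^ (q + 1) = δ ^ (q * (j * (q + 1))) := by rw [← pow_mul, ← pow_mul]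
      _ = δ ^ ((q + 1) * (q * j)) := by congr 1; ring
      _ = (δ ^ (q + 1)) ^ (q * j) := by rw [pow_mul]
      _ = 1 := by rw [hδ, one_pow]
  have hε₁pow : ε₁ ^ (q + 1) = 1 := by
    have e0 : ε₁ = (-1 : F) * (δ ^ q) ^ (m + 1) := by rw [hε₁def]; ring
    rw [e0, mul_pow, hneg1, hδpow, one_mul]
  have hηpow : η ^ (q + 1) = 1 := hδpow m
  have hη0 : η ≠ 0 := by
    rintro h0; rw [h0, zero_pow (by omega)] at hηpow; exact one_ne_zero hηpow.symm
  have hε₁0 : ε₁ ≠ 0 := by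
    rintro h0; rw [h0, zero_pow (by omega)] at hε₁pow; exact one_ne_zero hε₁pow.symm
  have hδε : -δ * ε₁ = η := by
    rw [hε₁def, hηdef, pow_succ]
    linear_combination ((δ ^ q) ^ m) * hδq
  -- s(v)^q = δ^q s(v), and the W-space property
  have hsq : ∀ v : F, (v ^ q + δ * v) ^ q = δ ^ q * (v ^ q + δ * v) := by
    intro v
    rw [hadd, mul_pow, hpowq]
    linear_combination (-v) * hδq
  have hW : ∀ v : F, ((v ^ q + δ * v) ^ m) ^ q = η * (v ^ q + δ * v) ^ m := by
    intro v
    rw [← pow_mul, mul_comm m q, pow_mul, hsq, mul_pow, hηdef]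
  -- L on the kernel
  have hLu : ∀ α β u : F, u ^ q + δ * u = 0 → α * u ^ q + β * u = (β - δ * α) * u := by
    intro α β u hu
    have hu' : u ^ q = -(δ * u) := eq_neg_of_add_eq_zero_left hu
    rw [hu']; ring
  -- existence of kernel and non-kernel elements
  have hmδ : (-δ) ^ (q + 1) = 1 := by
    have e0 : (-δ : F) = (-1) * δ := by ring
    rw [e0, mul_pow, hneg1, hδ, one_mul]
  have hcardK := cardS hF hq2 hpowq hmδ
  obtain ⟨u₀, hu₀mem, hu₀0⟩ : ∃ u₀ : F, u₀ ^ q = (-δ) * u₀ ∧ u₀ ≠ 0 := by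
    have hns : ¬ (univ.filter fun t : F => t ^ q = (-δ) * t) ⊆ ({0} : Finset F) := by
      intro hsb
      have := Finset.card_le_card hsb
      rw [hcardK, Finset.card_singleton] at this
      omega
    obtain ⟨x, hx1, hx2⟩ := Finset.not_subset.1 hns
    simp only [mem_filter, mem_univ, true_and] at hx1
    simp only [Finset.mem_singleton] at hx2
    exact ⟨x, hx1, hx2⟩
  have hu₀ : u₀ ^ q + δ * u₀ = 0 := by rw [hu₀mem]; ring
  obtain ⟨v₀, hv₀⟩ : ∃ v₀ : F, v₀ ^ q + δ * v₀ ≠ 0 := by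
    by_contra hnone
    push_neg at hnone
    have hsb : (univ : Finset F) ⊆ univ.filter fun t : F => t ^ q = (-δ) * t := by
      intro v _
      simp only [mem_filter, mem_univ, true_and]
      have := hnone v
      have h2 : v ^ q = -(δ * v) := eq_neg_of_add_eq_zero_left this
      rw [h2]; ring
    have := Finset.card_le_card hsb
    rw [hcardK, card_univ, hF] at this
    nlinarith
  -- the condition is equivalent to the t-condition
  have hcond_iff : ∀ α β : F,
      ((∀ u v : F, u ^ q + δ * u = 0 → v ^ q + δ * v ≠ 0 →
          ∃ c : F, c ^ q = c ∧ α * u ^ q + β * u = c * (v ^ q + δ * v) ^ m))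
      ↔ (β - δ * α) ^ q = ε₁ * (β - δ * α) := by
    intro α β
    constructor
    · intro hC
      obtain ⟨c, hc, hcu⟩ := hC u₀ v₀ hu₀ hv₀
      rw [hLu α β u₀ hu₀] at hcu
      have h1 : ((β - δ * α) * u₀) ^ q = (c * (v₀ ^ q + δ * v₀) ^ m) ^ q := by rw [hcu]
      rw [mul_pow, mul_pow, hc, hW] at h1
      have hu₀' : u₀ ^ q = -(δ * u₀) := eq_neg_of_add_eq_zero_left hu₀
      rw [hu₀'] at h1
      have h2 : (-δ * (β - δ * α) ^ q) * u₀ = (η * (β - δ * α)) * u₀ := by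
        calc (-δ * (β - δ * α) ^ q) * u₀ = (β - δ * α) ^ q * -(δ * u₀) := by ring
          _ = c * (η * (v₀ ^ q + δ * v₀) ^ m) := h1
          _ = η * (c * (v₀ ^ q + δ * v₀) ^ m) := by ring
          _ = η * ((β - δ * α) * u₀) := by rw [← hcu]
          _ = (η * (β - δ * α)) * u₀ := by ring
      have h3 : -δ * (β - δ * α) ^ q = η * (β - δ * α) := mul_right_cancel₀ hu₀0 h2
      have h4 : η * (β - δ * α) = -δ * (ε₁ * (β - δ * α)) := by rw [← hδε]; ring
      rw [h4] at h3
      exact mul_left_cancel₀ (neg_ne_zero.2 hδ0) h3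
    · intro ht u v hu hv
      have hsm0 : (v ^ q + δ * v) ^ m ≠ 0 := pow_ne_zero _ hv
      refine ⟨(β - δ * α) * u / (v ^ q + δ * v) ^ m, ?_, ?_⟩
      · rw [div_pow, mul_pow, ht]
        have hu' : u ^ q = -(δ * u) := eq_neg_of_add_eq_zero_left hu
        rw [hu', hW]
        have hne : η * (v ^ q + δ * v) ^ m ≠ 0 := mul_ne_zero hη0 hsm0
        rw [div_eq_div_iff hne hsm0]
        linear_combination ((β - δ * α) * u * (v ^ q + δ * v) ^ m) * hδε
      · rw [hLu α β u hu, div_mul_cancel₀ _ hsm0]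
  -- injectivity of the pair-to-function map
  obtain ⟨w₁, hw₁⟩ : ∃ w : F, w ^ q ≠ w := by
    have h1 : (1 : F) ^ (q + 1) = 1 := one_pow _
    have hcard1 := cardS hF hq2 hpowq h1
    by_contra hnone
    push_neg at hnone
    have hsb : (univ : Finset F) ⊆ univ.filter fun t : F => t ^ q = 1 * t := by
      intro v _
      simp only [mem_filter, mem_univ, true_and, one_mul]
      exact hnone v
    have := Finset.card_le_card hsb
    rw [hcard1, card_univ, hF] at this
    nlinarith
  have hpairinj : Function.Injective (fun pr : F × F => fun x : F => pr.1 * x ^ q + pr.2 * x) := by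
    intro pr pr' hf
    have h1 := congrFun hf 1
    simp only [one_pow, mul_one] at h1
    have hw := congrFun hf w₁
    simp only [] at hw h1
    have h2 : (pr.1 - pr'.1) * (w₁ ^ q - w₁) = 0 := by linear_combination hw - w₁ * h1
    rcases mul_eq_zero.1 h2 with h3 | h3
    · have hα : pr.1 = pr'.1 := by linear_combination h3
      have hβ : pr.2 = pr'.2 := by linear_combination h1 - hα
      exact Prod.ext hα hβ
    · exact absurd (by linear_combination h3 : w₁ ^ q = w₁) hw₁
  -- Part 1 : the count
  have hpart1 : Set.ncard {L : F → F | ∃ α β : F, β ^ (q + 1) ≠ α ^ (q + 1) ∧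
        (L = fun x : F => α * x ^ q + β * x) ∧
        (∀ u v : F, u ^ q + δ * u = 0 → v ^ q + δ * v ≠ 0 →
          ∃ c : F, c ^ q = c ∧ L u = c * (v ^ q + δ * v) ^ m)}
      = q * (q - 1) ^ 2 := by
    have hseteq : {L : F → F | ∃ α β : F, β ^ (q + 1) ≠ α ^ (q + 1) ∧
          (L = fun x : F => α * x ^ q + β * x) ∧
          (∀ u v : F, u ^ q + δ * u = 0 → v ^ q + δ * v ≠ 0 →
            ∃ c : F, c ^ q = c ∧ L u = c * (v ^ q + δ * v) ^ m)}
        = (fun pr : F × F => fun x : F => pr.1 * x ^ q + pr.2 * x) ''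
          ↑(univ.filter fun pr : F × F => pr.2 ^ (q + 1) ≠ pr.1 ^ (q + 1) ∧
            (pr.2 - δ * pr.1) ^ q = ε₁ * (pr.2 - δ * pr.1)) := by
      ext L
      simp only [Set.mem_setOf_eq, Set.mem_image, Finset.coe_filter, mem_univ, true_and,
        Set.mem_setOf_eq]
      constructor
      · rintro ⟨α, β, hne, hLdef, hC⟩
        refine ⟨(α, β), ⟨hne, ?_⟩, hLdef.symm⟩
        apply (hcond_iff α β).1
        intro u v hu hv
        obtain ⟨c, hc, hcu⟩ := hC u v hu hv
        rw [hLdef] at hcu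
        exact ⟨c, hc, hcu⟩
      · rintro ⟨⟨α, β⟩, ⟨hne, ht⟩, hLdef⟩
        refine ⟨α, β, hne, hLdef.symm, ?_⟩
        intro u v hu hv
        obtain ⟨c, hc, hcu⟩ := (hcond_iff α β).2 ht u v hu hv
        refine ⟨c, hc, ?_⟩
        rw [← hLdef]
        simpa using hcu
    rw [hseteq, Set.ncard_image_of_injective _ hpairinj, Set.ncard_coe_finset]
    exact pair_count hF hq2 hadd hpowq hneg1 hδ hε₁pow
  refine ⟨hpart1, ?_⟩
  -- Part 2 : permutation polynomials
  set Φ : (F → F) → (F → F) := fun L => fun x => (x ^ q + δ * x) ^ m + L x with hΦdef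
  have hΦinj : Function.Injective Φ := by
    intro L L' hLL
    funext x
    have := congrFun hLL x
    simp only [hΦdef] at this
    exact add_left_cancel this
  have himg : Φ '' {L : F → F | ∃ α β : F, β ^ (q + 1) ≠ α ^ (q + 1) ∧
        (L = fun x : F => α * x ^ q + β * x) ∧
        (∀ u v : F, u ^ q + δ * u = 0 → v ^ q + δ * v ≠ 0 →
          ∃ c : F, c ^ q = c ∧ L u = c * (v ^ q + δ * v) ^ m)}
      ⊆ {f : F → F | Function.Bijective f ∧
          ∃ α β : F, β ^ (q + 1) ≠ α ^ (q + 1) ∧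
            f = fun x : F => (x ^ q + δ * x) ^ m + (α * x ^ q + β * x)} := by
    rintro f ⟨L, ⟨α, β, hne, hLdef, hC⟩, rfl⟩
    have ht : (β - δ * α) ^ q = ε₁ * (β - δ * α) := by
      apply (hcond_iff α β).1
      intro u v hu hv
      obtain ⟨c, hc, hcu⟩ := hC u v hu hv
      rw [hLdef] at hcu
      exact ⟨c, hc, hcu⟩
    -- injectivity of L
    have hLinj : Function.Injective (fun x : F => α * x ^ q + β * x) := by
      intro a b hab
      simp only [] at hab
      by_contra hne2
      have hw0 : a - b ≠ 0 := sub_ne_zero.2 hne2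
      have h1 : α * (a - b) ^ q + β * (a - b) = 0 := by
        rw [hsub]; linear_combination hab
      have h2 : α * (a - b) ^ q = -(β * (a - b)) := eq_neg_of_add_eq_zero_left h1
      have h3 : (α * (a - b) ^ q) ^ (q + 1) = (-(β * (a - b))) ^ (q + 1) := by rw [h2]
      have e1 : ((a - b) ^ q) ^ (q + 1) = (a - b) ^ (q + 1) := by
        rw [pow_succ ((a - b) ^ q) q, hpowq, pow_succ]
        ring
      have e2 : (α * (a - b) ^ q) ^ (q + 1) = α ^ (q + 1) * (a - b) ^ (q + 1) := by
        rw [mul_pow, e1]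
      have e3 : (-(β * (a - b))) ^ (q + 1) = β ^ (q + 1) * (a - b) ^ (q + 1) := by
        have e0 : (-(β * (a - b))) = (-1 : F) * β * (a - b) := by ring
        rw [e0, mul_pow, mul_pow, hneg1, one_mul]
      rw [e2, e3] at h3
      have hwp : (a - b) ^ (q + 1) ≠ 0 := pow_ne_zero _ hw0
      exact hne (mul_right_cancel₀ hwp h3.symm)
    -- the kernel maps onto W
    have hKW : (univ.filter fun u : F => u ^ q = (-δ) * u).image (fun x : F => α * x ^ q + β * x)
        = univ.filter fun y : F => y ^ q = η * y := by
      apply Finset.eq_of_subset_of_card_le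
      · intro y hy
        simp only [Finset.mem_image, mem_filter, mem_univ, true_and] at hy ⊢
        obtain ⟨u, hu, rfl⟩ := hy
        have hu' : u ^ q + δ * u = 0 := by rw [hu]; ring
        rw [hLu α β u hu']
        rw [mul_pow, ht, hu]
        linear_combination ((β - δ * α) * u) * hδε
      · rw [cardS hF hq2 hpowq hηpow,
          Finset.card_image_of_injective _ hLinj, hcardK]
    -- injectivity of f
    have hfinj : Function.Injective (Φ (fun x : F => α * x ^ q + β * x)) := by
      intro a b hab
      simp only [hΦdef] at hab
      set w := a - b with hwdef
      have hLw : α * w ^ q + β * w = (b ^ q + δ * b) ^ m - (a ^ q + δ * a) ^ m := by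
        rw [hwdef, hsub]; linear_combination hab
      by_cases hsw : w ^ q + δ * w = 0
      · have hsab : a ^ q + δ * a = b ^ q + δ * b := by
          have : (a ^ q + δ * a) - (b ^ q + δ * b) = w ^ q + δ * w := by
            rw [hwdef, hsub]; ring
          have h0 : (a ^ q + δ * a) - (b ^ q + δ * b) = 0 := by rw [this, hsw]
          exact sub_eq_zero.1 h0

        have hLw0 : α * w ^ q + β * w = 0 := by rw [hLw, hsab]; ring
        have : (fun x : F => α * x ^ q + β * x) w = (fun x : F => α * x ^ q + β * x) 0 := by
          simp only []
          rw [hLw0, zero_pow hq0]; ring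
        have hw0 : w = 0 := hLinj this
        rw [hwdef] at hw0
        exact sub_eq_zero.1 hw0
      · exfalso
        have hLwW : (α * w ^ q + β * w) ∈ univ.filter fun y : F => y ^ q = η * y := by
          simp only [mem_filter, mem_univ, true_and]
          rw [hLw, hsub, hW, hW]
          ring
        rw [← hKW] at hLwW
        simp only [Finset.mem_image, mem_filter, mem_univ, true_and] at hLwW
        obtain ⟨u, hu, huw⟩ := hLwW
        have : u = w := hLinj huw
        rw [this] at hu
        apply hsw
        rw [hu]; ring
    refine ⟨?_, α, β, hne, by rw [hLdef]⟩
    · rw [hLdef]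
      exact Finite.injective_iff_bijective.1 hfinj
  calc (q * (q - 1) ^ 2 : ℕ) = Set.ncard _ := hpart1.symm
    _ = (Φ '' _).ncard := (Set.ncard_image_of_injective _ hΦinj).symm
    _ ≤ _ := Set.ncard_le_ncard himg (Set.toFinite _)
end

section
/- Let q be a prime power, δ ∈ F_{q^2} with δ^{q+1} = 1, s(x) = x^q + δx, m ≥ 1 an integer, and let L be a rank 1 linearized polynomial of F_{q^2}. Then f(x) = s(x)^m + L(x) is a bijection of F_{q^2} if and only if gcd(m, q-1) = 1, the kernel of s is different from the kernel of L, and the image of the map x ↦ s(x)^m is different from the image of L. In particular, if f is a bijection of F_{q^2} then gcd(m, q-1) = 1. -/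
open Polynomial in
lemma aux_ncard_pow_fiber {F : Type} [CommRing F] [IsDomain F] {n : ℕ} (hn : 0 < n) (c : F) :
    {y : F | y ^ n = c}.ncard ≤ n := by
  classical
  have hsub : {y : F | y ^ n = c} ⊆ ((nthRoots n c).toFinset : Set F) := by
    intro y hy
    simpa [Multiset.mem_toFinset, mem_nthRoots hn] using hy
  calc {y : F | y ^ n = c}.ncard ≤ ((nthRoots n c).toFinset : Set F).ncard :=
        Set.ncard_le_ncard hsub (Multiset.toFinset (nthRoots n c)).finite_toSet
    _ = (nthRoots n c).toFinset.card := Set.ncard_coe_finset _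
    _ ≤ Multiset.card (nthRoots n c) := Multiset.toFinset_card_le _
    _ ≤ n := card_nthRoots n c

lemma aux_exists_pow_root {G : Type} [CommGroup G] [Fintype G] [IsCyclic G] {r : ℕ}
    (hr : r ∣ Fintype.card G) (hr0 : 0 < r) {c : G} (hc : c ^ (Fintype.card G / r) = 1) :
    ∃ x : G, x ^ r = c := by
  obtain ⟨g, hg⟩ := IsCyclic.exists_generator (α := G)
  obtain ⟨k, hk⟩ := (Submonoid.mem_powers_iff c g).mp
    (mem_powers_iff_mem_zpowers.mpr (hg c))
  have hord : orderOf g = Fintype.card G := by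
    rw [orderOf_eq_card_of_forall_mem_zpowers hg, Nat.card_eq_fintype_card]
  obtain ⟨e, he⟩ := hr
  have he0 : 0 < e := by
    have := Fintype.card_pos (α := G)
    by_contra h
    push_neg at h
    interval_cases e <;> omega
  have hdivre : Fintype.card G / r = e := by rw [he, Nat.mul_div_cancel_left _ hr0]
  have h1 : g ^ (k * e) = 1 := by rw [pow_mul, hk, ← hdivre, hc]
  have h2 : r * e ∣ k * e := by
    rw [← he, ← hord]; exact orderOf_dvd_of_pow_eq_one h1
  have h3 : r ∣ k := (Nat.mul_dvd_mul_iff_right he0).mp h2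
  obtain ⟨j, hj⟩ := h3
  exact ⟨g ^ j, by rw [← pow_mul, Nat.mul_comm, ← hj, hk]⟩

lemma aux_ncard_image2_le {A B C : Type} (f : A → B → C) (s : Set A) (t : Set B)
    (hs : s.Finite) (ht : t.Finite) : (Set.image2 f s t).ncard ≤ s.ncard * t.ncard := by
  classical
  rw [← Set.image_prod]
  calc ((fun p : A × B => f p.1 p.2) '' (s ×ˢ t)).ncard ≤ (s ×ˢ t).ncard :=
        Set.ncard_image_le (hs.prod ht)
    _ = s.ncard * t.ncard := by
        have h1 := hs.prod ht
        rw [Set.ncard_eq_toFinset_card _ h1, Set.ncard_eq_toFinset_card _ hs,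
          Set.ncard_eq_toFinset_card _ ht, ← Finset.card_product]
        congr 1
        ext p
        simp [Set.Finite.mem_toFinset]

/-- Let `δ^{q+1} = 1`, `s(x) = x^q + δx`, `m ≥ 1`, and let
`L(x) = αx^q + βx` be a rank 1 linearized polynomial (`α^{q+1} = β^{q+1}`,
`(α,β) ≠ (0,0)`). Then `f(x) = s(x)^m + L(x)` is a bijection of `F_{q^2}` iff
`gcd(m, q-1) = 1`, `ker s ≠ ker L` and `im (x ↦ s(x)^m) ≠ im L`. -/
theorem stmt_5 (q : ℕ) (hq : IsPrimePow q)
    (F : Type) [Field F] [Fintype F] (hF : Fintype.card F = q ^ 2)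
    (δ : F) (hδ : δ ^ (q + 1) = 1) (m : ℕ) (hm : 1 ≤ m)
    (α β : F) (hrank1 : α ^ (q + 1) = β ^ (q + 1)) (hne : (α, β) ≠ (0, 0)) :
    Function.Bijective
        (fun x : F => (x ^ q + δ * x) ^ m + (α * x ^ q + β * x))
      ↔ (Nat.gcd m (q - 1) = 1
          ∧ {x : F | x ^ q + δ * x = 0} ≠ {x : F | α * x ^ q + β * x = 0}
          ∧ Set.range (fun x : F => (x ^ q + δ * x) ^ m)
              ≠ Set.range (fun x : F => α * x ^ q + β * x)) := by
  classical
  have hq2 : 2 ≤ q := hq.two_le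
  obtain ⟨p, n, hp, hn, hpn⟩ := hq
  have hp' : p.Prime := Nat.prime_iff.mpr hp
  have hm0 : m ≠ 0 := by omega
  -- characteristic
  haveI hchar : CharP F p := by
    obtain ⟨k, hk, hcard⟩ := FiniteField.card F (ringChar F)
    have : ringChar F = p := by
      have h2 : ringChar F ∣ p := by
        refine hk.prime.dvd_of_dvd_pow (n := n * 2) (a := p) ?_
        rw [pow_mul, hpn, ← hF, hcard]
        exact dvd_pow_self _ (by positivity)
      exact (Nat.prime_dvd_prime_iff_eq hk hp').mp h2
    rw [← this]; exact ringChar.charP F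
  haveI : ExpChar F p := ExpChar.prime hp'
  -- Frobenius facts
  have hadd : ∀ x y : F, (x + y) ^ q = x ^ q + y ^ q := by
    intro x y; rw [← hpn]; exact add_pow_expChar_pow ..
  have hsub : ∀ x y : F, (x - y) ^ q = x ^ q - y ^ q := by
    intro x y; rw [← hpn]; exact sub_pow_expChar_pow ..
  have hqq : ∀ x : F, (x ^ q) ^ q = x := by
    intro x; rw [← pow_mul, ← sq, ← hF, FiniteField.pow_card]
  have h0q : (0 : F) ^ q = 0 := zero_pow (by omega)
  -- nonvanishing
  have hδ0 : δ ≠ 0 := by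
    intro h; rw [h, zero_pow (by omega)] at hδ; exact zero_ne_one hδ
  have hδq : δ ^ q * δ = 1 := by rw [← pow_succ]; exact hδ
  have hδq0 : δ ^ q ≠ 0 := pow_ne_zero _ hδ0
  have hα0 : α ≠ 0 := by
    intro h
    rw [h, zero_pow (by omega)] at hrank1
    have : β = 0 := by
      have := pow_eq_zero_iff (n := q + 1) (by omega) |>.mp hrank1.symm
      exact this
    exact hne (by rw [h, this])
  have hβ0 : β ≠ 0 := by
    intro h
    rw [h, zero_pow (by omega)] at hrank1
    have : α = 0 := pow_eq_zero_iff (n := q + 1) (by omega) |>.mp hrank1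
    exact hne (by rw [h, this])
  have hαβ : α ^ q * α = β ^ q * β := by
    rw [← pow_succ, ← pow_succ]; exact hrank1
  have hc0 : α ^ q * β⁻¹ ≠ 0 := mul_ne_zero (pow_ne_zero _ hα0) (inv_ne_zero hβ0)
  -- s maps into the line {w : w^q = δ^q w}
  have hsq : ∀ x : F, (x ^ q + δ * x) ^ q = δ ^ q * (x ^ q + δ * x) := by
    intro x
    rw [hadd, mul_pow, hqq]
    linear_combination (-x) * hδq
  -- L maps into the line {w : w^q = c w}, c = α^q/β
  have hLq : ∀ x : F, (α * x ^ q + β * x) ^ q = (α ^ q * β⁻¹) * (α * x ^ q + β * x) := by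
    intro x
    have key : β ^ q = α ^ q * β⁻¹ * α := by
      field_simp
      linear_combination hαβ.symm
    have key2 : α ^ q * β⁻¹ * β = α ^ q := by field_simp
    rw [hadd, mul_pow, mul_pow, hqq, mul_add, ← mul_assoc, ← mul_assoc, key2, ← key]
    ring
  -- scaling by K-elements
  have hsmul_s : ∀ t x : F, t ^ q = t → (t * x) ^ q + δ * (t * x) = t * (x ^ q + δ * x) := by
    intro t x ht; rw [mul_pow, ht]; ring
  have hsmul_L : ∀ t x : F, t ^ q = t →
      α * (t * x) ^ q + β * (t * x) = t * (α * x ^ q + β * x) := by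
    intro t x ht; rw [mul_pow, ht]; ring
  -- ratio of two elements on the same line lies in K
  have hratio : ∀ w : F, w ≠ 0 → ∀ a cc : F, cc ≠ 0 → a ^ q = cc * a → w ^ q = cc * w →
      (a / w) ^ q = a / w := by
    intro w hw a cc hcc ha hw'
    rw [div_pow, ha, hw', mul_div_mul_left _ _ hcc]
  have hq1 : 1 ≤ q := by omega
  have hq11 : q - 1 + 1 = q := by omega
  -- K-elements have order dividing q-1
  have hKorder : ∀ t : F, t ≠ 0 → t ^ q = t → t ^ (q - 1) = 1 := by
    intro t ht h
    have h2 : t ^ (q - 1) * t = 1 * t := by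
      rw [← pow_succ, hq11, h, one_mul]
    exact mul_right_cancel₀ ht h2
  -- m-th power map on K is surjective when gcd(m,q-1)=1
  have hKsurj : Nat.gcd m (q - 1) = 1 → ∀ t : F, t ^ q = t → ∃ u : F, u ^ q = u ∧ u ^ m = t := by
    intro h1 t ht
    by_cases ht0 : t = 0
    · exact ⟨0, by rw [h0q], by rw [ht0, zero_pow hm0]⟩
    · have hord : orderOf t ∣ q - 1 := orderOf_dvd_of_pow_eq_one (hKorder t ht0 ht)
      have hco : Nat.Coprime m (orderOf t) := Nat.Coprime.coprime_dvd_right hord h1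
      by_cases ho1 : orderOf t = 1
      · have ht1 : t = 1 := orderOf_eq_one_iff.mp ho1
        exact ⟨1, by rw [one_pow], by rw [one_pow, ht1]⟩
      · have ho2 : 1 < orderOf t := by
          have hne0 : orderOf t ≠ 0 := by
            intro h0; rw [h0] at hord
            have := Nat.eq_zero_of_zero_dvd hord; omega
          omega
        obtain ⟨a, -, ha⟩ := Nat.exists_mul_mod_eq_one_of_coprime hco ho2
        refine ⟨t ^ a, ?_, ?_⟩
        · rw [← pow_mul, mul_comm, pow_mul, ht]
        · calc (t ^ a) ^ m = t ^ (m * a) := by rw [← pow_mul, mul_comm]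
            _ = t ^ (m * a % orderOf t) := (pow_mod_orderOf t _).symm
            _ = t := by rw [ha, pow_one]
  -- m-th power map on K is injective when gcd(m,q-1)=1
  have hKinj : Nat.gcd m (q - 1) = 1 → ∀ t : F, t ^ q = t → t ^ m = 1 → t = 1 := by
    intro h1 t ht htm
    have ht0 : t ≠ 0 := by
      intro h; rw [h, zero_pow hm0] at htm; exact zero_ne_one htm
    have d1 : orderOf t ∣ m := orderOf_dvd_of_pow_eq_one htm
    have d2 : orderOf t ∣ q - 1 := orderOf_dvd_of_pow_eq_one (hKorder t ht0 ht)
    have : orderOf t ∣ 1 := h1 ▸ Nat.dvd_gcd d1 d2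
    exact orderOf_eq_one_iff.mp (Nat.dvd_one.mp this)
  -- the m-th powers of s land on the line {w : w^q = (δ^q)^m w}
  have hsmq : ∀ x : F, ((x ^ q + δ * x) ^ m) ^ q = (δ ^ q) ^ m * (x ^ q + δ * x) ^ m := by
    intro x
    calc ((x ^ q + δ * x) ^ m) ^ q = ((x ^ q + δ * x) ^ q) ^ m := pow_right_comm _ _ _
      _ = (δ ^ q * (x ^ q + δ * x)) ^ m := by rw [hsq]
      _ = (δ ^ q) ^ m * (x ^ q + δ * x) ^ m := mul_pow _ _ _
  have hδqm0 : (δ ^ q) ^ m ≠ 0 := pow_ne_zero _ hδq0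
  -- if the two ranges share a nonzero value (and gcd = 1), they are equal
  have hRangeEq : Nat.gcd m (q - 1) = 1 → ∀ z : F, z ≠ 0 →
      (∃ x : F, (x ^ q + δ * x) ^ m = z) → (∃ x : F, α * x ^ q + β * x = z) →
      Set.range (fun x : F => (x ^ q + δ * x) ^ m)
        = Set.range (fun x : F => α * x ^ q + β * x) := by
    intro h1 z hz0 hz1 hz2
    obtain ⟨x0, hx0⟩ := hz1
    obtain ⟨x1, hx1⟩ := hz2
    have hzq : z ^ q = (δ ^ q) ^ m * z := by rw [← hx0]; exact hsmq x0
    have hzLq : z ^ q = (α ^ q * β⁻¹) * z := by rw [← hx1]; exact hLq x1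
    ext y
    simp only [Set.mem_range]
    constructor
    · rintro ⟨x, rfl⟩
      have htK : ((x ^ q + δ * x) ^ m / z) ^ q = (x ^ q + δ * x) ^ m / z :=
        hratio z hz0 _ _ hδqm0 (hsmq x) hzq
      refine ⟨((x ^ q + δ * x) ^ m / z) * x1, ?_⟩
      rw [hsmul_L _ _ htK, hx1, div_mul_cancel₀ _ hz0]
    · rintro ⟨x, rfl⟩
      have htK : ((α * x ^ q + β * x) / z) ^ q = (α * x ^ q + β * x) / z :=
        hratio z hz0 _ _ hc0 (hLq x) hzLq
      obtain ⟨u, huK, hum⟩ := hKsurj h1 _ htK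
      refine ⟨u * x0, ?_⟩
      calc ((u * x0) ^ q + δ * (u * x0)) ^ m = (u * (x0 ^ q + δ * x0)) ^ m := by
            rw [hsmul_s u x0 huK]
        _ = u ^ m * (x0 ^ q + δ * x0) ^ m := mul_pow _ _ _
        _ = ((α * x ^ q + β * x) / z) * z := by rw [hum, hx0]
        _ = α * x ^ q + β * x := div_mul_cancel₀ _ hz0
  -- if the two kernels share a nonzero element, they are equal
  have hKerEq : ∀ w : F, w ≠ 0 → w ^ q + δ * w = 0 → α * w ^ q + β * w = 0 →
      {x : F | x ^ q + δ * x = 0} = {x : F | α * x ^ q + β * x = 0} := by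
    intro w hw0 hws hwL
    have hwsq : w ^ q = (-δ) * w := by linear_combination hws
    have hwLq : w ^ q = (-(β * α⁻¹)) * w := by
      field_simp
      linear_combination hwL
    have hδ0' : (-δ) ≠ 0 := neg_ne_zero.mpr hδ0
    have hba0 : (-(β * α⁻¹)) ≠ 0 :=
      neg_ne_zero.mpr (mul_ne_zero hβ0 (inv_ne_zero hα0))
    ext x
    simp only [Set.mem_setOf_eq]
    constructor
    · intro hx
      by_cases hx0 : x = 0
      · rw [hx0, h0q]; ring
      · have hxq : x ^ q = (-δ) * x := by linear_combination hx
        have htK : (x / w) ^ q = x / w := hratio w hw0 x (-δ) hδ0' hxq hwsq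
        have h5 := hsmul_L (x / w) w htK
        rw [div_mul_cancel₀ _ hw0] at h5
        rw [h5, hwL, mul_zero]
    · intro hx
      by_cases hx0 : x = 0
      · rw [hx0, h0q]; ring
      · have hxq : x ^ q = (-(β * α⁻¹)) * x := by
          field_simp
          linear_combination hx
        have htK : (x / w) ^ q = x / w := hratio w hw0 x _ hba0 hxq hwLq
        have h5 := hsmul_s (x / w) w htK
        rw [div_mul_cancel₀ _ hw0] at h5
        rw [h5, hws, mul_zero]
  -- cardinality of the unit group
  have hcardu : Fintype.card Fˣ = q * q - 1 := by
    rw [Fintype.card_units, hF, sq]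
  have hqq1 : q * q - 1 = (q - 1) * (q + 1) := by
    have h : (q - 1) * (q + 1) + 1 = q * q := by
      obtain ⟨k, rfl⟩ : ∃ k, q = k + 2 := ⟨q - 2, by omega⟩
      have h1 : k + 2 - 1 = k + 1 := by omega
      rw [h1]
      ring
    omega
  constructor
  · -- forward direction
    intro hbij
    refine ⟨?_, ?_, ?_⟩
    · -- gcd(m, q-1) = 1
      by_contra hd
      have hd0 : Nat.gcd m (q - 1) ≠ 0 := by
        intro h0
        have := Nat.gcd_eq_zero_iff.mp h0
        omega
      have hd2 : 2 ≤ Nat.gcd m (q - 1) := by omega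
      have hdm : Nat.gcd m (q - 1) ∣ m := Nat.gcd_dvd_left _ _
      have hdq : Nat.gcd m (q - 1) ∣ q - 1 := Nat.gcd_dvd_right _ _
      have hq3 : 2 ≤ q - 1 := le_trans hd2 (Nat.le_of_dvd (by omega) hdq)
      have he1 : 1 ≤ (q - 1) / Nat.gcd m (q - 1) :=
        Nat.div_pos (Nat.le_of_dvd (by omega) hdq) (by omega)
      have helt : (q - 1) / Nat.gcd m (q - 1) < q - 1 := Nat.div_lt_self (by omega) (by omega)
      have hme : m * ((q - 1) / Nat.gcd m (q - 1)) = (q - 1) * (m / Nat.gcd m (q - 1)) := by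
        rw [← Nat.mul_div_assoc m hdq, ← Nat.mul_div_assoc _ hdm, Nat.mul_comm]
      -- range of s^m is small
      have hSsub : Set.range (fun x : F => (x ^ q + δ * x) ^ m)
          ⊆ {0} ∪ {y : F | y ^ ((q - 1) / Nat.gcd m (q - 1)) = (δ ^ q) ^ (m / Nat.gcd m (q - 1))} := by
        rintro y ⟨x, rfl⟩
        by_cases hsx : x ^ q + δ * x = 0
        · left
          show (x ^ q + δ * x) ^ m ∈ ({0} : Set F)
          rw [hsx, zero_pow hm0]
          rfl
        · right
          have h1 : (x ^ q + δ * x) ^ (q - 1) = δ ^ q := by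
            have h2 : (x ^ q + δ * x) ^ (q - 1) * (x ^ q + δ * x)
                = δ ^ q * (x ^ q + δ * x) := by
              rw [← pow_succ, hq11, hsq]
            exact mul_right_cancel₀ hsx h2
          show ((x ^ q + δ * x) ^ m) ^ ((q - 1) / Nat.gcd m (q - 1)) = _
          rw [← pow_mul, hme, pow_mul, h1]
      have hTsub : Set.range (fun x : F => α * x ^ q + β * x)
          ⊆ {0} ∪ {y : F | y ^ (q - 1) = α ^ q * β⁻¹} := by
        rintro y ⟨x, rfl⟩
        by_cases hLx : α * x ^ q + β * x = 0
        · left; exact hLx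
        · right
          show (α * x ^ q + β * x) ^ (q - 1) = _
          have h2 : (α * x ^ q + β * x) ^ (q - 1) * (α * x ^ q + β * x)
              = (α ^ q * β⁻¹) * (α * x ^ q + β * x) := by
            rw [← pow_succ, hq11, hLq]
          exact mul_right_cancel₀ hLx h2
      have hSn : (Set.range (fun x : F => (x ^ q + δ * x) ^ m)).ncard
          ≤ 1 + (q - 1) / Nat.gcd m (q - 1) := by
        calc (Set.range (fun x : F => (x ^ q + δ * x) ^ m)).ncard
            ≤ ({0} ∪ {y : F | y ^ ((q - 1) / Nat.gcd m (q - 1))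
                = (δ ^ q) ^ (m / Nat.gcd m (q - 1))} : Set F).ncard :=
              Set.ncard_le_ncard hSsub (Set.toFinite _)
          _ ≤ ({0} : Set F).ncard + ({y : F | y ^ ((q - 1) / Nat.gcd m (q - 1))
                = (δ ^ q) ^ (m / Nat.gcd m (q - 1))} : Set F).ncard := Set.ncard_union_le _ _
          _ ≤ 1 + (q - 1) / Nat.gcd m (q - 1) := by
              rw [Set.ncard_singleton]
              exact Nat.add_le_add_left (aux_ncard_pow_fiber (by omega) _) 1
      have hTn : (Set.range (fun x : F => α * x ^ q + β * x)).ncard ≤ q := by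
        calc (Set.range (fun x : F => α * x ^ q + β * x)).ncard
            ≤ ({0} ∪ {y : F | y ^ (q - 1) = α ^ q * β⁻¹} : Set F).ncard :=
              Set.ncard_le_ncard hTsub (Set.toFinite _)
          _ ≤ ({0} : Set F).ncard + ({y : F | y ^ (q - 1) = α ^ q * β⁻¹} : Set F).ncard :=
              Set.ncard_union_le _ _
          _ ≤ 1 + (q - 1) := by
              rw [Set.ncard_singleton]
              exact Nat.add_le_add_left (aux_ncard_pow_fiber (by omega) _) 1
          _ = q := by omega
      have hcover : Set.range (fun x : F => (x ^ q + δ * x) ^ m + (α * x ^ q + β * x))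
          ⊆ Set.image2 (· + ·) (Set.range (fun x : F => (x ^ q + δ * x) ^ m))
            (Set.range (fun x : F => α * x ^ q + β * x)) := by
        rintro y ⟨x, rfl⟩
        exact Set.mem_image2_of_mem ⟨x, rfl⟩ ⟨x, rfl⟩
      have huniv : Set.range (fun x : F => (x ^ q + δ * x) ^ m + (α * x ^ q + β * x))
          = Set.univ := Set.range_eq_univ.mpr hbij.surjective
      have hbig : q * q ≤ (1 + (q - 1) / Nat.gcd m (q - 1)) * q := by
        calc q * q = Fintype.card F := by rw [hF, sq]
          _ = (Set.univ : Set F).ncard := by rw [Set.ncard_univ, Nat.card_eq_fintype_card]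
          _ = (Set.range (fun x : F => (x ^ q + δ * x) ^ m + (α * x ^ q + β * x))).ncard := by
              rw [huniv]
          _ ≤ (Set.image2 (· + ·) (Set.range (fun x : F => (x ^ q + δ * x) ^ m))
                (Set.range (fun x : F => α * x ^ q + β * x))).ncard :=
              Set.ncard_le_ncard hcover (Set.toFinite _)
          _ ≤ (Set.range (fun x : F => (x ^ q + δ * x) ^ m)).ncard
                * (Set.range (fun x : F => α * x ^ q + β * x)).ncard :=
              aux_ncard_image2_le _ _ _ (Set.toFinite _) (Set.toFinite _)
          _ ≤ (1 + (q - 1) / Nat.gcd m (q - 1)) * q := Nat.mul_le_mul hSn hTn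
      have hsmall : (1 + (q - 1) / Nat.gcd m (q - 1)) * q < q * q :=
        (Nat.mul_lt_mul_right (show 0 < q by omega)).mpr (by omega)
      exact absurd (lt_of_le_of_lt hbig hsmall) (lt_irrefl _)
    · -- kernels differ
      intro heq
      have hmδ0 : (-δ) ≠ 0 := neg_ne_zero.mpr hδ0
      have hneg1 : (-1 : F) ^ (q + 1) = 1 := by
        rcases hp'.eq_two_or_odd' with h2 | hodd
        · subst h2
          have hn1 : (-1 : F) = 1 := CharTwo.neg_eq 1
          rw [hn1, one_pow]
        · have hqodd : Odd q := by rw [← hpn]; exact hodd.pow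
          exact (hqodd.add_one).neg_one_pow
      have hωpow : (-δ) ^ (q + 1) = 1 := by
        rw [show (-δ) = (-1) * δ by ring, mul_pow, hneg1, hδ, one_mul]
      have hdvd : (q - 1) ∣ Fintype.card Fˣ := by
        rw [hcardu, hqq1]; exact ⟨q + 1, rfl⟩
      have hω1 : (Units.mk0 (-δ) hmδ0) ^ (Fintype.card Fˣ / (q - 1)) = 1 := by
        have hdiv : Fintype.card Fˣ / (q - 1) = q + 1 := by
          rw [hcardu, hqq1, Nat.mul_div_cancel_left _ (by omega : 0 < q - 1)]
        rw [hdiv]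
        ext
        push_cast
        exact hωpow
      obtain ⟨ξ, hξ⟩ := aux_exists_pow_root hdvd (by omega) hω1
      have hv0 : (ξ : F) ≠ 0 := ξ.ne_zero
      have hvq1 : (ξ : F) ^ (q - 1) = -δ := by
        have := congrArg (Units.val) hξ
        push_cast at this
        exact this
      have hvker : (ξ : F) ^ q + δ * (ξ : F) = 0 := by
        have h5 : (ξ : F) ^ q = (ξ : F) ^ (q - 1) * (ξ : F) := by rw [← pow_succ, hq11]
        rw [h5, hvq1]; ring
      have hvL : α * (ξ : F) ^ q + β * (ξ : F) = 0 := (Set.ext_iff.mp heq (ξ : F)).mp hvker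
      have hfv : ((ξ : F) ^ q + δ * (ξ : F)) ^ m + (α * (ξ : F) ^ q + β * (ξ : F)) = 0 := by
        rw [hvker, hvL, zero_pow hm0, add_zero]
      have hf0 : ((0 : F) ^ q + δ * 0) ^ m + (α * (0 : F) ^ q + β * 0) = 0 := by
        simp [h0q, zero_pow hm0]
      exact hv0 (hbij.injective (hfv.trans hf0.symm))
    · -- ranges differ
      intro heq
      have hsubV : ∀ x : F, ((x ^ q + δ * x) ^ m + (α * x ^ q + β * x)) ^ q
          = (α ^ q * β⁻¹) * ((x ^ q + δ * x) ^ m + (α * x ^ q + β * x)) := by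
        intro x
        have h1 : (x ^ q + δ * x) ^ m ∈ Set.range (fun x : F => α * x ^ q + β * x) := by
          rw [← heq]; exact ⟨x, rfl⟩
        obtain ⟨x', hx'⟩ := h1
        simp only at hx'
        rw [← hx', hadd, hLq, hLq, mul_add]
        ring
      obtain ⟨g, hg⟩ := IsCyclic.exists_generator (α := Fˣ)
      have hordg : orderOf g = q * q - 1 := by
        rw [orderOf_eq_card_of_forall_mem_zpowers hg, Nat.card_eq_fintype_card, hcardu]
      have hwit : ∃ y : F, y ^ q ≠ (α ^ q * β⁻¹) * y := by
        by_cases hc1 : α ^ q * β⁻¹ = 1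
        · refine ⟨(g : F), ?_⟩
          rw [hc1, one_mul]
          intro hgq
          have hgu : g ^ q = g := Units.ext (by push_cast; exact hgq)
          have h2 : g ^ (q - 1) = 1 := by
            have h3 : g ^ (q - 1) * g = 1 * g := by rw [← pow_succ, hq11, hgu, one_mul]
            exact mul_right_cancel h3
          have h4 := orderOf_dvd_of_pow_eq_one h2
          rw [hordg] at h4
          have h5 := Nat.le_of_dvd (by omega) h4
          have h6 : 2 * q ≤ q * q := Nat.mul_le_mul_right q hq2
          omega
        · refine ⟨1, ?_⟩
          rw [one_pow, mul_one]
          exact fun h => hc1 h.symm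
      obtain ⟨y, hy⟩ := hwit
      obtain ⟨x, hx⟩ := hbij.surjective y
      simp only at hx
      exact hy (by rw [← hx]; exact hsubV x)
  · -- backward direction
    rintro ⟨h1, h2, h3⟩
    rw [← Finite.injective_iff_bijective]
    intro x y hxy
    simp only at hxy
    have hz : (x ^ q + δ * x) ^ m - (y ^ q + δ * y) ^ m
        = α * (y - x) ^ q + β * (y - x) := by
      rw [hsub]
      linear_combination hxy
    have hz0 : (x ^ q + δ * x) ^ m - (y ^ q + δ * y) ^ m = 0 := by
      by_contra hz0
      apply h3
      apply hRangeEq h1 _ hz0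
      · -- the difference is in the range of s^m
        by_cases hv0 : y ^ q + δ * y = 0
        · exact ⟨x, by rw [hv0, zero_pow hm0, sub_zero]⟩
        · have htK : ((x ^ q + δ * x) / (y ^ q + δ * y)) ^ q
              = (x ^ q + δ * x) / (y ^ q + δ * y) :=
            hratio _ hv0 _ _ hδq0 (hsq x) (hsq y)
          have htm1K : (((x ^ q + δ * x) / (y ^ q + δ * y)) ^ m - 1) ^ q
              = ((x ^ q + δ * x) / (y ^ q + δ * y)) ^ m - 1 := by
            rw [hsub, one_pow, pow_right_comm, htK]
          obtain ⟨r, hrK, hrm⟩ := hKsurj h1 _ htm1K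
          refine ⟨r * y, ?_⟩
          rw [hsmul_s r y hrK, mul_pow, hrm, sub_mul, one_mul, div_pow,
            div_mul_cancel₀ _ (pow_ne_zero m hv0)]
      · exact ⟨y - x, hz.symm⟩
    have hum : (x ^ q + δ * x) ^ m = (y ^ q + δ * y) ^ m := sub_eq_zero.mp hz0
    have hLyx : α * (y - x) ^ q + β * (y - x) = 0 := by rw [← hz, hz0]
    have huv : x ^ q + δ * x = y ^ q + δ * y := by
      by_cases hv0 : y ^ q + δ * y = 0
      · rw [hv0] at hum ⊢
        rw [zero_pow hm0] at hum
        exact pow_eq_zero_iff hm0 |>.mp hum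
      · have htK : ((x ^ q + δ * x) / (y ^ q + δ * y)) ^ q
            = (x ^ q + δ * x) / (y ^ q + δ * y) :=
          hratio _ hv0 _ _ hδq0 (hsq x) (hsq y)
        have htm : ((x ^ q + δ * x) / (y ^ q + δ * y)) ^ m = 1 := by
          rw [div_pow, hum, div_self (pow_ne_zero m hv0)]
        have := hKinj h1 _ htK htm
        exact (div_eq_one_iff_eq hv0).mp this
    by_contra hxy0
    have hw0 : y - x ≠ 0 := sub_ne_zero.mpr (Ne.symm hxy0)
    have hws : (y - x) ^ q + δ * (y - x) = 0 := by
      rw [hsub]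
      linear_combination -huv
    exact h2 (hKerEq (y - x) hw0 hws hLyx)
end

section
/- Let q be a prime power, δ ∈ F_{q^2} with δ^{q+1} = 1, s(x) = x^q + δx, and let m > 1 be an integer with gcd(m, q-1) = 1. Then the number of rank 1 linearized polynomials L of F_{q^2} such that s(x)^m + L(x) is a bijection of F_{q^2} is exactly q^2(q-1). -/
open Finset

namespace Stmt6

open scoped Classical

variable {q : ℕ} {F : Type} [Field F] [Fintype F]

lemma char_exists (hq : IsPrimePow q) (hF : Fintype.card F = q ^ 2) :
    ∃ p k : ℕ, p.Prime ∧ 0 < k ∧ p ^ k = q ∧ CharP F p := by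
  obtain ⟨p, k, hp, hk, hpk⟩ := hq
  rw [← Nat.prime_iff] at hp
  haveI : CharP F (ringChar F) := ringChar.charP F
  obtain ⟨n, hrp, hcard⟩ := FiniteField.card F (ringChar F)
  have hdvd : p ∣ ringChar F := by
    have h1 : p ∣ (ringChar F) ^ (n : ℕ) := by
      rw [← hcard, hF, ← hpk, ← pow_mul]
      exact dvd_pow_self p (by positivity)
    exact hp.dvd_of_dvd_pow h1
  have : p = ringChar F := (Nat.prime_dvd_prime_iff_eq hp hrp).mp hdvd
  exact ⟨p, k, hp, hk, hpk, this ▸ ringChar.charP F⟩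

lemma frob_add (hq : IsPrimePow q) (hF : Fintype.card F = q ^ 2) (x y : F) :
    (x + y) ^ q = x ^ q + y ^ q := by
  obtain ⟨p, k, hp, hk, hpk, hchar⟩ := char_exists hq hF
  haveI := Fact.mk hp
  haveI := hchar
  rw [← hpk]
  exact add_pow_char_pow x y k (p := p)

lemma frob_sub (hq : IsPrimePow q) (hF : Fintype.card F = q ^ 2) (x y : F) :
    (x - y) ^ q = x ^ q - y ^ q := by
  obtain ⟨p, k, hp, hk, hpk, hchar⟩ := char_exists hq hF
  haveI := Fact.mk hp
  haveI := hchar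
  rw [← hpk]
  exact sub_pow_char_pow x y k (p := p)

lemma pow_card2 (hF : Fintype.card F = q ^ 2) (x : F) : x ^ q ^ 2 = x := by
  rw [← hF]; exact FiniteField.pow_card x


lemma q2_sub_one (hq : IsPrimePow q) : q ^ 2 - 1 = (q + 1) * (q - 1) := by
  have h2 : 2 ≤ q := hq.two_le
  have := Nat.sq_sub_sq q 1
  simpa using this

lemma card_pow_eq_one (hq : IsPrimePow q) (hF : Fintype.card F = q ^ 2)
    {n : ℕ} (hn : 0 < n) (hdvd : n ∣ q ^ 2 - 1) :
    (Finset.univ.filter fun x : F => x ^ n = 1).card = n := by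
  classical
  have h2 : 2 ≤ q := hq.two_le
  have hq2 : 4 ≤ q ^ 2 := by nlinarith
  have hN : 0 < q ^ 2 - 1 := by omega
  refine le_antisymm ?_ ?_
  · have hsub : (Finset.univ.filter fun x : F => x ^ n = 1) ⊆
        (Polynomial.nthRoots n (1 : F)).toFinset := by
      intro x hx
      simp only [Finset.mem_filter] at hx
      rw [Multiset.mem_toFinset, Polynomial.mem_nthRoots hn]
      exact hx.2
    calc (Finset.univ.filter fun x : F => x ^ n = 1).card
        ≤ (Polynomial.nthRoots n (1 : F)).toFinset.card := Finset.card_le_card hsub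
      _ ≤ Multiset.card (Polynomial.nthRoots n (1 : F)) := Multiset.toFinset_card_le _
      _ ≤ n := Polynomial.card_nthRoots n 1
  · obtain ⟨g, hg⟩ := IsCyclic.exists_generator (α := Fˣ)
    have hog : orderOf g = q ^ 2 - 1 := by
      rw [orderOf_eq_card_of_forall_mem_zpowers hg, Nat.card_eq_fintype_card,
        Fintype.card_units, hF]
    set h : Fˣ := g ^ ((q ^ 2 - 1) / n) with hh
    have hoh : orderOf h = n := by
      rw [hh, orderOf_pow, hog,
        Nat.gcd_eq_right (Nat.div_dvd_of_dvd hdvd),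
        Nat.div_div_self hdvd hN.ne']
    have hinjf : Function.Injective fun i : Fin n => ((h ^ (i : ℕ) : Fˣ) : F) := by
      intro i j hij
      have h1 : h ^ (i : ℕ) = h ^ (j : ℕ) := Units.ext hij
      have := pow_injOn_Iio_orderOf (x := h)
        (by rw [hoh]; exact Set.mem_Iio.mpr i.isLt)
        (by rw [hoh]; exact Set.mem_Iio.mpr j.isLt) h1
      exact Fin.ext this
    have hsub : (Finset.univ.image fun i : Fin n => ((h ^ (i : ℕ) : Fˣ) : F)) ⊆
        (Finset.univ.filter fun x : F => x ^ n = 1) := by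
      intro x hx
      simp only [Finset.mem_image] at hx
      obtain ⟨i, _, rfl⟩ := hx
      simp only [Finset.mem_filter, Finset.mem_univ, true_and]
      have hn1 : h ^ n = 1 := by rw [← hoh]; exact pow_orderOf_eq_one h
      have h1 : (h ^ (i : ℕ)) ^ n = 1 := by
        rw [← pow_mul, mul_comm (i : ℕ) n, pow_mul, hn1, one_pow]
      rw [← Units.val_pow_eq_pow_val, h1, Units.val_one]
    calc n = (Finset.univ.image fun i : Fin n => ((h ^ (i : ℕ) : Fˣ) : F)).card := by
          rw [Finset.card_image_of_injective _ hinjf, Finset.card_univ, Fintype.card_fin]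
      _ ≤ _ := Finset.card_le_card hsub

lemma exists_pow_q_ne (hq : IsPrimePow q) (hF : Fintype.card F = q ^ 2) :
    ∃ x : F, x ^ q ≠ x := by
  classical
  have h2 : 2 ≤ q := hq.two_le
  have hq2 : 4 ≤ q ^ 2 := by nlinarith
  by_contra hall
  push_neg at hall
  have hcard := card_pow_eq_one (F := F) hq hF (n := q - 1)
    (by omega) (by rw [q2_sub_one hq]; exact dvd_mul_left _ _)
  have hsub : (Finset.univ.filter fun x : F => x ≠ 0) ⊆
      (Finset.univ.filter fun x : F => x ^ (q - 1) = 1) := by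
    intro x hx
    simp only [Finset.mem_filter, Finset.mem_univ, true_and] at hx ⊢
    have hxq := hall x
    have h3 : x ^ (q - 1) * x = 1 * x := by
      rw [one_mul, ← pow_succ]
      have h4 : q - 1 + 1 = q := by omega
      rw [h4, hxq]
    exact mul_right_cancel₀ hx h3
  have h1 : (Finset.univ.filter fun x : F => x ≠ 0).card = q ^ 2 - 1 := by
    rw [Finset.filter_ne', Finset.card_erase_of_mem (Finset.mem_univ 0),
      Finset.card_univ, hF]
  have h5 := Finset.card_le_card hsub
  rw [h1, hcard] at h5
  have hqq : q < q ^ 2 := by nlinarith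
  omega

lemma exists_pow_sub_one (hq : IsPrimePow q) (hF : Fintype.card F = q ^ 2)
    {c : F} (hc : c ^ (q + 1) = 1) : ∃ w : F, w ≠ 0 ∧ w ^ (q - 1) = c := by
  classical
  have h2 : 2 ≤ q := hq.two_le
  have hc0 : c ≠ 0 := by
    intro h; rw [h] at hc; simp [zero_pow] at hc
  obtain ⟨g, hg⟩ := IsCyclic.exists_generator (α := Fˣ)
  have hog : orderOf g = q ^ 2 - 1 := by
    rw [orderOf_eq_card_of_forall_mem_zpowers hg, Nat.card_eq_fintype_card,
      Fintype.card_units, hF]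
  obtain ⟨j, hj⟩ : (Units.mk0 c hc0) ∈ Submonoid.powers g :=
    mem_powers_iff_mem_zpowers.mpr (hg _)
  replace hj : g ^ j = Units.mk0 c hc0 := hj
  have hdvd : (q - 1) ∣ j := by
    have h1 : g ^ (j * (q + 1)) = 1 := by
      rw [pow_mul, hj]
      exact Units.ext (by rw [Units.val_pow_eq_pow_val]; simpa using hc)
    have h2' := orderOf_dvd_of_pow_eq_one h1
    rw [hog, q2_sub_one hq, mul_comm (q + 1) (q - 1)] at h2'
    exact (Nat.mul_dvd_mul_iff_right (by omega : 0 < q + 1)).mp h2'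
  refine ⟨((g ^ (j / (q - 1)) : Fˣ) : F), Units.ne_zero _, ?_⟩
  have h3 : (g ^ (j / (q - 1))) ^ (q - 1) = Units.mk0 c hc0 := by
    rw [← pow_mul, Nat.div_mul_cancel hdvd]; exact hj
  rw [← Units.val_pow_eq_pow_val, h3, Units.val_mk0]

lemma card_fiber (hq : IsPrimePow q) (hF : Fintype.card F = q ^ 2)
    {c : F} (hc : c ^ (q + 1) = 1) :
    (Finset.univ.filter fun x : F => x ≠ 0 ∧ x ^ (q - 1) = c).card = q - 1 := by
  classical
  have h2 : 2 ≤ q := hq.two_le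
  have hc0 : c ≠ 0 := by
    intro h; rw [h] at hc; simp [zero_pow] at hc
  obtain ⟨w, hw0, hwc⟩ := exists_pow_sub_one hq hF hc
  have himg : (Finset.univ.filter fun x : F => x ≠ 0 ∧ x ^ (q - 1) = c) =
      (Finset.univ.filter fun u : F => u ^ (q - 1) = 1).image (fun u => w * u) := by
    ext x
    simp only [Finset.mem_filter, Finset.mem_univ, true_and, Finset.mem_image]
    constructor
    · rintro ⟨hx0, hxc⟩
      refine ⟨w⁻¹ * x, ?_, ?_⟩
      · rw [mul_pow, hxc, inv_pow, hwc, inv_mul_cancel₀ hc0]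
      · field_simp
    · rintro ⟨u, hu, rfl⟩
      have hu0 : u ≠ 0 := by
        intro h; rw [h] at hu
        rw [zero_pow (by omega : q - 1 ≠ 0)] at hu
        exact zero_ne_one hu
      refine ⟨mul_ne_zero hw0 hu0, ?_⟩
      rw [mul_pow, hwc, hu, mul_one]
  rw [himg, Finset.card_image_of_injective _ (mul_right_injective₀ hw0),
    card_pow_eq_one hq hF (by omega : 0 < q - 1)
      (by rw [q2_sub_one hq]; exact dvd_mul_left _ _)]

lemma exists_root (hq : IsPrimePow q) (hF : Fintype.card F = q ^ 2)
    {c : F} (hc : c ^ (q + 1) = 1) : ∃ x : F, x ≠ 0 ∧ x ^ (q - 1) = c :=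
  exists_pow_sub_one hq hF hc

lemma neg_norm_one (hq : IsPrimePow q) (hF : Fintype.card F = q ^ 2)
    {c : F} (hc : c ^ (q + 1) = 1) : (-c) ^ (q + 1) = 1 := by
  obtain ⟨p, k, hp, hk, hpk, hchar⟩ := char_exists hq hF
  by_cases hp2 : p = 2
  · haveI : CharP F 2 := by rw [← hp2]; exact hchar
    rw [CharTwo.neg_eq]; exact hc
  · have hodd : Odd q := by
      rw [← hpk]
      exact (hp.odd_of_ne_two hp2).pow
    have heven : Even (q + 1) := by
      rcases hodd with ⟨r, hr⟩
      exact ⟨r + 1, by omega⟩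
    rw [heven.neg_pow]; exact hc

lemma exists_ker (hq : IsPrimePow q) (hF : Fintype.card F = q ^ 2)
    {c : F} (hc : c ^ (q + 1) = 1) : ∃ x : F, x ≠ 0 ∧ x ^ q = -c * x := by
  obtain ⟨x, hx0, hxc⟩ := exists_root hq hF (neg_norm_one hq hF hc)
  refine ⟨x, hx0, ?_⟩
  have h2 : 2 ≤ q := hq.two_le
  calc x ^ q = x ^ (q - 1) * x := by
        rw [← pow_succ]; congr 1; omega
    _ = -c * x := by rw [hxc]


lemma line_pow (hq : IsPrimePow q) (hF : Fintype.card F = q ^ 2)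
    {c : F} (hc : c ^ (q + 1) = 1) (x : F) :
    (x ^ q + c * x) ^ q = c ^ q * (x ^ q + c * x) := by
  have h1 : (x ^ q) ^ q = x := by
    rw [← pow_mul, ← pow_two]; exact pow_card2 hF x
  rw [frob_add hq hF, mul_pow, h1]
  linear_combination (-x) * hc

lemma bij_iff (hq : IsPrimePow q) (hF : Fintype.card F = q ^ 2)
    {δ : F} (hδ : δ ^ (q + 1) = 1) {m : ℕ} (hm : 1 < m)
    (hgcd : Nat.gcd m (q - 1) = 1)
    {α η : F} (hα : α ≠ 0) (hη : η ^ (q + 1) = 1) :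
    Function.Bijective (fun x : F => (x ^ q + δ * x) ^ m + α * (x ^ q + η * x)) ↔
      (η ≠ δ ∧ α ^ (q - 1) ≠ (δ ^ q) ^ m * η) := by
  have h2 : 2 ≤ q := hq.two_le
  have hq0 : q ≠ 0 := by omega
  have hm0 : m ≠ 0 := by omega
  have hδ0 : δ ≠ 0 := by intro h; rw [h] at hδ; simp [zero_pow] at hδ
  have hδqm : (δ ^ q) ^ m ≠ 0 := pow_ne_zero _ (pow_ne_zero _ hδ0)
  have hsline : ∀ x : F, (x ^ q + δ * x) ^ q = δ ^ q * (x ^ q + δ * x) :=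
    line_pow hq hF hδ
  have hrline : ∀ x : F, (x ^ q + η * x) ^ q = η ^ q * (x ^ q + η * x) :=
    line_pow hq hF hη
  have hηq1 : η ^ q * η = 1 := by rw [← pow_succ]; exact hη
  constructor
  · intro hbij
    have hne : η ≠ δ := by
      intro h
      rw [h] at hbij
      obtain ⟨x₀, hx00, hx0q⟩ := exists_ker hq hF hδ
      have e1 : x₀ ^ q + δ * x₀ = 0 := by rw [hx0q]; ring
      have h0 : (fun x : F => (x ^ q + δ * x) ^ m + α * (x ^ q + δ * x)) x₀ =
          (fun x : F => (x ^ q + δ * x) ^ m + α * (x ^ q + δ * x)) 0 := by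
        simp only [e1, zero_pow hm0, zero_pow hq0, mul_zero, add_zero, zero_add]
      exact hx00 (hbij.injective h0)
    refine ⟨hne, ?_⟩
    intro heq
    obtain ⟨x₁, hx10, hx1q⟩ := exists_ker hq hF hη
    obtain ⟨x₂, hx20, hx2q⟩ := exists_ker hq hF hδ
    have hy' : x₁ ^ q + δ * x₁ = (δ - η) * x₁ := by rw [hx1q]; ring
    have hy0 : (δ - η) * x₁ ≠ 0 :=
      mul_ne_zero (sub_ne_zero.mpr (Ne.symm hne)) hx10
    have hz' : x₂ ^ q + η * x₂ = (η - δ) * x₂ := by rw [hx2q]; ring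
    have hz0 : (η - δ) * x₂ ≠ 0 := mul_ne_zero (sub_ne_zero.mpr hne) hx20
    have hsx2 : x₂ ^ q + δ * x₂ = 0 := by rw [hx2q]; ring
    have hrx1 : x₁ ^ q + η * x₁ = 0 := by rw [hx1q]; ring
    have hαz : α * ((η - δ) * x₂) ≠ 0 := mul_ne_zero hα hz0
    set y : F := (δ - η) * x₁ with hydef
    set z : F := (η - δ) * x₂ with hzdef
    have hyq : y ^ q = δ ^ q * y := by rw [← hy']; exact hsline x₁
    have hzq : z ^ q = η ^ q * z := by rw [← hz']; exact hrline x₂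
    set t : F := y ^ m * (α * z)⁻¹ with htdef
    have ht0 : t ≠ 0 := mul_ne_zero (pow_ne_zero _ hy0) (inv_ne_zero hαz)
    have htq : t ^ q = t := by
      have e1 : (y ^ m) ^ q = (δ ^ q) ^ m * y ^ m := by
        rw [pow_right_comm, hyq, mul_pow]
      have e3 : α ^ q = α ^ (q - 1) * α := by
        rw [← pow_succ]; congr 1; omega
      have e2 : (α * z) ^ q = (δ ^ q) ^ m * (α * z) := by
        rw [mul_pow, hzq, e3, heq]
        have e4 : η * η ^ q = 1 := by rw [mul_comm]; exact hηq1
        linear_combination ((δ ^ q) ^ m * α * z) * e4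
      rw [htdef, mul_pow, inv_pow, e1, e2, mul_inv]
      field_simp
    have hc1 : (x₁ ^ q + δ * x₁) ^ m + α * (x₁ ^ q + η * x₁) = y ^ m := by
      rw [hy', hrx1, mul_zero, add_zero]
    have hx'1 : (t * x₂) ^ q + δ * (t * x₂) = 0 := by
      rw [mul_pow, htq]; linear_combination t * hsx2
    have hx'2 : (t * x₂) ^ q + η * (t * x₂) = t * z := by
      rw [mul_pow, htq]; linear_combination t * hz'
    have hc2 : ((t * x₂) ^ q + δ * (t * x₂)) ^ m + α * ((t * x₂) ^ q + η * (t * x₂))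
        = y ^ m := by
      rw [hx'1, hx'2, zero_pow hm0, zero_add, htdef]
      field_simp
    have hcc : x₁ = t * x₂ := by
      apply hbij.injective
      show (x₁ ^ q + δ * x₁) ^ m + α * (x₁ ^ q + η * x₁)
          = ((t * x₂) ^ q + δ * (t * x₂)) ^ m + α * ((t * x₂) ^ q + η * (t * x₂))
      rw [hc1, hc2]
    apply hy0
    rw [← hy', hcc, hx'1]
  · rintro ⟨hne, hcond⟩
    refine Finite.injective_iff_bijective.mp ?_
    intro x x' hxx'
    simp only [] at hxx'
    have hyq := hsline x
    have hy'q := hsline x'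
    have hzq := hrline x
    have hz'q := hrline x'
    have hw : (x ^ q + δ * x) ^ m - (x' ^ q + δ * x') ^ m
        = α * ((x' ^ q + η * x') - (x ^ q + η * x)) := by linear_combination hxx'
    have e3 : α ^ q = α ^ (q - 1) * α := by rw [← pow_succ]; congr 1; omega
    have hw1 : ((x ^ q + δ * x) ^ m - (x' ^ q + δ * x') ^ m) ^ q
        = (δ ^ q) ^ m * ((x ^ q + δ * x) ^ m - (x' ^ q + δ * x') ^ m) := by
      rw [frob_sub hq hF, pow_right_comm (x ^ q + δ * x),
        pow_right_comm (x' ^ q + δ * x'), hyq, hy'q, mul_pow, mul_pow]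
      ring
    have hw2 : (α * ((x' ^ q + η * x') - (x ^ q + η * x))) ^ q
        = α ^ (q - 1) * η ^ q * (α * ((x' ^ q + η * x') - (x ^ q + η * x))) := by
      rw [mul_pow, frob_sub hq hF, hz'q, hzq, e3]
      ring
    have hw0 : (x ^ q + δ * x) ^ m - (x' ^ q + δ * x') ^ m = 0 := by
      by_contra hw0
      apply hcond
      have e5 : (δ ^ q) ^ m * ((x ^ q + δ * x) ^ m - (x' ^ q + δ * x') ^ m)
          = α ^ (q - 1) * η ^ q * ((x ^ q + δ * x) ^ m - (x' ^ q + δ * x') ^ m) := by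
        rw [← hw1, hw, hw2, ← hw]
      have heq2 : (δ ^ q) ^ m = α ^ (q - 1) * η ^ q := mul_right_cancel₀ hw0 e5
      calc α ^ (q - 1) = α ^ (q - 1) * (η ^ q * η) := by rw [hηq1, mul_one]
        _ = (δ ^ q) ^ m * η := by rw [← mul_assoc, ← heq2]
    have hzz : (x ^ q + η * x) = (x' ^ q + η * x') := by
      have e6 : α * ((x' ^ q + η * x') - (x ^ q + η * x)) = 0 := by
        rw [← hw, hw0]
      have := (mul_eq_zero.mp e6).resolve_left hα
      have := sub_eq_zero.mp this
      exact this.symm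
    have hym : (x ^ q + δ * x) ^ m = (x' ^ q + δ * x') ^ m := sub_eq_zero.mp hw0
    have hyy : (x ^ q + δ * x) = (x' ^ q + δ * x') := by
      by_cases hy'0 : (x' ^ q + δ * x') = 0
      · rw [hy'0] at hym ⊢
        rw [zero_pow hm0] at hym
        exact pow_eq_zero_iff hm0 |>.mp hym
      · have hy0 : (x ^ q + δ * x) ≠ 0 := by
          intro h; apply hy'0
          rw [h, zero_pow hm0] at hym
          exact (pow_eq_zero_iff hm0).mp hym.symm
        have hu : ((x ^ q + δ * x) * (x' ^ q + δ * x')⁻¹) ^ m = 1 := by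
          rw [mul_pow, inv_pow, hym, mul_inv_cancel₀ (pow_ne_zero _ hy'0)]
        have hue : ((x ^ q + δ * x) * (x' ^ q + δ * x')⁻¹) ^ q
            = (x ^ q + δ * x) * (x' ^ q + δ * x')⁻¹ := by
          rw [mul_pow, inv_pow, hyq, hy'q, mul_inv]
          have hδq0 : δ ^ q ≠ 0 := pow_ne_zero _ hδ0
          field_simp
        have huq : ((x ^ q + δ * x) * (x' ^ q + δ * x')⁻¹) ^ (q - 1) = 1 := by
          have hu0 : (x ^ q + δ * x) * (x' ^ q + δ * x')⁻¹ ≠ 0 :=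
            mul_ne_zero hy0 (inv_ne_zero hy'0)
          have h3 : ((x ^ q + δ * x) * (x' ^ q + δ * x')⁻¹) ^ (q - 1)
              * ((x ^ q + δ * x) * (x' ^ q + δ * x')⁻¹)
              = 1 * ((x ^ q + δ * x) * (x' ^ q + δ * x')⁻¹) := by
            rw [one_mul, ← pow_succ]
            have h4 : q - 1 + 1 = q := by omega
            rw [h4, hue]
          exact mul_right_cancel₀ hu0 h3
        have hone := pow_gcd_eq_one.mpr ⟨hu, huq⟩
        rw [hgcd, pow_one] at hone
        exact (mul_inv_eq_one₀ hy'0).mp hone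
    have hfin : (δ - η) * x = (δ - η) * x' := by linear_combination hyy - hzz
    exact mul_left_cancel₀ (sub_ne_zero.mpr (Ne.symm hne)) hfin

end Stmt6

open Stmt6

/-- Let `δ^{q+1} = 1`, `s(x) = x^q + δx`, and `m > 1` with
`gcd(m, q-1) = 1`. The number of rank 1 linearized polynomials `L` of `F_{q^2}` such
that `s(x)^m + L(x)` is a bijection of `F_{q^2}` is exactly `q^2(q-1)`. -/
theorem stmt_6 (q : ℕ) (hq : IsPrimePow q)
    (F : Type) [Field F] [Fintype F] (hF : Fintype.card F = q ^ 2)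
    (δ : F) (hδ : δ ^ (q + 1) = 1) (m : ℕ) (hm : 1 < m)
    (hgcd : Nat.gcd m (q - 1) = 1) :
    Set.ncard {L : F → F | ∃ α β : F,
        α ^ (q + 1) = β ^ (q + 1) ∧ (α, β) ≠ (0, 0) ∧
        (L = fun x : F => α * x ^ q + β * x) ∧
        Function.Bijective (fun x : F => (x ^ q + δ * x) ^ m + L x)}
      = q ^ 2 * (q - 1) := by
  classical
  have h2 : 2 ≤ q := hq.two_le
  have hq0 : q ≠ 0 := by omega
  have hm0 : m ≠ 0 := by omega
  set T : Finset (F × F) := Finset.univ.filter (fun p : F × F =>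
      p.2 ^ (q + 1) = 1 ∧ p.2 ≠ δ ∧ p.1 ≠ 0 ∧
      p.1 ^ (q - 1) ≠ (δ ^ q) ^ m * p.2) with hT
  have hSeq : {L : F → F | ∃ α β : F,
        α ^ (q + 1) = β ^ (q + 1) ∧ (α, β) ≠ (0, 0) ∧
        (L = fun x : F => α * x ^ q + β * x) ∧
        Function.Bijective (fun x : F => (x ^ q + δ * x) ^ m + L x)}
      = (fun p : F × F => fun x : F => p.1 * x ^ q + p.1 * p.2 * x) '' (T : Set (F × F)) := by
    ext L
    simp only [Set.mem_setOf_eq, Set.mem_image, Finset.mem_coe, hT, Finset.mem_filter,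
      Finset.mem_univ, true_and]
    constructor
    · rintro ⟨α, β, h1, h2', rfl, hbij⟩
      have hα : α ≠ 0 := by
        rintro rfl
        rw [zero_pow (by omega : q + 1 ≠ 0)] at h1
        have hβ : β = 0 := pow_eq_zero_iff (by omega : q + 1 ≠ 0) |>.mp h1.symm
        exact h2' (by rw [hβ])
      have hη : (β / α) ^ (q + 1) = 1 := by
        rw [div_pow, ← h1, div_self (pow_ne_zero _ hα)]
      have hβ : α * (β / α) = β := by field_simp
      have hbij' : Function.Bijective
          (fun x : F => (x ^ q + δ * x) ^ m + α * (x ^ q + (β / α) * x)) := by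
        have hfe : (fun x : F => (x ^ q + δ * x) ^ m + α * (x ^ q + (β / α) * x))
            = (fun x : F => (x ^ q + δ * x) ^ m + (α * x ^ q + β * x)) := by
          funext x
          linear_combination x * hβ
        rw [hfe]
        exact hbij
      obtain ⟨hne, hcond⟩ := (bij_iff hq hF hδ hm hgcd hα hη).mp hbij'
      refine ⟨(α, β / α), ⟨hη, hne, hα, hcond⟩, ?_⟩
      funext x
      show α * x ^ q + α * (β / α) * x = α * x ^ q + β * x
      rw [hβ]
    · rintro ⟨⟨α, η⟩, ⟨hη, hne, hα, hcond⟩, rfl⟩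
      refine ⟨α, α * η, ?_, ?_, rfl, ?_⟩
      · rw [mul_pow, hη, mul_one]
      · simp [Prod.ext_iff, hα]
      · have hb := (bij_iff hq hF hδ hm hgcd hα hη).mpr ⟨hne, hcond⟩
        have hfe : (fun x : F => (x ^ q + δ * x) ^ m + (α * x ^ q + α * η * x))
            = (fun x : F => (x ^ q + δ * x) ^ m + α * (x ^ q + η * x)) := by
          funext x; ring
        show Function.Bijective
          (fun x : F => (x ^ q + δ * x) ^ m + (α * x ^ q + α * η * x))
        rw [hfe]
        exact hb
  have hinj : Set.InjOn (fun p : F × F => fun x : F => p.1 * x ^ q + p.1 * p.2 * x)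
      (T : Set (F × F)) := by
    obtain ⟨x₀, hx₀⟩ := exists_pow_q_ne hq hF
    rintro ⟨α, η⟩ hp ⟨α', η'⟩ hp' hG
    rw [Finset.mem_coe, hT, Finset.mem_filter] at hp hp'
    obtain ⟨-, -, -, hα, -⟩ := hp
    obtain ⟨-, -, -, hα', -⟩ := hp'
    have hall : ∀ x : F, α * x ^ q + α * η * x = α' * x ^ q + α' * η' * x :=
      fun x => congrFun hG x
    have h1 := hall 1
    simp only [one_pow, mul_one] at h1
    have hαα : α = α' := by
      by_contra hne
      have hxq : (α - α') * x₀ ^ q = (α - α') * x₀ := by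
        have h2' := hall x₀
        linear_combination h2' - x₀ * h1
      exact hx₀ (mul_left_cancel₀ (sub_ne_zero.mpr hne) hxq)
    have hηη : η = η' := by
      rw [hαα] at h1
      have h3 : α' * η = α' * η' := by linear_combination h1
      exact mul_left_cancel₀ hα' h3
    simp [Prod.ext_iff, hαα, hηη]
  rw [hSeq, Set.ncard_image_of_injOn hinj, Set.ncard_coe_finset]
  -- now count T
  have hNcard : (Finset.univ.filter fun η : F => η ^ (q + 1) = 1).card = q + 1 :=
    card_pow_eq_one hq hF (by omega)
      (by rw [q2_sub_one hq]; exact dvd_mul_right _ _)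
  have hδmem : δ ∈ (Finset.univ.filter fun η : F => η ^ (q + 1) = 1) := by
    simp [hδ]
  have hNf : (Finset.univ.filter fun η : F => η ^ (q + 1) = 1 ∧ η ≠ δ)
      = (Finset.univ.filter fun η : F => η ^ (q + 1) = 1).erase δ := by
    ext x
    simp only [Finset.mem_filter, Finset.mem_univ, true_and, Finset.mem_erase]
    tauto
  have hNfcard : (Finset.univ.filter fun η : F => η ^ (q + 1) = 1 ∧ η ≠ δ).card = q := by
    rw [hNf, Finset.card_erase_of_mem hδmem, hNcard]
    omega
  have hAcard : ∀ η : F, η ^ (q + 1) = 1 →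
      (Finset.univ.filter fun a : F => a ≠ 0 ∧ a ^ (q - 1) ≠ (δ ^ q) ^ m * η).card
        = q ^ 2 - q := by
    intro η hη
    have hc : ((δ ^ q) ^ m * η) ^ (q + 1) = 1 := by
      rw [mul_pow, hη, mul_one, ← pow_mul, ← pow_mul]
      rw [show q * (m * (q + 1)) = (q + 1) * (q * m) by ring, pow_mul, hδ, one_pow]
    have hBcard := card_fiber hq hF hc
    have hAB : (Finset.univ.filter fun a : F => a ≠ 0 ∧ a ^ (q - 1) ≠ (δ ^ q) ^ m * η)
        = (Finset.univ.filter fun a : F => a ≠ 0)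
          \ (Finset.univ.filter fun a : F => a ≠ 0 ∧ a ^ (q - 1) = (δ ^ q) ^ m * η) := by
      ext a
      simp only [Finset.mem_filter, Finset.mem_sdiff, Finset.mem_univ, true_and]
      tauto
    have hsub : (Finset.univ.filter fun a : F => a ≠ 0 ∧ a ^ (q - 1) = (δ ^ q) ^ m * η)
        ⊆ (Finset.univ.filter fun a : F => a ≠ 0) := by
      intro a ha
      simp only [Finset.mem_filter, Finset.mem_univ, true_and] at ha ⊢
      exact ha.1
    have h0card : (Finset.univ.filter fun a : F => a ≠ 0).card = q ^ 2 - 1 := by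
      rw [Finset.filter_ne', Finset.card_erase_of_mem (Finset.mem_univ 0),
        Finset.card_univ, hF]
    rw [hAB, Finset.card_sdiff_of_subset hsub, h0card, hBcard]
    have h4 : q ≤ q ^ 2 := by nlinarith
    generalize q ^ 2 = Q at h4 ⊢
    omega
  have hTmem : ∀ p : F × F, p ∈ T →
      p.2 ∈ (Finset.univ.filter fun η : F => η ^ (q + 1) = 1 ∧ η ≠ δ) := by
    intro p hp
    rw [hT, Finset.mem_filter] at hp
    simp only [Finset.mem_filter, Finset.mem_univ, true_and]
    exact ⟨hp.2.1, hp.2.2.1⟩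
  rw [Finset.card_eq_sum_card_fiberwise hTmem]
  have hfib : ∀ η ∈ (Finset.univ.filter fun η : F => η ^ (q + 1) = 1 ∧ η ≠ δ),
      (T.filter fun p => p.2 = η).card = q ^ 2 - q := by
    intro η hηmem
    simp only [Finset.mem_filter, Finset.mem_univ, true_and] at hηmem
    rw [← hAcard η hηmem.1]
    apply Finset.card_bij (fun p _ => p.1)
    · intro p hp
      rw [Finset.mem_filter, hT, Finset.mem_filter] at hp
      obtain ⟨⟨-, -, -, h5, h6⟩, h7⟩ := hp
      simp only [Finset.mem_filter, Finset.mem_univ, true_and]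
      rw [← h7]
      exact ⟨h5, h6⟩
    · intro p hp p' hp' hpp
      rw [Finset.mem_filter] at hp hp'
      have := hp.2
      have := hp'.2
      ext
      · exact hpp
      · rw [hp.2, hp'.2]
    · intro a ha
      simp only [Finset.mem_filter, Finset.mem_univ, true_and] at ha
      refine ⟨(a, η), ?_, rfl⟩
      rw [Finset.mem_filter, hT, Finset.mem_filter]
      exact ⟨⟨Finset.mem_univ _, hηmem.1, hηmem.2, ha.1, ha.2⟩, rfl⟩
  rw [Finset.sum_congr rfl hfib, Finset.sum_const, hNfcard, smul_eq_mul]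
  rw [pow_two, Nat.mul_sub, Nat.mul_sub, mul_one]
  congr 1
  ring
end

section
/- Let q be a prime power, δ ∈ F_{q^2} with δ^{q+1} = 1, s(x) = x^q + δx, and m > 1 an integer. Suppose γ ∈ F_q is nonzero and x ↦ x^m + γx is a bijection of F_q. Then there exists a rank 2 linearized polynomial L of F_{q^2} that does NOT map the kernel of s into the one-dimensional F_q-subspace containing the image of x ↦ s(x)^m, such that f(x) = s(x)^m + L(x) is a bijection of F_{q^2}. Moreover, if there are k distinct nonzero γ ∈ F_q for which x ↦ x^m + γx is a bijection of F_q, then there are at least k·q^2·(q-1) distinct rank 2 linearized polynomials L not mapping ker s into that subspace such that s(x)^m + L(x) is a bijection of F_{q^2}. -/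
open Finset

lemma fac_aux (q : ℕ) (hq : 1 ≤ q) : (q + 1) * (q - 1) = q ^ 2 - 1 := by
  obtain ⟨d, rfl⟩ : ∃ d, q = d + 1 := ⟨q - 1, by omega⟩
  have h1 : (d + 1) ^ 2 = d * d + 2 * d + 1 := by ring
  have h2 : (d + 1 + 1) * (d + 1 - 1) = d * d + 2 * d := by
    simp only [Nat.add_sub_cancel]; ring
  omega

lemma char_facts (q : ℕ) (hq : IsPrimePow q) (F : Type) [Field F] [Fintype F]
    (hF : Fintype.card F = q ^ 2) :
    (∀ x y : F, (x + y) ^ q = x ^ q + y ^ q) ∧ ((-1 : F) ^ q = -1) := by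
  obtain ⟨p, n, hp, hn, rfl⟩ := hq
  have hp' : p.Prime := Nat.prime_iff.mpr hp
  obtain ⟨a, hpa, hcard⟩ := FiniteField.card F (ringChar F)
  have hdvd : ringChar F ∣ p ^ (n * 2) := by
    have h1 : ringChar F ∣ Fintype.card F := by
      rw [hcard]
      exact dvd_pow_self _ (by positivity)
    rwa [hF, ← pow_mul] at h1
  have hrp : ringChar F = p := by
    have h1 : ringChar F ∣ p := hpa.dvd_of_dvd_pow hdvd
    exact (Nat.prime_dvd_prime_iff_eq hpa hp').mp h1
  haveI : CharP F p := hrp ▸ ringChar.charP F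
  haveI := Fact.mk hp'
  constructor
  · intro x y
    exact add_pow_char_pow x y p n
  · by_cases h2 : p = 2
    · haveI : CharP F 2 := h2 ▸ ‹CharP F p›
      have hne : (-1 : F) = 1 := CharTwo.neg_eq 1
      rw [hne, one_pow]
    · have hodd : Odd (p ^ n) := (hp'.odd_of_ne_two h2).pow
      exact hodd.neg_one_pow

lemma lemA (q : ℕ) (hq2 : 2 ≤ q) (F : Type) [Field F] [Fintype F]
    (hF : Fintype.card F = q ^ 2) :
    (∀ y : F, y ^ (q + 1) = 1 → ∃ x : F, x ≠ 0 ∧ x ^ q = y * x) ∧ (∃ z : F, z ^ q ≠ z) := by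
  classical
  obtain ⟨g, hg⟩ := IsCyclic.exists_generator (α := Fˣ)
  have hcard : Nat.card Fˣ = q ^ 2 - 1 := by
    rw [Nat.card_eq_fintype_card, Fintype.card_units, hF]
  have horder : orderOf g = q ^ 2 - 1 := by
    rw [orderOf_eq_card_of_forall_mem_zpowers hg, hcard]
  have hfac : (q + 1) * (q - 1) = q ^ 2 - 1 := fac_aux q (by omega)
  constructor
  · intro y hy
    have hy0 : y ≠ 0 := by
      intro h
      rw [h, zero_pow (by omega : q + 1 ≠ 0)] at hy
      exact zero_ne_one hy
    set yu : Fˣ := Units.mk0 y hy0 with hyu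
    obtain ⟨k, hk⟩ : ∃ k : ℕ, g ^ k = yu := by
      have := hg yu
      rwa [← mem_powers_iff_mem_zpowers, Submonoid.mem_powers_iff] at this
    have hyu1 : yu ^ (q + 1) = 1 := by
      ext
      push_cast
      exact hy
    have hyk : g ^ (k * (q + 1)) = 1 := by rw [pow_mul, hk, hyu1]
    have hdvd : (q ^ 2 - 1) ∣ k * (q + 1) := horder ▸ orderOf_dvd_of_pow_eq_one hyk
    have hdvd2 : (q - 1) ∣ k := by
      have h1 : (q + 1) * (q - 1) ∣ (q + 1) * k := by
        rw [hfac, mul_comm (q+1) k]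
        exact hdvd
      exact (Nat.mul_dvd_mul_iff_left (by omega : 0 < q + 1)).mp h1
    obtain ⟨j, hj⟩ := hdvd2
    refine ⟨((g ^ j : Fˣ) : F), Units.ne_zero _, ?_⟩
    have hx1 : ((g ^ j : Fˣ) : F) ^ (q - 1) = y := by
      rw [← Units.val_pow_eq_pow_val, ← pow_mul]
      rw [show j * (q - 1) = k by rw [hj, Nat.mul_comm], hk, hyu]
      rfl
    calc ((g ^ j : Fˣ) : F) ^ q = ((g ^ j : Fˣ) : F) ^ (q - 1 + 1) := by
          rw [show q - 1 + 1 = q by omega]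
      _ = ((g ^ j : Fˣ) : F) ^ (q - 1) * ((g ^ j : Fˣ) : F) := pow_succ _ _
      _ = y * ((g ^ j : Fˣ) : F) := by rw [hx1]
  · refine ⟨(g : F), fun h => ?_⟩
    have hg0 : (g : F) ≠ 0 := Units.ne_zero _
    have h1 : (g : F) ^ (q - 1) = 1 := by
      have h2 : (g : F) ^ (q - 1) * (g : F) = 1 * (g : F) := by
        rw [← pow_succ, show q - 1 + 1 = q by omega, h, one_mul]
      exact mul_right_cancel₀ hg0 h2
    have h2 : (g : Fˣ) ^ (q - 1) = 1 := by
      ext; push_cast; simpa using h1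
    have h3 : orderOf g ∣ q - 1 := orderOf_dvd_of_pow_eq_one h2
    rw [horder] at h3
    have h4 : q ^ 2 - 1 ≤ q - 1 := Nat.le_of_dvd (by omega) h3
    have h5 : 2 * q ≤ q * q := Nat.mul_le_mul_right q hq2
    have h6 : q ^ 2 = q * q := sq q
    omega

lemma card_S (q : ℕ) (hq2 : 2 ≤ q) (F : Type) [Field F] [Fintype F]
    (hF : Fintype.card F = q ^ 2) (S : Finset F) (hS : ∀ x, x ∈ S ↔ x ^ q = x) :
    S.card = q := by
  classical
  obtain ⟨-, z, hz⟩ := lemA q hq2 F hF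
  have hp0 : (Polynomial.X ^ q - Polynomial.X : Polynomial F) ≠ 0 := by
    intro h
    apply hz
    have := congrArg (Polynomial.eval z) h
    simp only [Polynomial.eval_sub, Polynomial.eval_pow, Polynomial.eval_X,
      Polynomial.eval_zero] at this
    linear_combination this
  have hupper : S.card ≤ q := by
    have h1 : S ⊆ (Polynomial.X ^ q - Polynomial.X : Polynomial F).roots.toFinset := by
      intro x hx
      rw [Multiset.mem_toFinset, Polynomial.mem_roots hp0]
      simp only [Polynomial.IsRoot.def, Polynomial.eval_sub, Polynomial.eval_pow,
        Polynomial.eval_X]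
      rw [(hS x).mp hx, sub_self]
    calc S.card ≤ _ := Finset.card_le_card h1
      _ ≤ Multiset.card (Polynomial.X ^ q - Polynomial.X : Polynomial F).roots :=
          Multiset.toFinset_card_le _
      _ ≤ (Polynomial.X ^ q - Polynomial.X : Polynomial F).natDegree := Polynomial.card_roots' _
      _ ≤ q := by
          refine le_trans (Polynomial.natDegree_sub_le _ _) ?_
          simp [Polynomial.natDegree_X_pow, Polynomial.natDegree_X]
          omega
  obtain ⟨g, hg⟩ := IsCyclic.exists_generator (α := Fˣ)
  have hcard : Nat.card Fˣ = q ^ 2 - 1 := by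
    rw [Nat.card_eq_fintype_card, Fintype.card_units, hF]
  have horder : orderOf g = q ^ 2 - 1 := by
    rw [orderOf_eq_card_of_forall_mem_zpowers hg, hcard]
  have hfac : (q + 1) * (q - 1) = q ^ 2 - 1 := fac_aux q (by omega)
  have hlower : q ≤ S.card := by
    have hmaps : ∀ j : ℕ, ((g ^ ((q + 1) * j) : Fˣ) : F) ∈ S := by
      intro j
      rw [hS]
      have h1 : (g ^ ((q + 1) * j)) ^ (q - 1) = 1 := by
        rw [← pow_mul]
        apply orderOf_dvd_iff_pow_eq_one.mp
        rw [horder]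
        exact ⟨j, by rw [← hfac]; ring⟩
      have h2 : ((g ^ ((q + 1) * j) : Fˣ) : F) ^ (q - 1) = 1 := by
        rw [← Units.val_pow_eq_pow_val, h1, Units.val_one]
      calc ((g ^ ((q + 1) * j) : Fˣ) : F) ^ q
          = ((g ^ ((q + 1) * j) : Fˣ) : F) ^ (q - 1) * _ := by
            rw [← pow_succ, show q - 1 + 1 = q by omega]
        _ = _ := by rw [h2, one_mul]
    set T : Finset F := (Finset.range (q - 1)).image (fun j => ((g ^ ((q + 1) * j) : Fˣ) : F))
      with hT
    have hTcard : T.card = q - 1 := by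
      rw [hT, Finset.card_image_of_injOn, Finset.card_range]
      intro j hj j' hj' hjj
      simp only [Finset.coe_range, Set.mem_Iio] at hj hj'
      have h1 : (g ^ ((q + 1) * j) : Fˣ) = g ^ ((q + 1) * j') := Units.ext hjj
      have h2 : (q + 1) * j = (q + 1) * j' := by
        apply pow_injOn_Iio_orderOf _ _ h1
        · simp only [Set.mem_Iio, horder, ← hfac]
          exact mul_lt_mul_of_pos_left hj (by omega)
        · simp only [Set.mem_Iio, horder, ← hfac]
          exact mul_lt_mul_of_pos_left hj' (by omega)
      exact Nat.eq_of_mul_eq_mul_left (by omega) h2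
    have h0T : (0 : F) ∉ T := by
      rw [hT]
      simp only [Finset.mem_image, not_exists, not_and]
      intro j _
      exact fun h => Units.ne_zero _ h
    have hsub : insert (0 : F) T ⊆ S := by
      intro x hx
      rcases Finset.mem_insert.mp hx with h | h
      · rw [h, hS]
        exact zero_pow (by omega)
      · rw [hT] at h
        obtain ⟨j, -, rfl⟩ := Finset.mem_image.mp h
        exact hmaps j
    have h1 : (insert (0 : F) T).card = q := by
      rw [Finset.card_insert_of_notMem h0T, hTcard]
      omega
    rw [← h1]
    exact Finset.card_le_card hsub
  omega

lemma indep_lem (q : ℕ) (F : Type) [Field F] (hneg : (-1 : F) ^ q = -1)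
    (wm e : F) (hwm : wm ≠ 0) (he : ∀ c : F, c ^ q = c → e ≠ c * wm) :
    ∀ a b : F, a ^ q = a → b ^ q = b → a * wm + b * e = 0 → a = 0 ∧ b = 0 := by
  intro a b ha hb h
  by_cases hb0 : b = 0
  · subst hb0
    refine ⟨?_, rfl⟩
    have h1 : a * wm = 0 := by linear_combination h
    exact (mul_eq_zero.mp h1).resolve_right hwm
  · exfalso
    refine he (-(a / b)) ?_ ?_
    · rw [neg_pow, hneg, div_pow, ha, hb]
      ring
    · field_simp
      linear_combination h

lemma rank_two (q : ℕ) (F : Type) [Field F] (hq1 : 1 ≤ q)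
    (hneg : (-1 : F) ^ q = -1)
    (hA : ∀ y : F, y ^ (q + 1) = 1 → ∃ x : F, x ≠ 0 ∧ x ^ q = y * x)
    (α β : F) (hinj : ∀ x : F, α * x ^ q + β * x = 0 → x = 0) :
    β ^ (q + 1) ≠ α ^ (q + 1) := by
  intro h
  by_cases hα : α = 0
  · subst hα
    have hβ : β = 0 := by
      have h1 : β ^ (q + 1) = 0 := by
        rw [h, zero_pow (by omega : q + 1 ≠ 0)]
      exact pow_eq_zero_iff (by omega : q + 1 ≠ 0) |>.mp h1
    have := hinj 1 (by rw [hβ]; ring)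
    exact one_ne_zero this
  · have hy : (-(β / α)) ^ (q + 1) = 1 := by
      have hne : α ^ (q + 1) ≠ 0 := pow_ne_zero _ hα
      rw [neg_pow, div_pow, h]
      rw [pow_succ, hneg]
      field_simp
    obtain ⟨x, hx0, hxq⟩ := hA _ hy
    apply hx0
    apply hinj
    rw [hxq]
    field_simp
    ring

lemma key (q : ℕ) (F : Type) [Field F] [Fintype F] (hq1 : 1 ≤ q)
    (hfrob : ∀ x y : F, (x + y) ^ q = x ^ q + y ^ q)
    (hpow : ∀ x : F, (x ^ q) ^ q = x)
    (hneg : (-1 : F) ^ q = -1)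
    (hA : ∀ y : F, y ^ (q + 1) = 1 → ∃ x : F, x ≠ 0 ∧ x ^ q = y * x)
    (δ : F) (hδ : δ ^ (q + 1) = 1) (m : ℕ)
    (u v : F) (hu0 : u ≠ 0) (hu : u ^ q + δ * u = 0) (hv : v ^ q + δ * v ≠ 0)
    (γ' e r : F) (hγq : γ' ^ q = γ') (hγ0 : γ' ≠ 0)
    (hperm : Set.BijOn (fun x : F => x ^ m + γ' * x) {x : F | x ^ q = x} {x : F | x ^ q = x})
    (he : ∀ c : F, c ^ q = c → e ≠ c * (v ^ q + δ * v) ^ m) (hr : r ^ q = r)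
    (α β : F)
    (hα : α = ((γ' * (v ^ q + δ * v) ^ m + r * e) * u - e * v) / (u * (v ^ q + δ * v)))
    (hβ : β = ((γ' * (v ^ q + δ * v) ^ m + r * e) * δ * u + e * v ^ q) / (u * (v ^ q + δ * v))) :
    β ^ (q + 1) ≠ α ^ (q + 1) ∧
      ¬(∀ u' v' : F, u' ^ q + δ * u' = 0 → v' ^ q + δ * v' ≠ 0 →
          ∃ c : F, c ^ q = c ∧ α * u' ^ q + β * u' = c * (v' ^ q + δ * v') ^ m) ∧
      Function.Bijective (fun x : F => (x ^ q + δ * x) ^ m + (α * x ^ q + β * x)) := by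
  have hδ0 : δ ≠ 0 := by
    intro h
    rw [h, zero_pow (by omega : q + 1 ≠ 0)] at hδ
    exact zero_ne_one hδ
  have hδq : δ ^ q * δ = 1 := by rw [← pow_succ]; exact hδ
  have hδqne : (δ : F) ^ q ≠ 0 := pow_ne_zero _ hδ0
  have hsq : ∀ x : F, (x ^ q + δ * x) ^ q = δ ^ q * (x ^ q + δ * x) := by
    intro x
    rw [hfrob, mul_pow, hpow]
    linear_combination (-x) * hδq
  obtain ⟨w, hw⟩ : ∃ w : F, w = v ^ q + δ * v := ⟨_, rfl⟩
  rw [← hw] at hα hβ he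
  have hw0 : w ≠ 0 := hw ▸ hv
  have hwm0 : w ^ m ≠ 0 := pow_ne_zero _ hw0
  have hwq : w ^ q = δ ^ q * w := by rw [hw]; exact hsq v
  have huq : u ^ q = -(δ * u) := by linear_combination hu
  have hfrobsub : ∀ a b : F, (a - b) ^ q = a ^ q - b ^ q := by
    intro a b
    rw [sub_eq_add_neg, hfrob, neg_pow, hneg]
    ring
  -- sigma and tau facts
  have hσq : ∀ x : F, ((x ^ q + δ * x) / w) ^ q = (x ^ q + δ * x) / w := by
    intro x
    rw [div_pow, hsq x, hwq, mul_div_mul_left _ _ hδqne]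
  have hτq : ∀ x : F,
      ((x - ((x ^ q + δ * x) / w) * v) / u) ^ q = (x - ((x ^ q + δ * x) / w) * v) / u := by
    intro x
    have hsx : ((x ^ q + δ * x) / w) * w = x ^ q + δ * x := div_mul_cancel₀ _ hw0
    rw [div_pow, hfrobsub, mul_pow, hσq, huq]
    rw [div_eq_div_iff (by simpa using ⟨hδ0, hu0⟩) hu0]
    linear_combination (-u) * hsx + (((x ^ q + δ * x) / w) * u) * hw
  have hστ : ∀ x : F, x = ((x ^ q + δ * x) / w) * v + ((x - ((x ^ q + δ * x) / w) * v) / u) * u := by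
    intro x
    rw [div_mul_cancel₀ _ hu0]
    ring
  have hLform : ∀ x : F, α * x ^ q + β * x =
      ((x ^ q + δ * x) / w) * (γ' * w ^ m + r * e) + ((x - ((x ^ q + δ * x) / w) * v) / u) * e := by
    intro x
    rw [hα, hβ, hw]
    field_simp
    ring
  have hindep := indep_lem q F hneg (w ^ m) e hwm0 he
  have hLinj : ∀ x : F, α * x ^ q + β * x = 0 → x = 0 := by
    intro x hx
    rw [hLform x] at hx
    have h1 : (((x ^ q + δ * x) / w) * γ') * w ^ m +
        (((x ^ q + δ * x) / w) * r + (x - ((x ^ q + δ * x) / w) * v) / u) * e = 0 := by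
      linear_combination hx
    have h2 := hindep _ _
      (by rw [mul_pow, hσq, hγq])
      (by rw [hfrob, mul_pow, hσq, hτq, hr]) h1
    have hs0 : (x ^ q + δ * x) / w = 0 := by
      rcases mul_eq_zero.mp h2.1 with h | h
      · exact h
      · exact absurd h hγ0
    have h3 := h2.2
    rw [hs0] at h3
    simpa [hu0, sub_eq_zero] using h3
  refine ⟨rank_two q F hq1 hneg hA α β hLinj, ?_, ?_⟩
  · intro hcon
    obtain ⟨c, hc, hce⟩ := hcon u v hu hv
    have hval : α * u ^ q + β * u = e := by
      rw [hLform u]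
      have hσu : (u ^ q + δ * u) / w = 0 := by rw [hu, zero_div]
      rw [hσu]
      field_simp
      ring
    rw [hval, ← hw] at hce
    exact he c hc hce
  · have hinj : Function.Injective
        (fun x : F => (x ^ q + δ * x) ^ m + (α * x ^ q + β * x)) := by
      intro x y hxy
      simp only at hxy
      have hpm : ∀ z : F, (z ^ q + δ * z) ^ m = ((z ^ q + δ * z) / w) ^ m * w ^ m := by
        intro z
        rw [← mul_pow, div_mul_cancel₀ _ hw0]
      rw [hpm x, hpm y, hLform x, hLform y] at hxy
      have hστx := hστ x
      have hστy := hστ y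
      have haS := hσq x
      have hbS := hσq y
      have hsS := hτq x
      have htS := hτq y
      set a := (x ^ q + δ * x) / w with hadef
      set b := (y ^ q + δ * y) / w with hbdef
      set s := (x - a * v) / u with hsdef
      set t := (y - b * v) / u with htdef
      have h1 : (a ^ m + γ' * a - (b ^ m + γ' * b)) * w ^ m + ((a - b) * r + (s - t)) * e = 0 := by
        linear_combination hxy
      have hc1 : (a ^ m + γ' * a - (b ^ m + γ' * b)) ^ q = a ^ m + γ' * a - (b ^ m + γ' * b) := by
        rw [hfrobsub, hfrob, hfrob, mul_pow, mul_pow, hγq, haS, hbS,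
          pow_right_comm a m q, pow_right_comm b m q, haS, hbS]
      have hc2 : ((a - b) * r + (s - t)) ^ q = (a - b) * r + (s - t) := by
        rw [hfrob, mul_pow, hfrobsub, hfrobsub, haS, hbS, hsS, htS, hr]
      obtain ⟨hA0, hB0⟩ := hindep _ _ hc1 hc2 h1
      have hab : a = b := by
        have hmem1 : a ∈ {x : F | x ^ q = x} := haS
        have hmem2 : b ∈ {x : F | x ^ q = x} := hbS
        apply hperm.injOn hmem1 hmem2
        show a ^ m + γ' * a = b ^ m + γ' * b
        linear_combination hA0
      have hst : s = t := by
        rw [hab] at hB0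
        have h3 : s - t = 0 := by linear_combination hB0
        linear_combination h3
      rw [hab, hst] at hστx
      rw [hστx, ← hστy]
    exact Finite.injective_iff_bijective.mp hinj



/-- Let `δ^{q+1} = 1`, `s(x) = x^q + δx`, `m > 1`. If `γ ∈ F_q` is nonzero
and `x ↦ x^m + γx` is a bijection of `F_q`, then there is a rank 2 linearized polynomial
`L` that does NOT map `ker s` into the one-dimensional `F_q`-subspace containing the
image of `x ↦ s(x)^m`, with `s(x)^m + L(x)` a bijection of `F_{q^2}`. Moreover, if there
are `k` distinct such nonzero `γ`, then at least `k·q^2·(q-1)` such rank 2 `L` exist. -/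
theorem stmt_7 (q : ℕ) (hq : IsPrimePow q)
    (F : Type) [Field F] [Fintype F] (hF : Fintype.card F = q ^ 2)
    (δ : F) (hδ : δ ^ (q + 1) = 1) (m : ℕ) (hm : 1 < m)
    (γ : F) (hγq : γ ^ q = γ) (hγ0 : γ ≠ 0)
    (hperm : Set.BijOn (fun x : F => x ^ m + γ * x)
      {x : F | x ^ q = x} {x : F | x ^ q = x}) :
    (∃ α β : F, β ^ (q + 1) ≠ α ^ (q + 1) ∧
        ¬ (∀ u v : F, u ^ q + δ * u = 0 → v ^ q + δ * v ≠ 0 →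
            ∃ c : F, c ^ q = c ∧ α * u ^ q + β * u = c * (v ^ q + δ * v) ^ m) ∧
        Function.Bijective
          (fun x : F => (x ^ q + δ * x) ^ m + (α * x ^ q + β * x)))
    ∧ ∀ (Γ : Finset F) (k : ℕ), Γ.card = k →
        (∀ γ' ∈ Γ, γ' ^ q = γ' ∧ γ' ≠ 0 ∧
          Set.BijOn (fun x : F => x ^ m + γ' * x)
            {x : F | x ^ q = x} {x : F | x ^ q = x}) →
        k * q ^ 2 * (q - 1) ≤
          Set.ncard {L : F → F | ∃ α β : F, β ^ (q + 1) ≠ α ^ (q + 1) ∧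
            (L = fun x : F => α * x ^ q + β * x) ∧
            ¬ (∀ u v : F, u ^ q + δ * u = 0 → v ^ q + δ * v ≠ 0 →
                ∃ c : F, c ^ q = c ∧ L u = c * (v ^ q + δ * v) ^ m) ∧
            Function.Bijective
              (fun x : F => (x ^ q + δ * x) ^ m + L x)} := by
  classical
  obtain ⟨hfrob, hneg⟩ := char_facts q hq F hF
  have hq2 : 2 ≤ q := hq.two_le
  have hpow : ∀ x : F, (x ^ q) ^ q = x := by
    intro x
    rw [← pow_mul, show q * q = q ^ 2 by ring, ← hF]
    exact FiniteField.pow_card x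
  obtain ⟨hA, z₀, hz₀⟩ := lemA q hq2 F hF
  have hδ0 : δ ≠ 0 := by
    intro h
    rw [h, zero_pow (by omega : q + 1 ≠ 0)] at hδ
    exact zero_ne_one hδ
  have hmδ : (-δ) ^ (q + 1) = 1 := by
    rw [neg_pow, hδ, mul_one, pow_succ, hneg]
    ring
  obtain ⟨u, hu0, huq⟩ := hA (-δ) hmδ
  have hu : u ^ q + δ * u = 0 := by rw [huq]; ring
  obtain ⟨v, hv⟩ : ∃ v : F, v ^ q + δ * v ≠ 0 := by
    by_contra hcon
    push_neg at hcon
    have h1 := hcon 1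
    have h2 := hcon z₀
    apply hz₀
    have hδ1 : δ = -1 := by
      rw [one_pow, mul_one] at h1
      linear_combination h1
    rw [hδ1] at h2
    linear_combination h2
  have hwm0 : (v ^ q + δ * v) ^ m ≠ 0 := pow_ne_zero _ hv
  constructor
  · -- part 1
    have he : ∀ c : F, c ^ q = c → z₀ * (v ^ q + δ * v) ^ m ≠ c * (v ^ q + δ * v) ^ m := by
      intro c hc heq
      apply hz₀
      have hzc : z₀ = c := mul_right_cancel₀ hwm0 heq
      rw [hzc]
      exact hc
    have h0 : (0 : F) ^ q = 0 := zero_pow (by omega)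
    obtain ⟨h1, h2, h3⟩ := key q F (by omega) hfrob hpow hneg hA δ hδ m u v hu0 hu hv
      γ (z₀ * (v ^ q + δ * v) ^ m) 0 hγq hγ0 hperm he h0 _ _ rfl rfl
    exact ⟨_, _, h1, h2, h3⟩
  · -- part 2
    intro Γ k hk hΓ
    set W : F := v ^ q + δ * v with hWdef
    set A : F × F × F → F := fun t =>
      ((t.1 * W ^ m + t.2.2 * t.2.1) * u - t.2.1 * v) / (u * W) with hAdef
    set B : F × F × F → F := fun t =>
      ((t.1 * W ^ m + t.2.2 * t.2.1) * δ * u + t.2.1 * v ^ q) / (u * W) with hBdef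
    set Φ : F × F × F → (F → F) := fun t => fun x => A t * x ^ q + B t * x with hΦdef
    set SF : Finset F := Finset.univ.filter (fun c : F => c ^ q = c) with hSFdef
    set EF : Finset F := Finset.univ.filter
      (fun e : F => ∀ c : F, c ^ q = c → e ≠ c * W ^ m) with hEFdef
    set D : Finset (F × F × F) := Γ ×ˢ EF ×ˢ SF with hDdef
    have hmemD : ∀ t : F × F × F, t ∈ D →
        t.1 ∈ Γ ∧ (∀ c : F, c ^ q = c → t.2.1 ≠ c * W ^ m) ∧ t.2.2 ^ q = t.2.2 := by
      intro t ht
      rw [hDdef, Finset.mem_product, Finset.mem_product] at ht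
      obtain ⟨h1, h2, h3⟩ := ht
      rw [hEFdef, Finset.mem_filter] at h2
      rw [hSFdef, Finset.mem_filter] at h3
      exact ⟨h1, h2.2, h3.2⟩
    have hval_u : ∀ t : F × F × F, Φ t u = t.2.1 := by
      intro t
      show A t * u ^ q + B t * u = t.2.1
      rw [hAdef, hBdef]
      have huq2 : u ^ q = -(δ * u) := by linear_combination hu
      simp only
      rw [huq2, hWdef]
      rw [div_mul_eq_mul_div, div_mul_eq_mul_div, ← add_div, div_eq_iff]
      · ring
      · exact mul_ne_zero hu0 hv
    have hval_v : ∀ t : F × F × F, Φ t v = t.1 * W ^ m + t.2.2 * t.2.1 := by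
      intro t
      show A t * v ^ q + B t * v = t.1 * W ^ m + t.2.2 * t.2.1
      rw [hAdef, hBdef]
      simp only
      rw [hWdef]
      rw [div_mul_eq_mul_div, div_mul_eq_mul_div, ← add_div, div_eq_iff]
      · ring
      · exact mul_ne_zero hu0 hv
    have hfrobsub : ∀ a b : F, (a - b) ^ q = a ^ q - b ^ q := by
      intro a b
      rw [sub_eq_add_neg, hfrob, neg_pow, hneg]
      ring
    have hmem : ∀ t ∈ D, Φ t ∈ {L : F → F | ∃ α β : F, β ^ (q + 1) ≠ α ^ (q + 1) ∧
        (L = fun x : F => α * x ^ q + β * x) ∧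
        ¬ (∀ u' v' : F, u' ^ q + δ * u' = 0 → v' ^ q + δ * v' ≠ 0 →
            ∃ c : F, c ^ q = c ∧ L u' = c * (v' ^ q + δ * v') ^ m) ∧
        Function.Bijective (fun x : F => (x ^ q + δ * x) ^ m + L x)} := by
      intro t ht
      obtain ⟨htΓ, hte, htr⟩ := hmemD t ht
      obtain ⟨hγ₁S, hγ₁0, hperm₁⟩ := hΓ t.1 htΓ
      have he' : ∀ c : F, c ^ q = c → t.2.1 ≠ c * (v ^ q + δ * v) ^ m := by
        rw [← hWdef]; exact hte
      obtain ⟨h1, h2, h3⟩ := key q F (by omega) hfrob hpow hneg hA δ hδ m u v hu0 hu hv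
        t.1 t.2.1 t.2.2 hγ₁S hγ₁0 hperm₁ he' htr (A t) (B t)
        (by rw [hAdef, ← hWdef]) (by rw [hBdef, ← hWdef])
      exact ⟨A t, B t, h1, rfl, h2, h3⟩
    have hinjΦ : Set.InjOn Φ ↑D := by
      intro t ht t' ht' heq
      obtain ⟨htΓ, hte, htr⟩ := hmemD t (Finset.mem_coe.mp ht)
      obtain ⟨htΓ', hte', htr'⟩ := hmemD t' (Finset.mem_coe.mp ht')
      obtain ⟨hγ₁S, hγ₁0, -⟩ := hΓ t.1 htΓ
      obtain ⟨hγ₂S, hγ₂0, -⟩ := hΓ t'.1 htΓ'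
      have he12 : t.2.1 = t'.2.1 := by
        rw [← hval_u t, ← hval_u t', heq]
      have hc12 : t.1 * W ^ m + t.2.2 * t.2.1 = t'.1 * W ^ m + t'.2.2 * t'.2.1 := by
        rw [← hval_v t, ← hval_v t', heq]
      have hWm0 : W ^ m ≠ 0 := by rw [hWdef]; exact hwm0
      have hind := indep_lem q F hneg (W ^ m) t.2.1 hWm0 hte
        (t.1 - t'.1) (t.2.2 - t'.2.2)
        (by rw [hfrobsub, hγ₁S, hγ₂S])
        (by rw [hfrobsub, htr, htr'])
        (by rw [← he12] at hc12; linear_combination hc12)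
      have hg : t.1 = t'.1 := sub_eq_zero.mp hind.1
      have hre : t.2.2 = t'.2.2 := sub_eq_zero.mp hind.2
      exact Prod.ext hg (Prod.ext he12 hre)
    have hScard : SF.card = q := by
      apply card_S q hq2 F hF
      intro x
      rw [hSFdef, Finset.mem_filter]
      simp
    have hEcard : EF.card = q ^ 2 - q := by
      have hWm0 : W ^ m ≠ 0 := by rw [hWdef]; exact hwm0
      have himg : EF = Finset.univ \ SF.image (fun c => c * W ^ m) := by
        ext x
        rw [hEFdef, Finset.mem_filter, Finset.mem_sdiff]
        simp only [Finset.mem_univ, true_and, Finset.mem_image, not_exists]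
        constructor
        · intro h
          rintro c ⟨hc, hcx⟩
          rw [hSFdef, Finset.mem_filter] at hc
          exact h c hc.2 hcx.symm
        · intro h c hc hcx
          exact h c ⟨by rw [hSFdef, Finset.mem_filter]; exact ⟨Finset.mem_univ _, hc⟩, hcx.symm⟩
      rw [himg, Finset.card_sdiff_of_subset (Finset.subset_univ _), Finset.card_univ, hF,
        Finset.card_image_of_injective _ (mul_left_injective₀ hWm0), hScard]
    have hDcard : D.card = k * ((q ^ 2 - q) * q) := by
      rw [hDdef, Finset.card_product, Finset.card_product, hk, hEcard, hScard]
    have harith : k * q ^ 2 * (q - 1) = k * ((q ^ 2 - q) * q) := by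
      obtain ⟨d, rfl⟩ : ∃ d, q = d + 2 := ⟨q - 2, by omega⟩
      have h1 : (d + 2) ^ 2 = d * d + 4 * d + 4 := by ring
      have h2 : (d + 2) ^ 2 - (d + 2) = d * d + 3 * d + 2 := by omega
      have h3 : d + 2 - 1 = d + 1 := by omega
      rw [h2, h3, h1]
      ring
    calc k * q ^ 2 * (q - 1) = D.card := by rw [hDcard, harith]
      _ = (D.image Φ).card := (Finset.card_image_of_injOn hinjΦ).symm
      _ = (↑(D.image Φ) : Set (F → F)).ncard := (Set.ncard_coe_finset _).symm
      _ ≤ _ := by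
          apply Set.ncard_le_ncard _ (Set.toFinite _)
          intro L hL
          rw [Finset.coe_image] at hL
          obtain ⟨t, htD, rfl⟩ := hL
          exact hmem t (Finset.mem_coe.mp htD)
end

section
/- Let q be an odd prime power, m = (q+1)/2, and let γ ∈ F_q be nonzero such that f(x) = γ^{-1}x^m + x is a bijection of F_q. If (γ+1)/γ is a square in F_q, then h(x) = x^m - γx satisfies h(f(x)) = ((1-γ^2)/γ)·x for all x ∈ F_q; if (γ+1)/γ is not a square in F_q, then h(x) = x^m + γx satisfies h(f(x)) = ((γ^2-1)/γ)·x for all x ∈ F_q. -/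
/-!
Write `s = (q - 1)/2`, so that `m = s + 1` and `x ^ s = ±1` tells squares from nonsquares.
The map `f x = γ⁻¹ x ^ m + x` multiplies squares by `a = (γ + 1)/γ` and nonsquares by
`b = (γ - 1)/γ`. Injectivity of `f` forces `a ^ s = b ^ s =: η`: otherwise `y = a / b` is a
nonsquare with `f y = a = f 1`. Hence `f` multiplies the character `x ^ s` by `η`, and a direct
computation gives `f x ^ m - η γ f x = η (1 - γ²)/γ · x`, where `η = 1` exactly when `a` is a
square.
-/

namespace FiniteField

variable {F : Type*} [Field F] [Fintype F]

local notation "s" => Fintype.card F / 2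

theorem sq_pow_card_div_two (hF : ringChar F ≠ 2) {x : F} (hx : x ≠ 0) : (x ^ s) ^ 2 = 1 := by
  rcases pow_dichotomy hF hx with h | h <;> simp [h]

theorem inv_mul_pow_card_div_two_succ_add (c x : F) (hc : c ≠ 0) :
    c⁻¹ * x ^ (s + 1) + x = (x ^ s + c) / c * x := by
  field_simp
  ring

theorem inv_mul_pow_card_div_two_succ_add_of_pow_eq_one {c x : F} (hc : c ≠ 0)
    (hx : x ^ s = 1) : c⁻¹ * x ^ (s + 1) + x = (c + 1) / c * x := by
  rw [inv_mul_pow_card_div_two_succ_add c x hc, hx, add_comm]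

theorem inv_mul_pow_card_div_two_succ_add_of_pow_eq_neg_one {c x : F} (hc : c ≠ 0)
    (hx : x ^ s = -1) : c⁻¹ * x ^ (s + 1) + x = (c - 1) / c * x := by
  rw [inv_mul_pow_card_div_two_succ_add c x hc, hx, neg_add_eq_sub]

theorem add_one_div_ne_zero_of_injective {c : F} (hc : c ≠ 0)
    (hinj : Function.Injective fun x : F => c⁻¹ * x ^ (s + 1) + x) : (c + 1) / c ≠ 0 := by
  refine div_ne_zero (fun h => one_ne_zero (hinj ?_)) hc
  dsimp only
  rw [inv_mul_pow_card_div_two_succ_add_of_pow_eq_one hc (one_pow _), h]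
  simp

theorem sub_one_div_ne_zero_of_injective (hF : ringChar F ≠ 2) {c : F} (hc : c ≠ 0)
    (hinj : Function.Injective fun x : F => c⁻¹ * x ^ (s + 1) + x) : (c - 1) / c ≠ 0 := by
  refine div_ne_zero (fun h => ?_) hc
  obtain ⟨u, hu⟩ := exists_nonsquare hF
  have hu0 : u ≠ 0 := by rintro rfl; exact hu ⟨0, by simp⟩
  have hus : u ^ s = -1 := (pow_dichotomy hF hu0).resolve_left (mt (isSquare_iff hF hu0).mpr hu)
  refine hu0 (hinj ?_)
  dsimp only
  rw [inv_mul_pow_card_div_two_succ_add_of_pow_eq_neg_one hc hus, h]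
  simp

theorem pow_card_div_two_add_one_div_eq_of_injective (hF : ringChar F ≠ 2) {c : F} (hc : c ≠ 0)
    (hinj : Function.Injective fun x : F => c⁻¹ * x ^ (s + 1) + x) :
    ((c + 1) / c) ^ s = ((c - 1) / c) ^ s := by
  have ha := add_one_div_ne_zero_of_injective hc hinj
  have hb := sub_one_div_ne_zero_of_injective hF hc hinj
  set a := (c + 1) / c
  set b := (c - 1) / c
  by_contra hab
  have hy : (a / b) ^ s = -1 := by
    rw [div_pow]
    rcases pow_dichotomy hF ha with h | h <;> rcases pow_dichotomy hF hb with h' | h' <;>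
      simp [h, h'] at hab ⊢
  have hfy : a / b = 1 := hinj <| by
    dsimp only
    rw [inv_mul_pow_card_div_two_succ_add_of_pow_eq_neg_one hc hy,
      inv_mul_pow_card_div_two_succ_add_of_pow_eq_one hc (one_pow _), mul_div_cancel₀ _ hb,
      mul_one]
  rw [hfy, one_pow] at hy
  exact Ring.neg_one_ne_one_of_char_ne_two hF hy.symm

theorem pow_card_div_two_succ_sub_mul_eq (hF : ringChar F ≠ 2) {c η : F} (hc : c ≠ 0)
    (hplus : ((c + 1) / c) ^ s = η) (hminus : ((c - 1) / c) ^ s = η) (x : F) :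
    (c⁻¹ * x ^ (s + 1) + x) ^ (s + 1) - η * c * (c⁻¹ * x ^ (s + 1) + x)
      = η * ((1 - c ^ 2) / c) * x := by
  rcases eq_or_ne x 0 with rfl | hx
  · simp
  have hk : ((x ^ s + c) / c) ^ s = η := by
    rcases pow_dichotomy hF hx with h | h
    · rw [← hplus, h, add_comm]
    · rw [← hminus, h, neg_add_eq_sub]
  rw [inv_mul_pow_card_div_two_succ_add c x hc, pow_succ ((x ^ s + c) / c * x), mul_pow, hk]
  field_simp
  linear_combination η * sq_pow_card_div_two hF hx

end FiniteField

open FiniteField in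
theorem stmt_8_general (q : ℕ) (hodd : Odd q)
    (F : Type) [Field F] [Fintype F] (hF : Fintype.card F = q)
    (m : ℕ) (hm : 2 * m = q + 1)
    (γ : F) (hγ0 : γ ≠ 0)
    (hperm : Function.Bijective (fun x : F => γ⁻¹ * x ^ m + x)) :
    ((∃ c : F, c ^ 2 = (γ + 1) / γ) →
        ∀ x : F, (γ⁻¹ * x ^ m + x) ^ m - γ * (γ⁻¹ * x ^ m + x)
          = ((1 - γ ^ 2) / γ) * x)
    ∧ ((¬ ∃ c : F, c ^ 2 = (γ + 1) / γ) →
        ∀ x : F, (γ⁻¹ * x ^ m + x) ^ m + γ * (γ⁻¹ * x ^ m + x)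
          = ((γ ^ 2 - 1) / γ) * x) := by
  have hchar : ringChar F ≠ 2 := by
    rw [Ne, even_card_iff_char_two, hF, ← Nat.even_iff, Nat.not_even_iff_odd]
    exact hodd
  obtain rfl : m = Fintype.card F / 2 + 1 := by rw [hF]; obtain ⟨k, rfl⟩ := hodd; omega
  have ha := add_one_div_ne_zero_of_injective hγ0 hperm.injective
  have hminus := pow_card_div_two_add_one_div_eq_of_injective hchar hγ0 hperm.injective
  have hsquare : IsSquare ((γ + 1) / γ) ↔ ∃ c : F, c ^ 2 = (γ + 1) / γ := by
    simp only [IsSquare, sq, eq_comm]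
  refine ⟨fun hsq x => ?_, fun hnsq x => ?_⟩
  · have hη := (isSquare_iff hchar ha).mp (hsquare.mpr hsq)
    simpa using pow_card_div_two_succ_sub_mul_eq hchar hγ0 hη (hminus.symm.trans hη) x
  · have hη := (pow_dichotomy hchar ha).resolve_left (mt (isSquare_iff hchar ha).mpr
      (mt hsquare.mp hnsq))
    linear_combination pow_card_div_two_succ_sub_mul_eq hchar hγ0 hη (hminus.symm.trans hη) x

/-- Let `q` be an odd prime power, `m = (q+1)/2`, and `γ ∈ F_q` nonzero
such that `f(x) = γ⁻¹x^m + x` is a bijection of `F_q`. If `(γ+1)/γ` is a square then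
`h(x) = x^m - γx` satisfies `h(f(x)) = ((1-γ^2)/γ)·x` for all `x`; if `(γ+1)/γ` is not
a square then `h(x) = x^m + γx` satisfies `h(f(x)) = ((γ^2-1)/γ)·x` for all `x`. -/
theorem stmt_8 (q : ℕ) (hq : IsPrimePow q) (hodd : Odd q)
    (F : Type) [Field F] [Fintype F] (hF : Fintype.card F = q)
    (m : ℕ) (hm : 2 * m = q + 1)
    (γ : F) (hγ0 : γ ≠ 0)
    (hperm : Function.Bijective (fun x : F => γ⁻¹ * x ^ m + x)) :
    ((∃ c : F, c ^ 2 = (γ + 1) / γ) →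
        ∀ x : F, (γ⁻¹ * x ^ m + x) ^ m - γ * (γ⁻¹ * x ^ m + x)
          = ((1 - γ ^ 2) / γ) * x)
    ∧ ((¬ ∃ c : F, c ^ 2 = (γ + 1) / γ) →
        ∀ x : F, (γ⁻¹ * x ^ m + x) ^ m + γ * (γ⁻¹ * x ^ m + x)
          = ((γ ^ 2 - 1) / γ) * x) :=
  stmt_8_general q hodd F hF m hm γ hγ0 hperm
end

section
/- Let q be a prime power, δ_i ∈ F_{q^2} with δ_i^{q+1} = 1, s(x) = x^q + δ_ix, m ≥ 1, and let L be a rank 2 linearized polynomial of F_{q^2} that maps the kernel of s into the one-dimensional F_q-subspace containing the image of x ↦ s(x)^m (so that f(x) = s(x)^m + L(x) is a bijection of F_{q^2}). Let M be the compositional inverse of L. Then there exist η ∈ F_{q^2} and δ_j ∈ F_{q^2} with δ_j^{q+1} = 1 such that h(x) = η(x^q + δ_jx)^m + M(x) satisfies h(f(x)) = x for all x ∈ F_{q^2}; moreover M maps the kernel of x^q + δ_jx into the one-dimensional F_q-subspace containing the image of x ↦ η(x^q + δ_jx)^m. -/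
/-- Let `δi^{q+1} = 1`, `s(x) = x^q + δi x`, `m ≥ 1`, and let
`L(x) = αx^q + βx` be a rank 2 linearized polynomial mapping `ker s` into the
one-dimensional `F_q`-subspace containing the image of `x ↦ s(x)^m`
(so `f(x) = s(x)^m + L(x)` is a bijection of `F_{q^2}`). Let `M` be the compositional
inverse of `L`. Then there exist `η` and `δj` with `δj^{q+1} = 1` such that
`h(x) = η(x^q + δj x)^m + M(x)` satisfies `h(f(x)) = x` for all `x`, and moreover `M`
maps `ker (x^q + δj x)` into the one-dimensional `F_q`-subspace containing the image
of `x ↦ η(x^q + δj x)^m`. -/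
theorem stmt_10 (q : ℕ) (hq : IsPrimePow q)
    (F : Type) [Field F] [Fintype F] (hF : Fintype.card F = q ^ 2)
    (δi : F) (hδi : δi ^ (q + 1) = 1) (m : ℕ) (hm : 1 ≤ m)
    (α β : F) (hrank2 : β ^ (q + 1) ≠ α ^ (q + 1))
    (L : F → F) (hL : L = fun x : F => α * x ^ q + β * x)
    (hker : ∀ u v : F, u ^ q + δi * u = 0 → v ^ q + δi * v ≠ 0 →
      ∃ c : F, c ^ q = c ∧ L u = c * (v ^ q + δi * v) ^ m)
    (M : F → F) (hM : ∀ x : F, M (L x) = x ∧ L (M x) = x)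
    (f : F → F) (hf : f = fun x : F => (x ^ q + δi * x) ^ m + L x) :
    ∃ η δj : F, δj ^ (q + 1) = 1 ∧
      (∀ x : F, η * ((f x) ^ q + δj * f x) ^ m + M (f x) = x) ∧
      (∀ u v : F, u ^ q + δj * u = 0 → v ^ q + δj * v ≠ 0 →
        ∃ c : F, c ^ q = c ∧ M u = c * (η * (v ^ q + δj * v) ^ m)) := by
  classical
  -- characteristic preliminaries
  obtain ⟨p, k, hp, hk, hpk⟩ := hq
  have hpp : Nat.Prime p := Nat.prime_iff.mpr hp
  haveI : Fact p.Prime := ⟨hpp⟩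
  have hq2 : 2 ≤ q := by
    calc 2 ≤ p := hpp.two_le
    _ ≤ p ^ k := Nat.le_self_pow hk.ne' p
    _ = q := hpk
  have hcard : Fintype.card F = p ^ (2*k) := by rw [hF, ← hpk, ← pow_mul, mul_comm]
  have hdvd : ringChar F ∣ p ^ (2*k) := ringChar.dvd (by
    rw [← hcard]; exact Nat.cast_card_eq_zero F)
  have hrc : Nat.Prime (ringChar F) :=
    (CharP.char_is_prime_or_zero F (ringChar F)).resolve_right
      (CharP.char_ne_zero_of_finite F (ringChar F))
  have hrcp : ringChar F = p :=
    (Nat.prime_dvd_prime_iff_eq hrc hpp).mp (hrc.dvd_of_dvd_pow hdvd)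
  haveI : CharP F p := hrcp ▸ ringChar.charP F
  have fadd : ∀ x y : F, (x+y)^q = x^q + y^q := by
    intro x y; rw [← hpk]; exact add_pow_char_pow x y p k
  have frob : ∀ x : F, (x^q)^q = x := by
    intro x; rw [← pow_mul, ← sq, ← hF, FiniteField.pow_card]
  have fneg : ∀ x : F, (-x)^q = -(x^q) := by
    intro x
    have h := fadd x (-x)
    rw [add_neg_cancel, zero_pow (by omega : q ≠ 0)] at h
    linear_combination -h
  have hm1 : (-1:F) ^ (q+1) = 1 := by
    rcases Nat.even_or_odd q with he | ho
    · have h2q : 2 ∣ p ^ k := hpk ▸ he.two_dvd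
      have hp2 : p = 2 := ((Nat.prime_dvd_prime_iff_eq Nat.prime_two hpp).mp
        (Nat.prime_two.dvd_of_dvd_pow h2q)).symm
      haveI : CharP F 2 := hp2 ▸ ‹CharP F p›
      rw [CharTwo.neg_eq (1:F), one_pow]
    · exact (ho.add_one).neg_one_pow
  have hδi0 : δi ≠ 0 := by
    intro h; rw [h, zero_pow (by omega : q + 1 ≠ 0)] at hδi; exact one_ne_zero hδi.symm
  have hδisucc : δi ^ q * δi = 1 := by rw [← pow_succ]; exact hδi
  have hδiq : δi ^ q = δi⁻¹ := eq_inv_of_mul_eq_one_left hδisucc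
  -- existence of kernel element u0 and non-kernel element v0 for s
  obtain ⟨g, hg⟩ := IsCyclic.exists_generator (α := Fˣ)
  have hog : orderOf g = q^2 - 1 := by
    rw [orderOf_eq_card_of_forall_mem_zpowers hg, Nat.card_eq_fintype_card,
      Fintype.card_units, hF]
  have hfac : (q-1) * (q+1) = q^2 - 1 := by
    obtain ⟨r, rfl⟩ : ∃ r, q = r + 2 := ⟨q - 2, by omega⟩
    simp [Nat.succ_sub_one, pow_two]; ring_nf; omega
  obtain ⟨u0, hu00, hu0⟩ : ∃ u : F, u ≠ 0 ∧ u^q = -(δi * u) := by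
    set ζ : Fˣ := Units.mk0 (-δi) (neg_ne_zero.mpr hδi0) with hζ
    obtain ⟨n, hn0⟩ := mem_powers_iff_mem_zpowers.mpr (hg ζ)
    have hn : g ^ n = ζ := hn0
    have hζpow : ζ ^ (q+1) = 1 := by
      ext
      push_cast [hζ]
      rw [Units.val_mk0, neg_pow, hδi, hm1, mul_one]
    have hdvd : q^2 - 1 ∣ n * (q+1) := by
      rw [← hog]; exact orderOf_dvd_of_pow_eq_one (by rw [pow_mul, hn, hζpow])
    have hdvd2 : q - 1 ∣ n := by
      have := hfac ▸ hdvd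
      exact (Nat.mul_dvd_mul_iff_right (by omega : 0 < q + 1)).mp this
    obtain ⟨s, rfl⟩ := hdvd2
    have hn : g ^ ((q-1)*s) = ζ := hn
    refine ⟨((g^s : Fˣ) : F), Units.ne_zero _, ?_⟩
    have hgs : ((g^s:Fˣ):F) ^ (q-1) = -δi := by
      have h1 : (g^s) ^ (q-1) = ζ := by rw [← pow_mul, mul_comm s (q-1), hn]
      calc ((g^s:Fˣ):F) ^ (q-1) = (((g^s)^(q-1) : Fˣ) : F) := by push_cast; ring
      _ = -δi := by rw [h1]; rfl
    calc ((g^s:Fˣ):F) ^ q = ((g^s:Fˣ):F) ^ (q-1) * ((g^s:Fˣ):F) := by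
          rw [← pow_succ]; congr 1; omega
    _ = -(δi * ((g^s:Fˣ):F)) := by rw [hgs]; ring
  obtain ⟨v0, hv0⟩ : ∃ v : F, v^q + δi * v ≠ 0 := by
    by_contra h
    push_neg at h
    have h1 : δi = -1 := by have := h 1; rw [one_pow] at this; linear_combination this
    have hall : ∀ v : F, v^q = v := by
      intro v; have := h v; rw [h1] at this; linear_combination this
    have hgq : (g : Fˣ) ^ (q - 1) = 1 := by
      ext
      push_cast
      have hgg := hall (g : F)
      have : ((g:F)) ^ (q-1) * (g:F) = 1 * (g:F) := by
        rw [← pow_succ, one_mul, show q - 1 + 1 = q by omega]; exact hgg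
      exact mul_right_cancel₀ (Units.ne_zero g) this
    have hd := orderOf_dvd_of_pow_eq_one hgq
    rw [hog] at hd
    have hle := Nat.le_of_dvd (by omega) hd
    have h3 : (q-1)*(q+1) ≤ (q-1)*1 := by rw [hfac, mul_one]; exact hle
    have := Nat.le_of_mul_le_mul_left h3 (by omega : 0 < q - 1)
    omega
  -- function definitions
  have hLdef : ∀ x : F, L x = α * x^q + β * x := by intro x; rw [hL]
  have hfdef : ∀ x : F, f x = (x^q + δi*x)^m + L x := by intro x; rw [hf]
  -- δj
  have hδim0 : δi ^ m ≠ 0 := pow_ne_zero m hδi0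
  obtain ⟨δj, hδj⟩ : ∃ d : F, d = -(δi ^ m)⁻¹ := ⟨_, rfl⟩
  have hδj0 : δj ≠ 0 := by
    rw [hδj]; exact neg_ne_zero.mpr (inv_ne_zero hδim0)
  have hδjq1 : δj ^ (q+1) = 1 := by
    have h1 : (δi^m)^(q+1) = 1 := by rw [← pow_mul, mul_comm, pow_mul, hδi, one_pow]
    rw [hδj, neg_pow, hm1, one_mul, inv_pow, h1, inv_one]
  have hδjsucc : δj ^ q * δj = 1 := by rw [← pow_succ]; exact hδjq1
  -- eigenvalue facts
  have himg : ∀ x : F, (x^q + δi*x)^q = δi⁻¹ * (x^q + δi*x) := by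
    intro x
    rw [fadd, frob, mul_pow, hδiq]
    field_simp
    ring
  have heig : ∀ x : F, ((x^q+δi*x)^m)^q = (δi^m)⁻¹ * ((x^q+δi*x)^m) := by
    intro x
    rw [pow_right_comm, himg x, mul_pow, inv_pow]
  -- the key structural relation from hker
  obtain ⟨c0, hc0q, hc0⟩ := hker u0 v0 (by linear_combination hu0) hv0
  obtain ⟨w, hwdef⟩ : ∃ w : F, w = (v0^q + δi*v0)^m := ⟨_, rfl⟩
  rw [← hwdef] at hc0
  have hw0 : w ≠ 0 := by rw [hwdef]; exact pow_ne_zero m hv0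
  have hweig : w^q = (δi^m)⁻¹ * w := by rw [hwdef]; exact heig v0
  have hTj_Lu0 : (L u0)^q + δj * (L u0) = 0 := by
    rw [hc0, mul_pow, hc0q, hweig, hδj]
    ring
  have hLu0 : L u0 = (β - δi*α) * u0 := by rw [hLdef, hu0]; ring
  have hLu0q : (L u0)^q = α^q * u0 - β^q * (δi * u0) := by
    rw [hLdef u0, fadd, mul_pow, mul_pow, frob u0, hu0]
    ring
  have hBA : α^q + δj*β = δi * (β^q + δj*α) := by
    have h := hTj_Lu0
    rw [hLu0q, hLu0] at h
    have h2 : (α^q + δj*β - δi*(β^q + δj*α)) * u0 = 0 := by linear_combination h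
    rcases mul_eq_zero.mp h2 with h3 | h3
    · linear_combination h3
    · exact absurd h3 hu00
  obtain ⟨A, hA⟩ : ∃ a : F, a = β^q + δj * α := ⟨_, rfl⟩
  rw [← hA] at hBA
  have hA0 : A ≠ 0 := by
    intro h0
    have hB : α^q + δj*β = 0 := by rw [hBA, h0, mul_zero]
    rw [hA] at h0
    apply hrank2
    rw [pow_succ, pow_succ]
    have h1 : β^q = -(δj*α) := by linear_combination h0
    have h2 : α^q = -(δj*β) := by linear_combination hB
    rw [h1, h2]; ring
  have hTjL : ∀ x : F, (L x)^q + δj * L x = A * (x^q + δi*x) := by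
    intro x
    rw [hLdef, fadd, mul_pow, mul_pow, frob, hA]
    linear_combination x * hBA + x * δi * hA
  have hTjf : ∀ x : F, (f x)^q + δj * f x = A * (x^q + δi*x) := by
    intro x
    rw [hfdef, fadd, heig x]
    linear_combination hTjL x + ((x^q+δi*x)^m) * hδj
  -- linearity of L and M
  have hLadd : ∀ x y : F, L (x+y) = L x + L y := by
    intro x y; rw [hLdef, hLdef, hLdef, fadd]; ring
  have hLsmul : ∀ c x : F, c^q = c → L (c*x) = c * L x := by
    intro c x hc; rw [hLdef, hLdef, mul_pow, hc]; ring
  have hMaddL : ∀ a x : F, M (a + L x) = M a + x := by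
    intro a x
    have h : L (M a + x) = a + L x := by rw [hLadd, (hM a).2]
    rw [← h, (hM _).1]
  have hMsmul : ∀ c a : F, c^q = c → M (c*a) = c * M a := by
    intro c a hc
    conv_lhs => rw [← (hM a).2]
    rw [← hLsmul c _ hc, (hM _).1]
  -- η
  have hAmw0 : A^m * w ≠ 0 := mul_ne_zero (pow_ne_zero m hA0) hw0
  obtain ⟨η, hη⟩ : ∃ e : F, e = -(M w) / (A^m * w) := ⟨_, rfl⟩
  have hηA : η * (A^m * w) = -(M w) := by rw [hη]; exact div_mul_cancel₀ _ hAmw0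
  -- decomposition of (s x)^m
  have tlem : ∀ x : F, ∃ t : F, t^q = t ∧ (x^q+δi*x)^m = t * w := by
    intro x
    refine ⟨((x^q+δi*x) * (v0^q+δi*v0)⁻¹)^m, ?_, ?_⟩
    · rw [pow_right_comm]
      congr 1
      rw [mul_pow, himg x, inv_pow, himg v0]
      field_simp
    · rw [hwdef, ← mul_pow]
      congr 1
      field_simp
  refine ⟨η, δj, hδjq1, ?_, ?_⟩
  · intro x
    rw [hTjf x]
    obtain ⟨t, htq, htw⟩ := tlem x
    have hMfx : M (f x) = t * M w + x := by
      rw [hfdef, htw, hMaddL, hMsmul t w htq]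
    rw [hMfx, mul_pow, htw]
    linear_combination t * hηA
  · intro u v hu hv
    have hwq : w^q = -(δj * w) := by rw [hweig, hδj]; ring
    have huq : u^q = -(δj*u) := by linear_combination hu
    have hc1 : (u * w⁻¹)^q = u * w⁻¹ := by
      rw [mul_pow, huq, inv_pow, hwq]
      field_simp [hδj0, hw0]
    have hueq : u = (u * w⁻¹) * w := (inv_mul_cancel_right₀ hw0 u).symm
    have hAq : A^q = δi * δj^q * A := by
      rw [hA, fadd, mul_pow, frob]
      linear_combination δj^q * hBA - β * hδjsucc + δi * δj^q * hA
    have hz : (v^q + δj*v)^q = δj^q * (v^q+δj*v) := by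
      rw [fadd, frob, mul_pow]
      linear_combination (-v) * hδjsucc
    have hzm0 : (v^q + δj*v)^m ≠ 0 := pow_ne_zero m hv
    have hδjqm0 : (δj^q)^m ≠ 0 := pow_ne_zero m (pow_ne_zero q hδj0)
    have hkey : δi^m * -δj = 1 := by rw [hδj, neg_neg, mul_inv_cancel₀ hδim0]
    have hzq : ((v^q+δj*v)^m)^q = (δj^q)^m * (v^q+δj*v)^m := by
      rw [pow_right_comm, hz, mul_pow]
    have hAmq : (A^m)^q = δi^m * (δj^q)^m * A^m := by
      rw [pow_right_comm, hAq, mul_pow, mul_pow]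
    have hzq0 : ((v^q+δj*v)^m)^q ≠ 0 := by
      rw [hzq]; exact mul_ne_zero hδjqm0 hzm0
    have key : (A^m*w)^q * (v^q+δj*v)^m = (A^m*w) * ((v^q+δj*v)^m)^q := by
      rw [mul_pow, hAmq, hwq, hzq]
      linear_combination ((δj^q)^m * A^m * w * (v^q+δj*v)^m) * hkey
    have hrq : (A^m * w * ((v^q+δj*v)^m)⁻¹)^q = A^m * w * ((v^q+δj*v)^m)⁻¹ := by
      rw [mul_pow, inv_pow, ← div_eq_mul_inv, ← div_eq_mul_inv,
        div_eq_div_iff hzq0 hzm0]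
      linear_combination key
    refine ⟨-((u*w⁻¹) * (A^m * w * ((v^q+δj*v)^m)⁻¹)), ?_, ?_⟩
    · rw [fneg, mul_pow, hc1, hrq]
    · have hMu : M u = (u*w⁻¹) * M w := by
        conv_lhs => rw [hueq]
        exact hMsmul _ _ hc1
      have hMw : M w = -(η * (A^m*w)) := by linear_combination hηA
      have hzz : (v^q+δj*v)^m * ((v^q+δj*v)^m)⁻¹ = 1 := mul_inv_cancel₀ hzm0
      rw [hMu, hMw]
      linear_combination (u*w⁻¹*η*(A^m*w)) * hzz
end

section
/- Let q be a prime power, δ_i ∈ F_{q^2} with δ_i^{q+1} = 1, s(x) = x^q + δ_ix, and let L be a rank 1 linearized polynomial of F_{q^2} and m > 1 an integer such that f(x) = s(x)^m + L(x) is a bijection of F_{q^2} (so gcd(m, q-1) = 1, ker s ≠ ker L, and im(x ↦ s(x)^m) ≠ im L). Then there exist δ_j ∈ F_{q^2} with δ_j^{q+1} = 1, an element η ∈ F_{q^2}, a rank 1 linearized polynomial M of F_{q^2}, and a positive integer n with m·n ≡ 1 (mod q-1), such that h(x) = η(x^q + δ_jx)^n + M(x) satisfies h(f(x)) = x for all x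 ∈ F_{q^2}. -/
/-- Let `δi^{q+1} = 1`, `s(x) = x^q + δi x`, let `L(x) = αx^q + βx` be a
rank 1 linearized polynomial and `m > 1` such that `f(x) = s(x)^m + L(x)` is a bijection
of `F_{q^2}`. Then there exist `δj` with `δj^{q+1} = 1`, `η ∈ F_{q^2}`, a rank 1
linearized polynomial `M`, and `n > 0` with `m·n ≡ 1 (mod q-1)` such that
`h(x) = η(x^q + δj x)^n + M(x)` satisfies `h(f(x)) = x` for all `x`. -/
theorem stmt_11 (q : ℕ) (hq : IsPrimePow q)
    (F : Type) [Field F] [Fintype F] (hF : Fintype.card F = q ^ 2)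
    (δi : F) (hδi : δi ^ (q + 1) = 1) (m : ℕ) (hm : 1 < m)
    (α β : F) (hrank1 : α ^ (q + 1) = β ^ (q + 1)) (hne : (α, β) ≠ (0, 0))
    (L : F → F) (hL : L = fun x : F => α * x ^ q + β * x)
    (f : F → F) (hf : f = fun x : F => (x ^ q + δi * x) ^ m + L x)
    (hbij : Function.Bijective f) :
    ∃ (δj η : F) (M : F → F) (α' β' : F) (n : ℕ),
      δj ^ (q + 1) = 1 ∧
      α' ^ (q + 1) = β' ^ (q + 1) ∧ (α', β') ≠ (0, 0) ∧
      (M = fun x : F => α' * x ^ q + β' * x) ∧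
      0 < n ∧ m * n ≡ 1 [MOD q - 1] ∧
      ∀ x : F, η * ((f x) ^ q + δj * f x) ^ n + M (f x) = x := by
  classical
  -- basic numerics
  have hq2 : 2 ≤ q := hq.two_le
  have hqq : q ^ 2 = q * q := sq q
  have hq4 : 2 * 2 ≤ q * q := Nat.mul_le_mul hq2 hq2
  have hqlt : q < q ^ 2 := by nlinarith
  -- characteristic
  obtain ⟨p, kk, hpp, hkk, hpk⟩ := hq
  have hp' : p.Prime := Nat.prime_iff.mpr hpp
  haveI hfactp : Fact p.Prime := ⟨hp'⟩
  haveI hchar : CharP F p := by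
    have h0 : CharP F (ringChar F) := ringChar.charP F
    obtain ⟨nn, hpr, hc⟩ := FiniteField.card F (ringChar F)
    have h1 : ringChar F ∣ q ^ 2 := by
      rw [← hF, hc]
      exact dvd_pow_self (ringChar F) nn.ne_zero
    have h2 : ringChar F ∣ p := by
      refine hpr.dvd_of_dvd_pow (n := kk * 2) ?_
      rwa [pow_mul, hpk]
    have h3 : ringChar F = p := (Nat.prime_dvd_prime_iff_eq hpr hp').mp h2
    rwa [h3] at h0
  -- Frobenius is additive
  have hfrob : ∀ x y : F, (x + y) ^ q = x ^ q + y ^ q := by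
    intro x y
    rw [← hpk]
    exact add_pow_char_pow x y p kk
  -- x ↦ x^q is an involution
  have hq2pow : ∀ x : F, (x ^ q) ^ q = x := by
    intro x
    rw [← pow_mul, ← hqq, ← hF]
    exact FiniteField.pow_card x
  -- nonvanishing
  have hδi0 : δi ≠ 0 := by
    intro h; rw [h, zero_pow (by omega)] at hδi; exact one_ne_zero hδi.symm
  have hα0 : α ≠ 0 := by
    intro h
    apply hne
    rw [h, zero_pow (by omega)] at hrank1
    have : β = 0 := pow_eq_zero_iff (by omega) |>.mp hrank1.symm
    rw [h, this]
  -- the generator of the unit group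
  obtain ⟨ζ, hζ⟩ := IsCyclic.exists_generator (α := Fˣ)
  have hord : orderOf ζ = q ^ 2 - 1 := by
    rw [orderOf_eq_card_of_forall_mem_zpowers hζ, Nat.card_eq_fintype_card,
      Fintype.card_units, hF]
  -- no element d with y^q = d*y for all y
  have habs : ∀ d : F, (∀ y : F, y ^ q = d * y) → False := by
    intro d hd
    have hd1 : d = 1 := by
      have := hd 1; rw [one_pow, mul_one] at this; exact this.symm
    have hz : (ζ : F) ^ (q - 1) = 1 := by
      have h1 := hd (ζ : F)
      rw [hd1, one_mul] at h1
      have h2 : (ζ : F) ^ (q - 1) * (ζ : F) = 1 * (ζ : F) := by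
        rw [← pow_succ]
        have : q - 1 + 1 = q := by omega
        rw [this, one_mul, h1]
      exact mul_right_cancel₀ (Units.ne_zero ζ) h2
    have hz' : ζ ^ (q - 1) = 1 := by
      ext; push_cast; exact hz
    have hdvd : orderOf ζ ∣ q - 1 := orderOf_dvd_of_pow_eq_one hz'
    rw [hord] at hdvd
    have h9 : q < q ^ 2 := by nlinarith
    have := Nat.le_of_dvd (by omega) hdvd
    omega
  -- general kernel-element lemma for rank ≤ 1 maps
  have hgen : ∀ a b : F, a ≠ 0 → a ^ (q + 1) = b ^ (q + 1) →
      ∃ x0 : F, x0 ≠ 0 ∧ a * x0 ^ q + b * x0 = 0 := by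
    intro a b ha hab
    have h1 : b ^ q * b = a ^ q * a := by
      rw [← pow_succ, ← pow_succ]; exact hab.symm
    have hpowfact : ∀ x : F, (a * x ^ q + b * x) ^ q = b ^ q / a * (a * x ^ q + b * x) := by
      intro x
      rw [hfrob, mul_pow, mul_pow, hq2pow]
      rw [div_mul_eq_mul_div, eq_div_iff ha]
      linear_combination -(x * h1)
    by_contra hcon
    push_neg at hcon
    have hinj : Function.Injective (fun x : F => a * x ^ q + b * x) := by
      intro u v huv
      simp only at huv
      have h3 := hfrob (u - v) v
      rw [sub_add_cancel] at h3
      have h2 : a * (u - v) ^ q + b * (u - v) = 0 := by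
        linear_combination huv - a * h3
      have h4 : u - v = 0 := by
        by_contra hne2
        exact hcon (u - v) hne2 h2
      exact sub_eq_zero.mp h4
    have hsurj := Finite.injective_iff_surjective.mp hinj
    apply habs (b ^ q / a)
    intro y
    obtain ⟨x, hx⟩ := hsurj y
    rw [← hx]
    exact hpowfact x
  obtain ⟨x1, hx1ne, hx1L⟩ := hgen α β hα0 hrank1
  obtain ⟨x2, hx2ne, hx2s'⟩ := hgen 1 δi one_ne_zero (by rw [one_pow, hδi])
  have hx2s : x2 ^ q + δi * x2 = 0 := by linear_combination hx2s'
  -- f 0 = 0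
  have hf0 : f 0 = 0 := by
    rw [hf, hL]
    simp only
    rw [zero_pow (by omega : q ≠ 0)]
    simp
    omega
  -- s x1 ≠ 0
  have hsx1 : x1 ^ q + δi * x1 ≠ 0 := by
    intro hc
    apply hx1ne
    apply hbij.injective
    rw [hf0, hf, hL]
    simp only
    rw [hc, zero_pow (by omega : m ≠ 0)]
    linear_combination hx1L
  -- determinant nonzero
  have hdet : β - δi * α ≠ 0 := by
    intro hc
    have hβ' : β = δi * α := by linear_combination hc
    apply hx2ne
    apply hbij.injective
    rw [hf0, hf, hL]
    simp only
    rw [hx2s, zero_pow (by omega : m ≠ 0)]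
    linear_combination α * hx2s + x2 * hβ'
  -- power identities for s and L
  have hs_pow : ∀ x : F, (x ^ q + δi * x) ^ q = δi ^ q * (x ^ q + δi * x) := by
    intro x
    have h1 : δi ^ q * δi = 1 := by rw [← pow_succ]; exact hδi
    rw [hfrob, mul_pow, hq2pow]
    linear_combination -(x * h1)
  have hL_pow : ∀ x : F, (L x) ^ q = β ^ q / α * L x := by
    intro x
    have h1 : β ^ q * β = α ^ q * α := by
      rw [← pow_succ, ← pow_succ]; exact hrank1.symm
    rw [hL]
    simp only
    rw [hfrob, mul_pow, mul_pow, hq2pow]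
    rw [div_mul_eq_mul_div, eq_div_iff hα0]
    linear_combination -(x * h1)
  have hf_pow : ∀ x : F, (f x) ^ q
      = δi ^ (q * m) * (x ^ q + δi * x) ^ m + β ^ q / α * L x := by
    intro x
    rw [hf]
    simp only
    rw [hfrob, pow_right_comm, hs_pow, mul_pow, ← pow_mul, hL_pow x]
  -- K ≠ 0
  have hK : δi ^ (q * m) - β ^ q / α ≠ 0 := by
    intro hc
    have hc' : β ^ q / α = δi ^ (q * m) := by linear_combination -hc
    apply habs (δi ^ (q * m))
    intro y
    obtain ⟨x, rfl⟩ := hbij.surjective y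
    rw [hf_pow x, hc', hf]
    simp only
    ring
  -- coprimality
  have hcoprime : Nat.Coprime m (q - 1) := by
    by_contra hg
    set g := Nat.gcd m (q - 1) with hgdef
    have hgdvd1 : g ∣ m := Nat.gcd_dvd_left m (q - 1)
    have hgdvd2 : g ∣ q - 1 := Nat.gcd_dvd_right m (q - 1)
    have hgpos : 0 < g := Nat.gcd_pos_of_pos_left (q - 1) (by omega)
    have hg1 : g ≠ 1 := fun h => hg h
    have hg2 : 2 ≤ g := by omega
    have hdvdq : q - 1 ∣ q ^ 2 - 1 := by
      refine ⟨q + 1, ?_⟩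
      have e3 : (q - 1) * (q + 1) = q * q + q - q - 1 := by
        rcases Nat.exists_eq_add_of_le hq2 with ⟨j, rfl⟩
        have : (2 + j - 1) * (2 + j + 1) = (1 + j) * (3 + j) := by
          congr 1 <;> omega
        rw [this]
        have h4 : (1 + j) * (3 + j) = j * j + 4 * j + 3 := by ring
        have h5 : (2 + j) * (2 + j) = j * j + 4 * j + 4 := by ring
        omega
      omega
    have hgdvd : g ∣ q ^ 2 - 1 := dvd_trans hgdvd2 hdvdq
    have hcard1 : 0 < q ^ 2 - 1 := by omega
    set t : Fˣ := ζ ^ ((q ^ 2 - 1) / g) with htdef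
    have hdivpos : 0 < (q ^ 2 - 1) / g := Nat.div_pos (Nat.le_of_dvd hcard1 hgdvd) hgpos
    have hordt : orderOf t = g := by
      rw [htdef, orderOf_pow' ζ (by omega), hord,
        Nat.gcd_eq_right (Nat.div_dvd_of_dvd hgdvd),
        Nat.div_div_self hgdvd (by omega)]
    have ht1 : t ≠ 1 := by
      intro h; rw [h, orderOf_one] at hordt; omega
    have htm' : t ^ m = 1 := orderOf_dvd_iff_pow_eq_one.mp (hordt ▸ hgdvd1)
    have htq' : t ^ (q - 1) = 1 := orderOf_dvd_iff_pow_eq_one.mp (hordt ▸ hgdvd2)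
    have htm : (t : F) ^ m = 1 := by
      have := congrArg (Units.val) htm'; push_cast at this; exact this
    have htq : (t : F) ^ q = (t : F) := by
      have h1 : (t : F) ^ (q - 1) = 1 := by
        have := congrArg (Units.val) htq'; push_cast at this; exact this
      calc (t : F) ^ q = (t : F) ^ (q - 1) * (t : F) := by
            rw [← pow_succ]; congr 1; omega
        _ = (t : F) := by rw [h1, one_mul]
    have hfeq : f ((t : F) * x1) = f x1 := by
      have key : (((t : F) * x1) ^ q + δi * ((t : F) * x1)) ^ m
          = (x1 ^ q + δi * x1) ^ m := by
        have k1 : ((t : F) * x1) ^ q + δi * ((t : F) * x1)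
            = (t : F) * (x1 ^ q + δi * x1) := by
          rw [mul_pow, htq]; ring
        rw [k1, mul_pow, htm, one_mul]
      rw [hf, hL]
      simp only
      rw [key, mul_pow, htq]
      linear_combination ((t : F) - 1) * hx1L
    have := hbij.injective hfeq
    have ht1' : (t : F) = 1 := by
      have h2 : ((t : F) - 1) * x1 = 0 := by linear_combination this
      rcases mul_eq_zero.mp h2 with h | h
      · linear_combination h
      · exact absurd h hx1ne
    exact ht1 (Units.ext ht1')
  -- the exponent n
  set t0 := (q - 1).totient with ht0def
  have ht0 : 0 < t0 := Nat.totient_pos.mpr (by omega)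
  set n := m ^ (t0 - 1) with hndef
  have hn : 0 < n := pow_pos (by omega) _
  have hmn : m * n = m ^ t0 := by
    rw [hndef, ← pow_succ']
    congr 1
    omega
  have hmod : m * n ≡ 1 [MOD q - 1] := by
    rw [hmn]; exact Nat.ModEq.pow_totient hcoprime
  obtain ⟨k, hk⟩ : ∃ k, m * n = 1 + (q - 1) * k := by
    have h1 : 1 ≤ m * n := Nat.one_le_iff_ne_zero.mpr (Nat.mul_ne_zero (by omega) (by omega))
    obtain ⟨k, hk⟩ := (Nat.modEq_iff_dvd' h1).mp hmod.symm
    exact ⟨k, by omega⟩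
  -- power computation
  have hpow_mn : ∀ w : F, w ^ q = δi ^ q * w → w ^ (m * n) = δi ^ (q * k) * w := by
    intro w hw
    rcases eq_or_ne w 0 with rfl | hw0
    · rw [zero_pow (by positivity), mul_zero]
    · have hw1 : w ^ (q - 1) = δi ^ q := by
        have h2 : w ^ (q - 1) * w = δi ^ q * w := by
          rw [← pow_succ]
          have : q - 1 + 1 = q := by omega
          rw [this]; exact hw
        exact mul_right_cancel₀ hw0 h2
      calc w ^ (m * n) = w ^ (1 + (q - 1) * k) := by rw [hk]
        _ = w * (w ^ (q - 1)) ^ k := by rw [pow_add, pow_one, pow_mul]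
        _ = δi ^ (q * k) * w := by rw [hw1, ← pow_mul]; ring
  -- the inverse-identity scalars
  have main : ∀ x : F,
      -(α * (β - δi * α)⁻¹) * (x ^ q + δi * x) + (β - δi * α)⁻¹ * L x = x := by
    intro x
    rw [hL]
    simp only
    linear_combination x * mul_inv_cancel₀ hdet
  -- sign lemma
  have hneg : (-1 : F) ^ (q + 1) = 1 := by
    rcases Nat.even_or_odd q with he | ho
    · have h2 : (2 : ℕ) ∣ q := even_iff_two_dvd.mp he
      have hp2 : p = 2 := by
        have : (2 : ℕ) ∣ p ^ kk := hpk ▸ h2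
        have h3 : (2 : ℕ) ∣ p := (Nat.Prime.dvd_of_dvd_pow Nat.prime_two this)
        exact ((Nat.prime_dvd_prime_iff_eq Nat.prime_two hp').mp h3).symm
      haveI : CharP F 2 := by rwa [hp2] at hchar
      rw [CharTwo.neg_eq, one_pow]
    · exact Even.neg_one_pow (Odd.add_one ho)
  -- the rank-1 relation for β^q/α
  have hβq : (β ^ q) ^ (q + 1) = α ^ (q + 1) := by
    calc (β ^ q) ^ (q + 1) = (β ^ (q + 1)) ^ q := by
          rw [← pow_mul, ← pow_mul, Nat.mul_comm]
      _ = (α ^ (q + 1)) ^ q := by rw [hrank1]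
      _ = α ^ (q * q) * α ^ q := by rw [← pow_mul, ← pow_add]; congr 1; ring
      _ = α * α ^ q := by rw [pow_mul, hq2pow α]
      _ = α ^ (q + 1) := by rw [pow_succ]; ring
  -- set up the witnesses
  set γ : F := β ^ q / α with hγdef
  set K : F := δi ^ (q * m) - γ with hKdef
  set c2 : F := (β - δi * α)⁻¹ with hc2def
  set c : F := -(α * c2) with hcdef
  set e : F := -(c2 / K) with hedef
  have hc20 : c2 ≠ 0 := inv_ne_zero hdet
  have he0 : e ≠ 0 := neg_ne_zero.mpr (div_ne_zero hc20 hK)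
  refine ⟨-γ, c / (K ^ n * δi ^ (q * k)), fun y : F => e * y ^ q + -(e * δi ^ (q * m)) * y,
    e, -(e * δi ^ (q * m)), n, ?_, ?_, ?_, rfl, hn, hmod, ?_⟩
  · -- δj^(q+1) = 1
    rw [neg_pow, hneg, one_mul, hγdef, div_pow, hβq, div_self (pow_ne_zero _ hα0)]
  · -- α'^(q+1) = β'^(q+1)
    have : (-(e * δi ^ (q * m))) ^ (q + 1) = e ^ (q + 1) := by
      rw [neg_pow, hneg, one_mul, mul_pow, ← pow_mul, Nat.mul_comm (q * m) (q + 1),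
        pow_mul, hδi, one_pow, mul_one]
    rw [this]
  · -- nonzero pair
    intro hcon
    rw [Prod.mk.injEq] at hcon
    exact he0 hcon.1
  · -- the inversion identity
    intro x
    have h1 : (f x) ^ q + -γ * f x = K * (x ^ q + δi * x) ^ m := by
      rw [hf_pow x, hf]
      simp only
      rw [hγdef, hKdef]
      ring
    have h2 := hpow_mn (x ^ q + δi * x) (hs_pow x)
    have h3 := hf_pow x
    have h4 := main x
    have h5 : f x = (x ^ q + δi * x) ^ m + L x := by rw [hf]
    have hKn : K ^ n * δi ^ (q * k) ≠ 0 :=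
      mul_ne_zero (pow_ne_zero _ hK) (pow_ne_zero _ hδi0)
    have hηs : c / (K ^ n * δi ^ (q * k)) * (K ^ n * δi ^ (q * k)) = c := by
      field_simp
    have hsum : e * δi ^ (q * m) + -(e * δi ^ (q * m)) = 0 := by ring
    have hLc : e * γ + -(e * δi ^ (q * m)) = c2 := by
      rw [hedef]
      field_simp
      rw [hKdef]
      ring
    have hM : (fun y : F => e * y ^ q + -(e * δi ^ (q * m)) * y) (f x)
        = e * (f x) ^ q + -(e * δi ^ (q * m)) * (f x) := rfl
    rw [h1, mul_pow, ← pow_mul, h2, hM, h3, h5]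
    have hcc : c = -(α * c2) := hcdef
    linear_combination (x ^ q + δi * x) * hηs
      + ((x ^ q + δi * x) ^ m) * hsum + (L x) * hLc + h4
end

section
/- Let q be a prime power, s(x) = x^q + x, and g(x) = x^m + Σ_{i=2}^{m-1} a_i x^i with all a_i ∈ F_q and m ≥ 2. Let L be a rank 2 linearized polynomial of F_{q^2} mapping the kernel of s into F_q, let M be the compositional inverse of L, and set f(x) = g(s(x)) + L(x) (a bijection of F_{q^2}). Then there exist η_2, ..., η_m ∈ F_{q^2} with η_m ≠ 0 such that h(x) = Σ_{i=2}^{m} η_i (x^q - x)^i + M(x) satisfies h(f(x)) = x for all x ∈ F_{q^2}; in particular the polynomial g_1(y) = Σ_{i=2}^{m} η_i y^i has the same degree m as g. -/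
/-- Let `s(x) = x^q + x`, `g(x) = x^m + Σ_{i=2}^{m-1} a_i x^i` with all
`a_i ∈ F_q`, `m ≥ 2`, let `L(x) = αx^q + βx` be a rank 2 linearized polynomial mapping
`ker s` into `F_q`, `M` the compositional inverse of `L`, and `f(x) = g(s(x)) + L(x)`.
Then there exist `η_2, ..., η_m ∈ F_{q^2}` with `η_m ≠ 0` such that
`h(x) = Σ_{i=2}^m η_i (x^q - x)^i + M(x)` satisfies `h(f(x)) = x` for all `x`
(so the polynomial `g_1(y) = Σ η_i y^i` has the same degree `m` as `g`). -/
theorem stmt_14 (q : ℕ) (hq : IsPrimePow q)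
    (F : Type) [Field F] [Fintype F] (hF : Fintype.card F = q ^ 2)
    (m : ℕ) (hm : 2 ≤ m)
    (a : ℕ → F) (ha : ∀ i, (a i) ^ q = a i)
    (α β : F) (hrank2 : β ^ (q + 1) ≠ α ^ (q + 1))
    (L : F → F) (hL : L = fun x : F => α * x ^ q + β * x)
    (hker : ∀ u : F, u ^ q + u = 0 → (L u) ^ q = L u)
    (M : F → F) (hM : ∀ x : F, M (L x) = x ∧ L (M x) = x)
    (f : F → F)
    (hf : f = fun x : F =>
      (x ^ q + x) ^ m + (∑ i ∈ Finset.Ico 2 m, a i * (x ^ q + x) ^ i) + L x) :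
    ∃ η : ℕ → F, η m ≠ 0 ∧
      ∀ x : F,
        (∑ i ∈ Finset.Icc 2 m, η i * ((f x) ^ q - f x) ^ i) + M (f x) = x := by
  classical
  have hq2 : 2 ≤ q := hq.two_le
  obtain ⟨p, k, hp, hk, hpk⟩ := hq
  have hpn : Nat.Prime p := hp.nat_prime
  -- characteristic
  have hring : (ringChar F).Prime := CharP.char_is_prime F (ringChar F)
  obtain ⟨n, -, hcard⟩ := FiniteField.card F (ringChar F)
  have hpr : p = ringChar F := by
    have hdvd : p ∣ ringChar F ^ (n : ℕ) := by
      rw [← hcard, hF, ← hpk, ← pow_mul]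
      exact dvd_pow_self p (by positivity)
    exact (Nat.prime_dvd_prime_iff_eq hpn hring).mp (hpn.dvd_of_dvd_pow hdvd)
  haveI : CharP F p := by rw [hpr]; exact ringChar.charP F
  haveI : Fact p.Prime := ⟨hpn⟩
  -- Frobenius facts
  have frob : ∀ x y : F, (x + y) ^ q = x ^ q + y ^ q := by
    intro x y; rw [← hpk]; exact add_pow_char_pow x y p k
  have subfrob : ∀ x y : F, (x - y) ^ q = x ^ q - y ^ q := by
    intro x y
    have h := frob (x - y) y
    rw [sub_add_cancel] at h
    linear_combination -h
  have qq : ∀ x : F, (x ^ q) ^ q = x := by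
    intro x
    rw [← pow_mul, ← pow_two, ← hF]
    exact FiniteField.pow_card x
  have hsum_pow : ∀ (t : Finset ℕ) (g : ℕ → F),
      (∑ i ∈ t, g i) ^ q = ∑ i ∈ t, (g i) ^ q := by
    intro t g
    rw [← hpk]
    simpa only [iterateFrobenius_def] using map_sum (iterateFrobenius F p k) g t
  -- basic nonvanishing
  have hD : β ^ (q + 1) - α ^ (q + 1) ≠ 0 := sub_ne_zero.mpr hrank2
  have hc : β ^ q - α ≠ 0 := by
    intro h
    apply hrank2
    have hba : β ^ q = α := sub_eq_zero.mp h
    rw [pow_succ, pow_succ, ← hba, qq]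
    ring
  -- nontrivial kernel of the trace
  have hker_ex : ∃ u : F, u ≠ 0 ∧ u ^ q + u = 0 := by
    by_contra hcon
    push_neg at hcon
    have hinj : Function.Injective (fun z : F => z ^ q + z) := by
      intro z w hzw
      simp only at hzw
      by_contra hne
      exact hcon (z - w) (sub_ne_zero.mpr hne) (by rw [subfrob]; linear_combination hzw)
    have hsurj := Finite.surjective_of_injective hinj
    have hall : ∀ z : F, z ^ q = z := by
      intro z
      obtain ⟨y, hy⟩ := hsurj z
      simp only at hy
      rw [← hy, frob, qq]; ring
    obtain ⟨ζ, hζ⟩ := IsCyclic.exists_generator (α := Fˣ)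
    have hord : orderOf ζ = q ^ 2 - 1 := by
      rw [orderOf_eq_card_of_forall_mem_zpowers hζ, Nat.card_units, Nat.card_eq_fintype_card, hF]
    have hζq : ζ ^ (q - 1) = 1 := by
      have h2 : ζ ^ q = ζ := Units.ext (by push_cast; exact hall (ζ : F))
      have h3 : ζ ^ (q - 1) * ζ = 1 * ζ := by
        rw [← pow_succ, Nat.sub_add_cancel (by omega), h2, one_mul]
      exact mul_right_cancel h3
    have hdvd := orderOf_dvd_of_pow_eq_one hζq
    rw [hord] at hdvd
    have hle := Nat.le_of_dvd (by omega) hdvd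
    rw [pow_two] at hle
    have h2q : 2 * q ≤ q * q := Nat.mul_le_mul_right q hq2
    obtain ⟨Q, hQ⟩ : ∃ Q, q * q = Q := ⟨_, rfl⟩
    rw [hQ] at hle h2q
    omega
  -- key relation β + β^q = α + α^q
  have hsum : β + β ^ q = α + α ^ q := by
    obtain ⟨u, hu0, hu⟩ := hker_ex
    have huq : u ^ q = -u := eq_neg_of_add_eq_zero_left hu
    have hLu := hker u hu
    rw [hL] at hLu
    simp only at hLu
    rw [frob, mul_pow, mul_pow, qq, huq] at hLu
    -- hLu : α^q * (-u)^q? careful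
    have key : (β + β ^ q - α - α ^ q) * u = 0 := by linear_combination -hLu
    have := (mul_eq_zero.mp key).resolve_right hu0
    linear_combination this
  -- D is fixed by Frobenius
  have hDq : (β ^ (q + 1) - α ^ (q + 1)) ^ q = β ^ (q + 1) - α ^ (q + 1) := by
    rw [subfrob]
    simp only [pow_succ]
    rw [mul_pow, mul_pow, qq, qq]
    ring
  -- explicit formula for M
  have hM0 : ∀ y : F, L ((β ^ q * y - α * y ^ q) / (β ^ (q + 1) - α ^ (q + 1))) = y := by
    intro y
    rw [hL]
    simp only
    rw [div_pow, hDq, subfrob, mul_pow, mul_pow, qq, qq]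
    field_simp
    simp only [pow_succ]
    ring
  have hMeq : ∀ y : F, M y = (β ^ q * y - α * y ^ q) / (β ^ (q + 1) - α ^ (q + 1)) := by
    intro y
    have h := (hM ((β ^ q * y - α * y ^ q) / (β ^ (q + 1) - α ^ (q + 1)))).1
    rw [hM0 y] at h
    exact h
  -- the answer
  refine ⟨fun i => -((if i = m then 1 else a i) * (β ^ q - α)) /
      ((β ^ (q + 1) - α ^ (q + 1)) * (β ^ q - α) ^ i), ?_, ?_⟩
  · simp only [eq_self_iff_true, if_true, one_mul]
    exact div_ne_zero (neg_ne_zero.mpr hc) (mul_ne_zero hD (pow_ne_zero _ hc))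
  intro x
  have hS : (x ^ q + x) ^ q = x ^ q + x := by rw [frob, qq]; ring
  have hSi : ∀ i : ℕ, ((x ^ q + x) ^ i) ^ q = (x ^ q + x) ^ i := by
    intro i; rw [← pow_mul, mul_comm i q, pow_mul, hS]
  have hGsum : (∑ i ∈ Finset.Ico 2 m, a i * (x ^ q + x) ^ i) ^ q
      = ∑ i ∈ Finset.Ico 2 m, a i * (x ^ q + x) ^ i := by
    rw [hsum_pow]
    refine Finset.sum_congr rfl fun i _ => ?_
    rw [mul_pow, ha, hSi]
  have hG : ((x ^ q + x) ^ m + ∑ i ∈ Finset.Ico 2 m, a i * (x ^ q + x) ^ i) ^ q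
      = (x ^ q + x) ^ m + ∑ i ∈ Finset.Ico 2 m, a i * (x ^ q + x) ^ i := by
    rw [frob, hGsum, hSi]
  have hLq : (L x) ^ q = α ^ q * x + β ^ q * x ^ q := by
    rw [hL]; simp only
    rw [frob, mul_pow, mul_pow, qq]
  have hw : (L x) ^ q - L x = (β ^ q - α) * (x ^ q + x) := by
    rw [hLq, hL]; simp only
    linear_combination (-x) * hsum
  have hfq : (f x) ^ q - f x = (β ^ q - α) * (x ^ q + x) := by
    rw [hf]; simp only
    rw [frob, hG]
    linear_combination hw
  have hMfx : M (f x) = x + (β ^ q - α) *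
      ((x ^ q + x) ^ m + ∑ i ∈ Finset.Ico 2 m, a i * (x ^ q + x) ^ i) /
      (β ^ (q + 1) - α ^ (q + 1)) := by
    rw [hf]; simp only
    rw [hMeq]
    rw [frob, hG]
    have expand : ∀ A B : F, (β ^ q * (A + B) - α * (A + B ^ q)) / (β ^ (q + 1) - α ^ (q + 1))
        = (β ^ q * B - α * B ^ q) / (β ^ (q + 1) - α ^ (q + 1))
          + (β ^ q - α) * A / (β ^ (q + 1) - α ^ (q + 1)) := by
      intro A B
      rw [← add_div]
      congr 1
      ring
    rw [expand, ← hMeq (L x), (hM x).1]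
  rw [hfq, hMfx]
  have hterm : ∀ i ∈ Finset.Icc 2 m,
      -((if i = m then 1 else a i) * (β ^ q - α)) /
        ((β ^ (q + 1) - α ^ (q + 1)) * (β ^ q - α) ^ i) *
        ((β ^ q - α) * (x ^ q + x)) ^ i
      = -((β ^ q - α) / (β ^ (q + 1) - α ^ (q + 1))) *
          ((if i = m then 1 else a i) * (x ^ q + x) ^ i) := by
    intro i _
    have hci : (β ^ q - α) ^ i ≠ 0 := pow_ne_zero _ hc
    rw [mul_pow]
    generalize (if i = m then (1:F) else a i) = b
    field_simp
  rw [Finset.sum_congr rfl hterm, ← Finset.mul_sum]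
  have hsplit : ∑ i ∈ Finset.Icc 2 m, (if i = m then 1 else a i) * (x ^ q + x) ^ i
      = (x ^ q + x) ^ m + ∑ i ∈ Finset.Ico 2 m, a i * (x ^ q + x) ^ i := by
    rw [← Finset.Ico_add_one_right_eq_Icc, Finset.sum_Ico_succ_top hm, if_pos rfl, one_mul]
    rw [Finset.sum_congr rfl fun i hi => by
      rw [if_neg (Finset.mem_Ico.mp hi).2.ne]]
    ring
  rw [hsplit]
  ring
end

section
/- Let q be a prime power, δ ∈ F_{q^2} with δ^{q+1} = 1, s(x) = x^q + δx, and let λ be a nonzero element of the image of s. Let a_2, ..., a_{m-1} ∈ F_q and m ≥ 2, and consider g(s)(x) = s(x)^m + Σ_{i=2}^{m-1} λ^{m-i} a_i s(x)^i. Then for every rank 2 linearized polynomial L of F_{q^2} that maps the kernel of s into the one-dimensional F_q-subspace F_q·λ^m, the map f(x) = g(s)(x) + L(x) is a bijection of F_{q^2}. -/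
/-- Let `δ^{q+1} = 1`, `s(x) = x^q + δx`, `lam` a nonzero element of the
image of `s`, `a_2, ..., a_{m-1} ∈ F_q`, `m ≥ 2`, and
`g(s)(x) = s(x)^m + Σ_{i=2}^{m-1} lam^{m-i} a_i s(x)^i`. Then for every rank 2
linearized polynomial `L(x) = αx^q + βx` mapping `ker s` into `F_q·lam^m`, the map
`f(x) = g(s)(x) + L(x)` is a bijection of `F_{q^2}`. -/
theorem stmt_15 (q : ℕ) (hq : IsPrimePow q)
    (F : Type) [Field F] [Fintype F] (hF : Fintype.card F = q ^ 2)
    (δ : F) (hδ : δ ^ (q + 1) = 1)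
    (lam : F) (hlam0 : lam ≠ 0) (hlam : ∃ w : F, w ^ q + δ * w = lam)
    (m : ℕ) (hm : 2 ≤ m)
    (a : ℕ → F) (ha : ∀ i, (a i) ^ q = a i)
    (α β : F) (hrank2 : β ^ (q + 1) ≠ α ^ (q + 1))
    (L : F → F) (hL : L = fun x : F => α * x ^ q + β * x)
    (hker : ∀ u : F, u ^ q + δ * u = 0 →
      ∃ c : F, c ^ q = c ∧ L u = c * lam ^ m) :
    Function.Bijective (fun x : F =>
      (x ^ q + δ * x) ^ m
        + (∑ i ∈ Finset.Ico 2 m, lam ^ (m - i) * a i * (x ^ q + δ * x) ^ i)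
        + L x) := by
  classical
  -- characteristic setup
  obtain ⟨p, k, hpp, hk, rfl⟩ := hq
  have hp : Nat.Prime p := hpp.nat_prime
  haveI : Fact p.Prime := ⟨hp⟩
  set q : ℕ := p ^ k with hqdef
  have hq2 : 2 ≤ q := hp.two_le.trans (Nat.le_self_pow hk.ne' p)
  have hq0 : q ≠ 0 := by omega
  -- char F = p
  haveI hCharP : CharP F p := by
    obtain ⟨n, hpr, hcard⟩ := FiniteField.card F (ringChar F)
    have hdvd : ringChar F ∣ p ^ (k * 2) := by
      rw [pow_mul, ← hqdef, ← hF, hcard]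
      exact dvd_pow_self _ n.ne_zero
    have hrc : ringChar F = p :=
      (Nat.prime_dvd_prime_iff_eq hpr hp).mp (hpr.dvd_of_dvd_pow hdvd)
    exact hrc ▸ ringChar.charP F
  -- Frobenius
  set φ : F →+* F := iterateFrobenius F p k with hφdef
  have hφ : ∀ x : F, φ x = x ^ q := fun x => rfl
  have hφφ : ∀ x : F, (x ^ q) ^ q = x := by
    intro x
    have h1 : x ^ Fintype.card F = x := FiniteField.pow_card x
    rw [← pow_mul, ← pow_two, ← hF, h1]
  have frob_sub : ∀ x y : F, (x - y) ^ q = x ^ q - y ^ q := by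
    intro x y
    have := map_sub φ x y
    simpa [hφ] using this
  have frob_add : ∀ x y : F, (x + y) ^ q = x ^ q + y ^ q := by
    intro x y
    have := map_add φ x y
    simpa [hφ] using this
  -- basic facts about δ and lam
  have hδ0 : δ ≠ 0 := by
    intro h
    rw [h, zero_pow (by omega)] at hδ
    exact zero_ne_one hδ
  have hsq : ∀ x : F, (x ^ q + δ * x) ^ q = δ ^ q * (x ^ q + δ * x) := by
    intro x
    have hδq : δ ^ q * δ = 1 := by rw [← pow_succ]; exact hδ
    rw [frob_add, hφφ, mul_pow]
    linear_combination -x * hδq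
  have hlamq : lam ^ q = δ ^ q * lam := by
    obtain ⟨w, hw⟩ := hlam
    rw [← hw]; exact hsq w
  have hδq0 : δ ^ q ≠ 0 := pow_ne_zero _ hδ0
  -- the "coordinate" of s x
  have hc : ∀ x : F, ((x ^ q + δ * x) * lam⁻¹) ^ q = (x ^ q + δ * x) * lam⁻¹ := by
    intro x
    rw [mul_pow, hsq, inv_pow, hlamq]
    field_simp
  -- L is additive and injective
  have hL0 : L 0 = 0 := by simp [hL, zero_pow hq0]
  have hLsub : ∀ x y : F, L (x - y) = L x - L y := by
    intro x y; simp only [hL, frob_sub]; ring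
  have hLinj : Function.Injective L := by
    intro x y hxy
    by_contra hne
    set u := x - y with hu
    have hu0 : u ≠ 0 := sub_ne_zero.mpr hne
    have e1 : α * u ^ q + β * u = 0 := by
      have : L u = 0 := by rw [hLsub, hxy, sub_self]
      simpa [hL] using this
    have e2 : α ^ q * u + β ^ q * u ^ q = 0 := by
      have := congrArg φ e1
      simpa [hφ, map_add, map_mul, map_pow, hφφ, frob_add, mul_pow, zero_pow hq0] using this
    have e3 : α ^ (q + 1) * u ^ (q + 1) = β ^ (q + 1) * u ^ (q + 1) := by
      rw [pow_succ α, pow_succ β, pow_succ u]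
      linear_combination (α ^ q * u) * e1 - (β * u) * e2
    have hu1 : u ^ (q + 1) ≠ 0 := pow_ne_zero _ hu0
    exact hrank2 (mul_right_cancel₀ hu1 e3).symm
  -- existence of a nonzero kernel element of s
  have hker_ex : ∃ u₀ : F, u₀ ≠ 0 ∧ u₀ ^ q + δ * u₀ = 0 := by
    have hnotinj : ¬ Function.Injective (fun x : F => x ^ q + δ * x) := by
      intro hinj
      set P : Polynomial F := Polynomial.X ^ q - Polynomial.C (δ ^ q) * Polynomial.X with hP
      have hdeg : P.natDegree = q := by
        rw [hP]
        rw [Polynomial.natDegree_sub_eq_left_of_natDegree_lt]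
        · exact Polynomial.natDegree_X_pow q
        · rw [Polynomial.natDegree_X_pow]
          calc (Polynomial.C (δ ^ q) * Polynomial.X).natDegree
              ≤ (Polynomial.X : Polynomial F).natDegree := Polynomial.natDegree_C_mul_le _ _
            _ = 1 := Polynomial.natDegree_X
            _ < q := by omega
      have hP0 : P ≠ 0 := by
        intro h
        rw [h, Polynomial.natDegree_zero] at hdeg
        omega
      have hroot : ∀ x : F, (fun x : F => x ^ q + δ * x) x ∈ P.roots.toFinset := by
        intro x
        rw [Multiset.mem_toFinset, Polynomial.mem_roots hP0]
        simp only [Polynomial.IsRoot, hP, Polynomial.eval_sub, Polynomial.eval_pow,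
          Polynomial.eval_mul, Polynomial.eval_C, Polynomial.eval_X]
        rw [hsq x]; ring
      have hcard : Fintype.card F ≤ P.roots.toFinset.card := by
        have := Finset.card_le_card_of_injOn (s := (Finset.univ : Finset F))
          (t := P.roots.toFinset) (fun x : F => x ^ q + δ * x)
          (fun x _ => hroot x) (fun x _ y _ h => hinj h)
        simpa using this
      have h1 : P.roots.toFinset.card ≤ q := by
        calc P.roots.toFinset.card ≤ Multiset.card P.roots := Multiset.toFinset_card_le _
          _ ≤ P.natDegree := Polynomial.card_roots' P
          _ = q := hdeg
      rw [hF] at hcard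
      have : q ^ 2 ≤ q := le_trans hcard h1
      nlinarith
    rw [Function.not_injective_iff] at hnotinj
    obtain ⟨x, y, hxy, hne⟩ := hnotinj
    refine ⟨x - y, sub_ne_zero.mpr hne, ?_⟩
    rw [frob_sub]
    linear_combination hxy
  obtain ⟨u₀, hu₀0, hsu₀⟩ := hker_ex
  obtain ⟨c₀, hc₀q, hLu₀⟩ := hker u₀ hsu₀
  have hc₀0 : c₀ ≠ 0 := by
    intro h
    rw [h, zero_mul] at hLu₀
    exact hu₀0 (hLinj (hLu₀.trans hL0.symm))
  -- main injectivity
  rw [← Finite.injective_iff_bijective]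
  intro x y hxy
  simp only at hxy
  set cx : F := (x ^ q + δ * x) * lam⁻¹ with hcx
  set cy : F := (y ^ q + δ * y) * lam⁻¹ with hcy
  have hcxq : cx ^ q = cx := hc x
  have hcyq : cy ^ q = cy := hc y
  have hsx : x ^ q + δ * x = cx * lam := by rw [hcx]; field_simp
  have hsy : y ^ q + δ * y = cy * lam := by rw [hcy]; field_simp
  -- rewrite the polynomial part
  have hsum : ∀ c : F, (c * lam) ^ m
      + (∑ i ∈ Finset.Ico 2 m, lam ^ (m - i) * a i * (c * lam) ^ i)
      = lam ^ m * (c ^ m + ∑ i ∈ Finset.Ico 2 m, a i * c ^ i) := by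
    intro c
    rw [mul_add, mul_pow, Finset.mul_sum]
    congr 1
    · ring
    · apply Finset.sum_congr rfl
      intro i hi
      rw [Finset.mem_Ico] at hi
      have : lam ^ (m - i) * lam ^ i = lam ^ m := by
        rw [← pow_add]; congr 1; omega
      rw [mul_pow]
      calc lam ^ (m - i) * a i * (c ^ i * lam ^ i)
          = (lam ^ (m - i) * lam ^ i) * (a i * c ^ i) := by ring
        _ = lam ^ m * (a i * c ^ i) := by rw [this]
  rw [hsx, hsy, hsum cx, hsum cy] at hxy
  set d : F := (cy ^ m + ∑ i ∈ Finset.Ico 2 m, a i * cy ^ i)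
      - (cx ^ m + ∑ i ∈ Finset.Ico 2 m, a i * cx ^ i) with hd
  have hLd : L (x - y) = d * lam ^ m := by
    rw [hLsub, hd]
    linear_combination hxy
  have hφcx : φ cx = cx := by rw [hφ]; exact hcxq
  have hφcy : φ cy = cy := by rw [hφ]; exact hcyq
  have hφa : ∀ i, φ (a i) = a i := by intro i; rw [hφ]; exact ha i
  have hdq : d ^ q = d := by
    have h2 : φ d = d := by
      rw [hd]
      simp only [map_sub, map_add, map_pow, map_sum, map_mul, hφcx, hφcy, hφa]
    rw [← hφ]; exact h2
  -- produce the kernel element t * u₀ with the same L-value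
  set t : F := d * c₀⁻¹ with ht
  have htq : t ^ q = t := by
    rw [ht, mul_pow, hdq, inv_pow, hc₀q]
  have hLtu : L (t * u₀) = d * lam ^ m := by
    have h1 : L (t * u₀) = t * L u₀ := by
      simp only [hL, mul_pow, htq]; ring
    rw [h1, hLu₀, ht]
    field_simp
  have hxyt : x - y = t * u₀ := hLinj (hLd.trans hLtu.symm)
  have hsxy : (x - y) ^ q + δ * (x - y) = 0 := by
    rw [hxyt, mul_pow, htq]
    calc t * u₀ ^ q + δ * (t * u₀) = t * (u₀ ^ q + δ * u₀) := by ring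
      _ = 0 := by rw [hsu₀, mul_zero]
  have hcxy : cx = cy := by
    rw [frob_sub] at hsxy
    have hss : x ^ q + δ * x = y ^ q + δ * y := by linear_combination hsxy
    rw [hcx, hcy, hss]
  have hd0 : d = 0 := by rw [hd, hcxy]; ring
  have : x - y = 0 := by rw [hxyt, ht, hd0]; ring
  exact sub_eq_zero.mp this
end
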